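/- arXiv:2502.03164 — 9 statements merged into one kernel-verified Lean document; each statement's English description precedes it below -/
import Mathlib

section
/- Let A : X → Y and A' : X' → Y' be compact operators between Hilbert spaces over ℝ or ℂ, each admitting an infinite-rank singular value decomposition: A x = ∑'_{n∈ℕ} σ(n) ⟪φ(n), x⟫ ψ(n) and A' x = ∑'_{n∈ℕ} σ'(n) ⟪φ'(n), x⟫ ψ'(n). Assume there is a constant C > 0 with σ'(n) ≤ C σ(n) for all n. Then: (i) there exist a bounded linear operator O : Y → Y' satisfying ‖O y‖ = ‖y‖ for every y in the closure of the range of A, and a bounded linear operator S : X' → X, such that A' = O ∘ A ∘ S; and (ii) there exist a bounded linear operator T : Y → Y' and a bounded linear operator U : X' → X satisfying ‖U x‖ = ‖x‖ for every x in the orthogonal complement of the kernel of A', such that A' = T ∘ A ∘ U. -/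
open ContinuousLinearMap Filter
open scoped ENNReal

noncomputable section SVDAux

variable {𝕜 E : Type*} [RCLike 𝕜] [NormedAddCommGroup E] [InnerProductSpace 𝕜 E]

local notation "⟪" x ", " y "⟫" => @inner 𝕜 _ _ x y

lemma svdAux_memℓp (c : ℕ → 𝕜) (C : ℝ) (hc : ∀ n, ‖c n‖ ≤ C)
    (f : lp (fun _ : ℕ => 𝕜) 2) : Memℓp (fun n => c n * f n) 2 := by
  have hC : (0:ℝ) ≤ C := le_trans (norm_nonneg _) (hc 0)
  apply memℓp_gen
  have hf : Summable fun n => ‖f n‖ ^ (2 : ℝ≥0∞).toReal :=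
    (lp.memℓp f).summable (by norm_num)
  refine Summable.of_nonneg_of_le (fun n => ?_) (fun n => ?_) (hf.mul_left (C ^ (2 : ℝ≥0∞).toReal))
  · positivity
  · rw [← Real.mul_rpow hC (norm_nonneg _)]
    apply Real.rpow_le_rpow (norm_nonneg _) _ (by norm_num)
    rw [norm_mul]
    exact mul_le_mul_of_nonneg_right (hc n) (norm_nonneg _)

/-- Multiplication by a bounded sequence as a continuous linear map on `ℓ²`. -/
noncomputable def svdMul (c : ℕ → 𝕜) (C : ℝ) (hc : ∀ n, ‖c n‖ ≤ C) :
    lp (fun _ : ℕ => 𝕜) 2 →L[𝕜] lp (fun _ : ℕ => 𝕜) 2 :=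
  LinearMap.mkContinuous
    { toFun := fun f => ⟨fun n => c n * f n, svdAux_memℓp c C hc f⟩
      map_add' := fun f g => lp.ext <| funext fun n => by
        simp only [lp.coeFn_add, Pi.add_apply, mul_add]
      map_smul' := fun a f => lp.ext <| funext fun n => by
        simp only [lp.coeFn_smul, Pi.smul_apply, smul_eq_mul, RingHom.id_apply]
        ring }
    C (by
      intro f
      have hC : (0:ℝ) ≤ C := le_trans (norm_nonneg _) (hc 0)
      have h2 : (0:ℝ) < (2 : ℝ≥0∞).toReal := by norm_num
      set g : lp (fun _ : ℕ => 𝕜) 2 := ⟨fun n => c n * f n, svdAux_memℓp c C hc f⟩ with hg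
      have key : ‖g‖ ^ (2 : ℝ≥0∞).toReal ≤ (C * ‖f‖) ^ (2 : ℝ≥0∞).toReal := by
        rw [lp.norm_rpow_eq_tsum h2 g, Real.mul_rpow hC (norm_nonneg f),
          lp.norm_rpow_eq_tsum h2 f, ← tsum_mul_left]
        refine Summable.tsum_le_tsum (fun n => ?_) ((lp.memℓp g).summable h2)
          (((lp.memℓp f).summable h2).mul_left _)
        rw [← Real.mul_rpow hC (norm_nonneg _)]
        apply Real.rpow_le_rpow (norm_nonneg _) _ (by norm_num)
        show ‖c n * f n‖ ≤ C * ‖f n‖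
        rw [norm_mul]
        exact mul_le_mul_of_nonneg_right (hc n) (norm_nonneg _)
      show ‖g‖ ≤ C * ‖f‖
      have h2' : (2 : ℝ≥0∞).toReal = (2 : ℝ) := by norm_num
      rw [h2', Real.rpow_two, Real.rpow_two] at key
      exact (pow_le_pow_iff_left₀ (norm_nonneg g) (by positivity) two_ne_zero).1 key)

@[simp] lemma svdMul_apply (c : ℕ → 𝕜) (C : ℝ) (hc : ∀ n, ‖c n‖ ≤ C)
    (f : lp (fun _ : ℕ => 𝕜) 2) (n : ℕ) : (svdMul c C hc f) n = c n * f n := rfl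

variable [CompleteSpace E]

/-- The isometric embedding of `ℓ²` associated to an orthonormal sequence. -/
noncomputable def svdJ {v : ℕ → E} (hv : Orthonormal 𝕜 v) :
    lp (fun _ : ℕ => 𝕜) 2 →ₗᵢ[𝕜] E :=
  hv.orthogonalFamily.linearIsometry

lemma svdJ_apply {v : ℕ → E} (hv : Orthonormal 𝕜 v) (f : lp (fun _ : ℕ => 𝕜) 2) :
    svdJ hv f = ∑' n, f n • v n := by
  rw [svdJ, hv.orthogonalFamily.linearIsometry_apply]
  simp only [LinearIsometry.toSpanSingleton_apply]

lemma svdJ_hasSum {v : ℕ → E} (hv : Orthonormal 𝕜 v) (f : lp (fun _ : ℕ => 𝕜) 2) :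
    HasSum (fun n => f n • v n) (svdJ hv f) := by
  have := hv.orthogonalFamily.hasSum_linearIsometry f
  simpa only [svdJ, LinearIsometry.toSpanSingleton_apply] using this

lemma svdJ_single {v : ℕ → E} (hv : Orthonormal 𝕜 v) (n : ℕ) :
    svdJ hv (lp.single 2 n (1:𝕜)) = v n := by
  rw [svdJ, hv.orthogonalFamily.linearIsometry_apply_single,
    LinearIsometry.toSpanSingleton_apply, one_smul]

/-- The coefficient map, adjoint of `svdJ`. -/
noncomputable def svdP {v : ℕ → E} (hv : Orthonormal 𝕜 v) :
    E →L[𝕜] lp (fun _ : ℕ => 𝕜) 2 :=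
  ContinuousLinearMap.adjoint (svdJ hv).toContinuousLinearMap

lemma svdP_apply {v : ℕ → E} (hv : Orthonormal 𝕜 v) (y : E) (n : ℕ) :
    (svdP hv y) n = ⟪v n, y⟫ := by
  have h1 : ⟪lp.single 2 n (1:𝕜), svdP hv y⟫ = (svdP hv y) n := by
    rw [lp.inner_single_left]
    simp
  rw [← h1, svdP, ContinuousLinearMap.adjoint_inner_right]
  rw [LinearIsometry.coe_toContinuousLinearMap, svdJ_single]

lemma svdP_svdJ {v : ℕ → E} (hv : Orthonormal 𝕜 v) (f : lp (fun _ : ℕ => 𝕜) 2) :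
    svdP hv (svdJ hv f) = f := by
  apply lp.ext
  funext n
  rw [svdP_apply, ← svdJ_single hv n, LinearIsometry.inner_map_map, lp.inner_single_left]
  simp

end SVDAux

/-- Lemma on SVD-based factorizations: if two compact operators between Hilbert spaces have
infinite-rank singular value decompositions whose singular values satisfy
`σ'(n) ≤ C σ(n)`, then `A' = O ∘ A ∘ S` with `O` isometric on the closure of the range of `A`,
and `A' = T ∘ A ∘ U` with `U` isometric on the orthogonal complement of the kernel of `A'`. -/
theorem svd_factorization
    {𝕜 X Y X' Y' : Type*} [RCLike 𝕜]
    [NormedAddCommGroup X] [InnerProductSpace 𝕜 X] [CompleteSpace X]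
    [NormedAddCommGroup Y] [InnerProductSpace 𝕜 Y] [CompleteSpace Y]
    [NormedAddCommGroup X'] [InnerProductSpace 𝕜 X'] [CompleteSpace X']
    [NormedAddCommGroup Y'] [InnerProductSpace 𝕜 Y'] [CompleteSpace Y']
    (A : X →L[𝕜] Y) (A' : X' →L[𝕜] Y')
    (hAcompact : IsCompactOperator ⇑A) (hA'compact : IsCompactOperator ⇑A')
    (σ σ' : ℕ → ℝ) (φ : ℕ → X) (ψ : ℕ → Y) (φ' : ℕ → X') (ψ' : ℕ → Y')
    (hσpos : ∀ n, 0 < σ n) (hσanti : Antitone σ) (hσ0 : Tendsto σ atTop (nhds 0))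
    (hσ'pos : ∀ n, 0 < σ' n) (hσ'anti : Antitone σ') (hσ'0 : Tendsto σ' atTop (nhds 0))
    (hφ : Orthonormal 𝕜 φ) (hψ : Orthonormal 𝕜 ψ)
    (hφ' : Orthonormal 𝕜 φ') (hψ' : Orthonormal 𝕜 ψ')
    (hArep : ∀ x : X, A x = ∑' n : ℕ, ((σ n : 𝕜) * (inner 𝕜 (φ n) x : 𝕜)) • ψ n)
    (hA'rep : ∀ x : X', A' x = ∑' n : ℕ, ((σ' n : 𝕜) * (inner 𝕜 (φ' n) x : 𝕜)) • ψ' n)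
    (C : ℝ) (hC : 0 < C) (hCσ : ∀ n, σ' n ≤ C * σ n) :
    (∃ (O : Y →L[𝕜] Y') (S : X' →L[𝕜] X),
        (∀ y ∈ closure (Set.range ⇑A), ‖O y‖ = ‖y‖) ∧ A' = O ∘L (A ∘L S)) ∧
    (∃ (T : Y →L[𝕜] Y') (U : X' →L[𝕜] X),
        (∀ x ∈ (LinearMap.ker (A' : X' →ₗ[𝕜] Y'))ᗮ, ‖U x‖ = ‖x‖) ∧ A' = T ∘L (A ∘L U)) := by
  classical
  -- the bounded sequences
  set c : ℕ → 𝕜 := fun n => ((σ' n / σ n : ℝ) : 𝕜) with hc_def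
  set d : ℕ → 𝕜 := fun n => ((σ n : ℝ) : 𝕜) with hd_def
  set e : ℕ → 𝕜 := fun n => ((σ' n : ℝ) : 𝕜) with he_def
  have hc : ∀ n, ‖c n‖ ≤ C := by
    intro n
    rw [hc_def]
    simp only [RCLike.norm_ofReal]
    rw [abs_of_nonneg (div_nonneg (hσ'pos n).le (hσpos n).le)]
    rw [div_le_iff₀ (hσpos n)]
    exact hCσ n
  have hd : ∀ n, ‖d n‖ ≤ σ 0 := by
    intro n
    simp only [hd_def, RCLike.norm_ofReal]
    rw [abs_of_nonneg (hσpos n).le]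
    exact hσanti (Nat.zero_le n)
  have he : ∀ n, ‖e n‖ ≤ σ' 0 := by
    intro n
    simp only [he_def, RCLike.norm_ofReal]
    rw [abs_of_nonneg (hσ'pos n).le]
    exact hσ'anti (Nat.zero_le n)
  set Mc := svdMul c C hc
  set Md := svdMul d (σ 0) hd
  set Me := svdMul e (σ' 0) he
  -- key factorizations
  have hAJ : ∀ x : X, A x = svdJ hψ (Md (svdP hφ x)) := by
    intro x
    rw [hArep x, svdJ_apply]
    exact tsum_congr fun n => by rw [svdMul_apply, svdP_apply]
  have hA'J : ∀ x : X', A' x = svdJ hψ' (Me (svdP hφ' x)) := by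
    intro x
    rw [hA'rep x, svdJ_apply]
    exact tsum_congr fun n => by rw [svdMul_apply, svdP_apply]
  have hdc : ∀ n, d n * c n = e n := by
    intro n
    rw [hd_def, hc_def, he_def]
    rw [← RCLike.ofReal_mul]
    congr 1
    rw [mul_comm, div_mul_cancel₀ _ (hσpos n).ne']
  have hMdMc : ∀ f, Md (Mc f) = Me f := by
    intro f
    apply lp.ext
    funext n
    simp only [svdMul_apply, Md, Mc, Me]
    rw [← mul_assoc, hdc]
  have hMcMd : ∀ f, Mc (Md f) = Me f := by
    intro f
    apply lp.ext
    funext n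
    simp only [svdMul_apply, Md, Mc, Me]
    rw [← mul_assoc, mul_comm (c n) (d n), hdc]
  constructor
  · -- Part (i)
    refine ⟨(svdJ hψ').toContinuousLinearMap ∘L svdP hψ,
      (svdJ hφ).toContinuousLinearMap ∘L (Mc ∘L svdP hφ'), ?_, ?_⟩
    · intro y hy
      have hclosed : IsClosed (Set.range ⇑(svdJ hψ)) :=
        (svdJ hψ).isometry.isUniformInducing.isComplete_range.isClosed
      have hsub : closure (Set.range ⇑A) ⊆ Set.range ⇑(svdJ hψ) := by
        apply closure_minimal _ hclosed
        rintro _ ⟨x, rfl⟩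
        exact ⟨Md (svdP hφ x), (hAJ x).symm⟩
      obtain ⟨f, rfl⟩ := hsub hy
      simp only [ContinuousLinearMap.comp_apply, LinearIsometry.coe_toContinuousLinearMap]
      rw [svdP_svdJ, (svdJ hψ').norm_map, (svdJ hψ).norm_map]
    · ext x
      simp only [ContinuousLinearMap.comp_apply, LinearIsometry.coe_toContinuousLinearMap]
      rw [hAJ, svdP_svdJ, svdP_svdJ, hMdMc, ← hA'J]
  · -- Part (ii)
    refine ⟨(svdJ hψ').toContinuousLinearMap ∘L (Mc ∘L svdP hψ),
      (svdJ hφ).toContinuousLinearMap ∘L svdP hφ', ?_, ?_⟩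
    · intro x hx
      set R : Submodule 𝕜 X' := LinearMap.range ((svdJ hφ').toContinuousLinearMap : lp (fun _ : ℕ => 𝕜) 2 →ₗ[𝕜] X') with hR
      have hRcoe : (R : Set X') = Set.range ⇑(svdJ hφ') := by
        ext z
        simp [hR, LinearMap.mem_range]
      haveI hRcomplete : CompleteSpace R := by
        have : IsComplete (R : Set X') := by
          rw [hRcoe]
          exact (svdJ hφ').isometry.isUniformInducing.isComplete_range
        exact this.completeSpace_coe
      have hker : LinearMap.ker (A' : X' →ₗ[𝕜] Y') = Rᗮ := by
        ext z
        rw [LinearMap.mem_ker, ContinuousLinearMap.coe_coe, Submodule.mem_orthogonal']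
        constructor
        · intro hz u hu
          have hcoeff : ∀ n, (svdP hφ' z) n = 0 := by
            intro n
            have h0 : Me (svdP hφ' z) = 0 :=
              (svdJ hψ').injective (by rw [← hA'J, hz, map_zero])
            have h1 : (Me (svdP hφ' z)) n = 0 := by rw [h0]; rfl
            rw [svdMul_apply] at h1
            have hne : e n ≠ 0 := by
              simp only [he_def, ne_eq, RCLike.ofReal_eq_zero]
              exact (hσ'pos n).ne'
            exact (mul_eq_zero.1 h1).resolve_left hne
          obtain ⟨f, rfl⟩ : ∃ f, svdJ hφ' f = u := by
            have : u ∈ (R : Set X') := hu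
            rwa [hRcoe] at this
          have hsum := (svdJ_hasSum hφ' f).mapL (innerSL 𝕜 z)
          have hzero : ∀ n, (innerSL 𝕜 z) (f n • φ' n) = 0 := by
            intro n
            have h2 : (inner 𝕜 (φ' n) z : 𝕜) = 0 := by
              rw [← svdP_apply hφ']; exact hcoeff n
            have h3 : (inner 𝕜 z (φ' n) : 𝕜) = 0 := by
              rw [← inner_conj_symm, h2, map_zero]
            simp [inner_smul_right, h3]
          have h4 : HasSum (fun _ : ℕ => (0:𝕜)) ((innerSL 𝕜 z) (svdJ hφ' f)) := by
            simpa [hzero] using hsum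
          have h5 : (innerSL 𝕜 z) (svdJ hφ' f) = 0 := h4.unique hasSum_zero
          simpa using h5
        · intro hz
          have hP : svdP hφ' z = 0 := by
            apply lp.ext
            funext n
            have hmem : φ' n ∈ R := by
              have : φ' n ∈ (R : Set X') := by
                rw [hRcoe]
                exact ⟨lp.single 2 n 1, svdJ_single hφ' n⟩
              exact this
            have h6 := hz _ hmem
            have h7 : (inner 𝕜 (φ' n) z : 𝕜) = 0 := by
              rw [← inner_conj_symm, h6, map_zero]
            rw [svdP_apply, h7]
            simp
          rw [hA'J, hP, map_zero, map_zero]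
      rw [hker, Submodule.orthogonal_orthogonal] at hx
      obtain ⟨f, rfl⟩ : ∃ f, svdJ hφ' f = x := by
        have : x ∈ (R : Set X') := hx
        rwa [hRcoe] at this
      simp only [ContinuousLinearMap.comp_apply, LinearIsometry.coe_toContinuousLinearMap]
      rw [svdP_svdJ, (svdJ hφ).norm_map, (svdJ hφ').norm_map]
    · ext x
      simp only [ContinuousLinearMap.comp_apply, LinearIsometry.coe_toContinuousLinearMap]
      rw [hAJ, svdP_svdJ, svdP_svdJ, hMcMd, ← hA'J]
end

section
/- Let A : X → Y and A' : X' → Y' be compact injective operators between Hilbert spaces over ℝ or ℂ admitting infinite-rank singular value decompositions A x = ∑'_{n∈ℕ} σ(n) ⟪φ(n), x⟫ ψ(n) and A' x = ∑'_{n∈ℕ} σ'(n) ⟪φ'(n), x⟫ ψ'(n), where (φ(n)) is an orthonormal basis (total orthonormal family) of X and (φ'(n)) is an orthonormal basis of X'. Assume there are constants c, C > 0 with c σ'(n) ≤ σ(n) ≤ C σ'(n) for all n. Then there exist a continuous linear equivalence S : X' ≃ X (a bounded bijective linear map with bounded inverse) and a bounded linear operator U : Y → Y' with ‖U y‖ =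 ‖y‖ for every y in the closure of the range of A and with U mapping the closure of the range of A onto the closure of the range of A', such that A' = U ∘ A ∘ S. -/
open ContinuousLinearMap Filter
open scoped ENNReal

section Diag

variable {𝕜 : Type*} [RCLike 𝕜]

private lemma svd_sq_le_rev {a b : ℝ} (hb : 0 ≤ b)
    (h : a ^ (2 : ℝ≥0∞).toReal ≤ b ^ (2 : ℝ≥0∞).toReal) : a ≤ b := by
  have h2 : ((2 : ℝ≥0∞).toReal) = ((2 : ℕ) : ℝ) := by norm_num
  rw [h2, Real.rpow_natCast, Real.rpow_natCast] at h
  exact le_of_pow_le_pow_left₀ two_ne_zero hb h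

lemma svd_ptBound {w : ℕ → 𝕜} {M : ℝ} (hM : 0 ≤ M) (hw : ∀ n, ‖w n‖ ≤ M)
    (f : lp (fun _ : ℕ => 𝕜) 2) (n : ℕ) :
    ‖w n * f n‖ ^ (2 : ℝ≥0∞).toReal ≤ M ^ (2 : ℝ≥0∞).toReal * ‖f n‖ ^ (2 : ℝ≥0∞).toReal := by
  have hp : 0 < (2 : ℝ≥0∞).toReal := by norm_num
  calc ‖w n * f n‖ ^ (2 : ℝ≥0∞).toReal ≤ (M * ‖f n‖) ^ (2 : ℝ≥0∞).toReal := by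
        refine Real.rpow_le_rpow (norm_nonneg _) ?_ hp.le
        rw [norm_mul]
        exact mul_le_mul_of_nonneg_right (hw n) (norm_nonneg _)
    _ = M ^ (2 : ℝ≥0∞).toReal * ‖f n‖ ^ (2 : ℝ≥0∞).toReal := Real.mul_rpow hM (norm_nonneg _)

lemma svd_memDiag {w : ℕ → 𝕜} {M : ℝ} (hM : 0 ≤ M) (hw : ∀ n, ‖w n‖ ≤ M)
    (f : lp (fun _ : ℕ => 𝕜) 2) : Memℓp (fun n => w n * f n) 2 := by
  have hp : 0 < (2 : ℝ≥0∞).toReal := by norm_num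
  apply memℓp_gen
  have hs : Summable fun n => ‖f n‖ ^ (2 : ℝ≥0∞).toReal := (memℓp_gen_iff hp).1 (lp.memℓp f)
  exact Summable.of_nonneg_of_le (fun n => Real.rpow_nonneg (norm_nonneg _) _)
    (svd_ptBound hM hw f) (hs.mul_left (M ^ (2 : ℝ≥0∞).toReal))

/-- Diagonal multiplication operator on `ℓ²(ℕ, 𝕜)` by a bounded sequence. -/
noncomputable def svdDiag (w : ℕ → 𝕜) {M : ℝ} (hM : 0 ≤ M) (hw : ∀ n, ‖w n‖ ≤ M) :
    lp (fun _ : ℕ => 𝕜) 2 →L[𝕜] lp (fun _ : ℕ => 𝕜) 2 :=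
  LinearMap.mkContinuous
    { toFun := fun f => ⟨fun n => w n * f n, svd_memDiag hM hw f⟩
      map_add' := fun f g => lp.ext (funext fun n => by
        simp only [lp.coeFn_add, Pi.add_apply]
        change w n * (f n + g n) = w n * f n + w n * g n
        ring)
      map_smul' := fun c f => lp.ext (funext fun n => by
        simp only [lp.coeFn_smul, Pi.smul_apply, RingHom.id_apply]
        change w n * (c • f n) = c • (w n * f n)
        simp [smul_eq_mul]; ring) }
    M (fun f => by
      have hp : 0 < (2 : ℝ≥0∞).toReal := by norm_num
      refine svd_sq_le_rev (by positivity) ?_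
      rw [lp.norm_rpow_eq_tsum hp, Real.mul_rpow hM (norm_nonneg _),
        lp.norm_rpow_eq_tsum hp f, ← tsum_mul_left]
      exact Summable.tsum_le_tsum (svd_ptBound hM hw f) ((memℓp_gen_iff hp).1 (lp.memℓp _))
        (((memℓp_gen_iff hp).1 (lp.memℓp f)).mul_left _))

@[simp] lemma svdDiag_apply (w : ℕ → 𝕜) {M : ℝ} (hM : 0 ≤ M) (hw : ∀ n, ‖w n‖ ≤ M)
    (f : lp (fun _ : ℕ => 𝕜) 2) (n : ℕ) : (svdDiag w hM hw f) n = w n * f n := rfl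

end Diag

section SU

variable {𝕜 : Type*} [RCLike 𝕜]

lemma svd_S_exists {X X' : Type*}
    [NormedAddCommGroup X] [InnerProductSpace 𝕜 X] [CompleteSpace X]
    [NormedAddCommGroup X'] [InnerProductSpace 𝕜 X'] [CompleteSpace X']
    {φ : ℕ → X} {φ' : ℕ → X'} (hφ : Orthonormal 𝕜 φ) (hφ' : Orthonormal 𝕜 φ')
    (hφbasis : (Submodule.span 𝕜 (Set.range φ)).topologicalClosure = ⊤)
    (hφ'basis : (Submodule.span 𝕜 (Set.range φ')).topologicalClosure = ⊤)
    (w : ℕ → 𝕜) {M M' : ℝ} (hM : 0 ≤ M) (hM' : 0 ≤ M')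
    (hw : ∀ n, ‖w n‖ ≤ M) (hw' : ∀ n, ‖(w n)⁻¹‖ ≤ M') (hw0 : ∀ n, w n ≠ 0) :
    ∃ S : X' ≃L[𝕜] X, ∀ m, S (φ' m) = w m • φ m := by
  classical
  let b : HilbertBasis ℕ 𝕜 X := HilbertBasis.mk hφ hφbasis.ge
  let b' : HilbertBasis ℕ 𝕜 X' := HilbertBasis.mk hφ' hφ'basis.ge
  let D := svdDiag w hM hw
  let D' := svdDiag (fun n => (w n)⁻¹) hM' hw'
  let T : X' →L[𝕜] X :=
    (b.repr.symm.toContinuousLinearEquiv.toContinuousLinearMap) ∘L D ∘L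
      (b'.repr.toContinuousLinearEquiv.toContinuousLinearMap)
  let T' : X →L[𝕜] X' :=
    (b'.repr.symm.toContinuousLinearEquiv.toContinuousLinearMap) ∘L D' ∘L
      (b.repr.toContinuousLinearEquiv.toContinuousLinearMap)
  have hDD' : ∀ f, D' (D f) = f := fun f => lp.ext (funext fun n => by
    show (w n)⁻¹ * (w n * f n) = f n
    rw [← mul_assoc, inv_mul_cancel₀ (hw0 n), one_mul])
  have hD'D : ∀ f, D (D' f) = f := fun f => lp.ext (funext fun n => by
    show w n * ((w n)⁻¹ * f n) = f n
    rw [← mul_assoc, mul_inv_cancel₀ (hw0 n), one_mul])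
  have hT : ∀ x', T x' = b.repr.symm (D (b'.repr x')) := fun x' => rfl
  have hT' : ∀ x, T' x = b'.repr.symm (D' (b.repr x)) := fun x => rfl
  refine ⟨ContinuousLinearEquiv.equivOfInverse T T' (fun x' => ?_) (fun x => ?_), fun m => ?_⟩
  · rw [hT, hT', LinearIsometryEquiv.apply_symm_apply, hDD', LinearIsometryEquiv.symm_apply_apply]
  · rw [hT', hT, LinearIsometryEquiv.apply_symm_apply, hD'D, LinearIsometryEquiv.symm_apply_apply]
  · show T (φ' m) = w m • φ m
    have h1 : b'.repr (φ' m) = lp.single 2 m 1 := by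
      have := b'.repr_self m
      rwa [show b' m = φ' m from congrFun (HilbertBasis.coe_mk _ _) m] at this
    have h2 : D (lp.single 2 m 1) = lp.single 2 m (w m) := lp.ext (funext fun n => by
      rw [show (D (lp.single 2 m 1) : ∀ _ : ℕ, 𝕜) n = w n * (lp.single 2 m (1:𝕜) :
        lp (fun _ : ℕ => 𝕜) 2) n from rfl]
      by_cases hnm : n = m
      · subst hnm; rw [lp.single_apply_self, lp.single_apply_self, mul_one]
      · rw [lp.single_apply_ne _ _ _ hnm, lp.single_apply_ne _ _ _ hnm, mul_zero])
    have h3 : b.repr.symm (lp.single 2 m (w m)) = w m • φ m := by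
      have : lp.single 2 m (w m) = w m • (lp.single 2 m (1:𝕜) : lp (fun _ : ℕ => 𝕜) 2) := by
        rw [← lp.single_smul, smul_eq_mul, mul_one]
      rw [this, map_smul, b.repr_symm_single,
        show b m = φ m from congrFun (HilbertBasis.coe_mk _ _) m]
    rw [hT, h1, h2, h3]

lemma svd_U_exists {Y Y' : Type*}
    [NormedAddCommGroup Y] [InnerProductSpace 𝕜 Y] [CompleteSpace Y]
    [NormedAddCommGroup Y'] [InnerProductSpace 𝕜 Y'] [CompleteSpace Y']
    {ψ : ℕ → Y} {ψ' : ℕ → Y'} (hψ : Orthonormal 𝕜 ψ) (hψ' : Orthonormal 𝕜 ψ') :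
    ∃ U : Y →L[𝕜] Y',
      (∀ n, U (ψ n) = ψ' n) ∧
      (∀ y ∈ closure ((Submodule.span 𝕜 (Set.range ψ) : Submodule 𝕜 Y) : Set Y), ‖U y‖ = ‖y‖) ∧
      U '' closure ((Submodule.span 𝕜 (Set.range ψ) : Submodule 𝕜 Y) : Set Y)
        = closure ((Submodule.span 𝕜 (Set.range ψ') : Submodule 𝕜 Y') : Set Y') := by
  classical
  let V := hψ.orthogonalFamily.linearIsometry
  let V' := hψ'.orthogonalFamily.linearIsometry
  set K : Submodule 𝕜 Y := (Submodule.span 𝕜 (Set.range ψ)).topologicalClosure with hK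
  set K' : Submodule 𝕜 Y' := (Submodule.span 𝕜 (Set.range ψ')).topologicalClosure with hK'
  have hrange : LinearMap.range V.toLinearMap = K := by
    rw [hψ.orthogonalFamily.range_linearIsometry]
    congr 1
    simp [← LinearMap.span_singleton_eq_range, ← Submodule.span_iUnion]
  have hrange' : LinearMap.range V'.toLinearMap = K' := by
    rw [hψ'.orthogonalFamily.range_linearIsometry]
    congr 1
    simp [← LinearMap.span_singleton_eq_range, ← Submodule.span_iUnion]
  haveI : CompleteSpace K := by
    rw [hK]; exact (Submodule.isClosed_topologicalClosure _).completeSpace_coe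
  let e : lp (fun _ : ℕ => 𝕜) 2 ≃ₗᵢ[𝕜] K :=
    V.equivRange.trans (LinearIsometryEquiv.ofEq _ _ hrange)
  let U : Y →L[𝕜] Y' :=
    V'.toContinuousLinearMap ∘L e.symm.toContinuousLinearEquiv.toContinuousLinearMap ∘L
      (K.orthogonalProjectionOnto)
  have hcoe_e : ∀ f, ((e f : K) : Y) = V f := fun f => by
    show ((LinearIsometryEquiv.ofEq _ _ hrange (V.equivRange f) : K) : Y) = V f
    rw [LinearIsometryEquiv.coe_ofEq_apply]
    rfl
  have hUz : ∀ z : K, U ((z : Y)) = V' (e.symm z) := fun z => by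
    show V' (e.symm (K.orthogonalProjectionOnto (z : Y))) = V' (e.symm z)
    rw [Submodule.orthogonalProjectionOnto_mem_subspace_eq_self]
  have hclK : closure ((Submodule.span 𝕜 (Set.range ψ) : Submodule 𝕜 Y) : Set Y) = (K : Set Y) :=
    (Submodule.topologicalClosure_coe _).symm
  have hclK' : closure ((Submodule.span 𝕜 (Set.range ψ') : Submodule 𝕜 Y') : Set Y')
      = (K' : Set Y') := (Submodule.topologicalClosure_coe _).symm
  have hVsingle : ∀ n, V (lp.single 2 n 1) = ψ n := fun n => by
    rw [show V (lp.single 2 n 1) = LinearIsometry.toSpanSingleton 𝕜 Y (hψ.1 n) 1 from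
      hψ.orthogonalFamily.linearIsometry_apply_single (1 : 𝕜),
      LinearIsometry.toSpanSingleton_apply, one_smul]
  have hV'single : ∀ n, V' (lp.single 2 n 1) = ψ' n := fun n => by
    rw [show V' (lp.single 2 n 1) = LinearIsometry.toSpanSingleton 𝕜 Y' (hψ'.1 n) 1 from
      hψ'.orthogonalFamily.linearIsometry_apply_single (1 : 𝕜),
      LinearIsometry.toSpanSingleton_apply, one_smul]
  refine ⟨U, fun n => ?_, fun y hy => ?_, ?_⟩
  · -- U (ψ n) = ψ' n
    have hmem : ψ n ∈ K :=
      Submodule.le_topologicalClosure _ (Submodule.subset_span ⟨n, rfl⟩)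
    have hz : e (lp.single 2 n 1) = (⟨ψ n, hmem⟩ : K) := Subtype.ext (by
      rw [hcoe_e, hVsingle])
    have : U (ψ n) = V' (e.symm ⟨ψ n, hmem⟩) := hUz ⟨ψ n, hmem⟩
    rw [this, ← hz, e.symm_apply_apply, hV'single]
  · -- isometry on closure
    rw [hclK] at hy
    have : U y = V' (e.symm ⟨y, hy⟩) := hUz ⟨y, hy⟩
    rw [this, V'.norm_map, e.symm.norm_map]
    rfl
  · -- image
    rw [hclK, hclK']
    ext y'
    constructor
    · rintro ⟨y, hy, rfl⟩
      rw [hUz ⟨y, hy⟩]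
      have : V' (e.symm ⟨y, hy⟩) ∈ LinearMap.range V'.toLinearMap :=
        LinearMap.mem_range_self _ _
      rwa [hrange'] at this
    · intro hy'
      rw [← hrange'] at hy'
      obtain ⟨f, hf⟩ := hy'
      refine ⟨((e f : K) : Y), (e f).2, ?_⟩
      rw [hUz (e f), e.symm_apply_apply]
      exact hf

end SU

lemma svd_closure_range {𝕜 X Y : Type*} [RCLike 𝕜]
    [NormedAddCommGroup X] [InnerProductSpace 𝕜 X]
    [NormedAddCommGroup Y] [InnerProductSpace 𝕜 Y]
    (A : X →L[𝕜] Y) (σ : ℕ → ℝ) (φ : ℕ → X) (ψ : ℕ → Y)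
    (hσpos : ∀ n, 0 < σ n)
    (hAφ : ∀ m, A (φ m) = (σ m : 𝕜) • ψ m)
    (hArep : ∀ x : X, A x = ∑' n : ℕ, ((σ n : 𝕜) * (inner 𝕜 (φ n) x : 𝕜)) • ψ n) :
    closure (Set.range ⇑A)
      = closure ((Submodule.span 𝕜 (Set.range ψ) : Submodule 𝕜 Y) : Set Y) := by
  apply Set.Subset.antisymm
  · apply closure_minimal _ isClosed_closure
    rintro _ ⟨x, rfl⟩
    by_cases hsum : Summable (fun n : ℕ => ((σ n : 𝕜) * (inner 𝕜 (φ n) x : 𝕜)) • ψ n)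
    · rw [hArep x]
      refine mem_closure_of_tendsto hsum.hasSum (Eventually.of_forall fun s => ?_)
      exact Submodule.sum_mem _ fun n _ =>
        Submodule.smul_mem _ _ (Submodule.subset_span ⟨n, rfl⟩)
    · rw [hArep x, tsum_eq_zero_of_not_summable hsum]
      exact subset_closure (Submodule.zero_mem _)
  · apply closure_mono
    have hψmem : ∀ n, ψ n ∈ LinearMap.range (A : X →ₗ[𝕜] Y) := by
      intro n
      refine ⟨((σ n : ℝ) : 𝕜)⁻¹ • φ n, ?_⟩
      have hne : ((σ n : ℝ) : 𝕜) ≠ 0 := by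
        exact_mod_cast (hσpos n).ne'
      show A (((σ n : ℝ) : 𝕜)⁻¹ • φ n) = ψ n
      rw [map_smul, hAφ n, smul_smul, inv_mul_cancel₀ hne, one_smul]
    intro y hy
    have : Submodule.span 𝕜 (Set.range ψ) ≤ LinearMap.range (A : X →ₗ[𝕜] Y) :=
      Submodule.span_le.mpr (by rintro _ ⟨n, rfl⟩; exact hψmem n)
    exact this hy


/-- If two compact injective operators between Hilbert spaces have infinite-rank singular value
decompositions with equivalent singular values `c σ'(n) ≤ σ(n) ≤ C σ'(n)`, then `A' = U ∘ A ∘ S`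
with `S` a continuous linear equivalence and `U` isometric on the closure of the range of `A`,
mapping it onto the closure of the range of `A'`. -/
theorem svd_equivalence_isomorphism
    {𝕜 X Y X' Y' : Type*} [RCLike 𝕜]
    [NormedAddCommGroup X] [InnerProductSpace 𝕜 X] [CompleteSpace X]
    [NormedAddCommGroup Y] [InnerProductSpace 𝕜 Y] [CompleteSpace Y]
    [NormedAddCommGroup X'] [InnerProductSpace 𝕜 X'] [CompleteSpace X']
    [NormedAddCommGroup Y'] [InnerProductSpace 𝕜 Y'] [CompleteSpace Y']
    (A : X →L[𝕜] Y) (A' : X' →L[𝕜] Y')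
    (hAcompact : IsCompactOperator ⇑A) (hA'compact : IsCompactOperator ⇑A')
    (hAinj : Function.Injective ⇑A) (hA'inj : Function.Injective ⇑A')
    (σ σ' : ℕ → ℝ) (φ : ℕ → X) (ψ : ℕ → Y) (φ' : ℕ → X') (ψ' : ℕ → Y')
    (hσpos : ∀ n, 0 < σ n) (hσanti : Antitone σ) (hσ0 : Tendsto σ atTop (nhds 0))
    (hσ'pos : ∀ n, 0 < σ' n) (hσ'anti : Antitone σ') (hσ'0 : Tendsto σ' atTop (nhds 0))
    (hφ : Orthonormal 𝕜 φ) (hψ : Orthonormal 𝕜 ψ)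
    (hφ' : Orthonormal 𝕜 φ') (hψ' : Orthonormal 𝕜 ψ')
    (hφbasis : (Submodule.span 𝕜 (Set.range φ)).topologicalClosure = ⊤)
    (hφ'basis : (Submodule.span 𝕜 (Set.range φ')).topologicalClosure = ⊤)
    (hArep : ∀ x : X, A x = ∑' n : ℕ, ((σ n : 𝕜) * (inner 𝕜 (φ n) x : 𝕜)) • ψ n)
    (hA'rep : ∀ x : X', A' x = ∑' n : ℕ, ((σ' n : 𝕜) * (inner 𝕜 (φ' n) x : 𝕜)) • ψ' n)
    (c C : ℝ) (hc : 0 < c) (hC : 0 < C)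
    (hσσ' : ∀ n, c * σ' n ≤ σ n ∧ σ n ≤ C * σ' n) :
    ∃ (S : X' ≃L[𝕜] X) (U : Y →L[𝕜] Y'),
      (∀ y ∈ closure (Set.range ⇑A), ‖U y‖ = ‖y‖) ∧
      U '' closure (Set.range ⇑A) = closure (Set.range ⇑A') ∧
      A' = U ∘L (A ∘L (S : X' →L[𝕜] X)) := by
  classical
  have horthφ := orthonormal_iff_ite.mp hφ
  have horthφ' := orthonormal_iff_ite.mp hφ'
  -- action on basis vectors
  have hAφ : ∀ m, A (φ m) = ((σ m : ℝ) : 𝕜) • ψ m := by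
    intro m
    rw [hArep (φ m), tsum_eq_single m (fun n hnm => by simp [horthφ n m, hnm])]
    simp [horthφ m m, hφ.1 m]
  have hA'φ : ∀ m, A' (φ' m) = ((σ' m : ℝ) : 𝕜) • ψ' m := by
    intro m
    rw [hA'rep (φ' m), tsum_eq_single m (fun n hnm => by simp [horthφ' n m, hnm])]
    simp [horthφ' m m, hφ'.1 m]
  have hclosA := svd_closure_range A σ φ ψ hσpos hAφ hArep
  have hclosA' := svd_closure_range A' σ' φ' ψ' hσ'pos hA'φ hA'rep
  -- weights
  set w : ℕ → 𝕜 := fun n => ((σ' n / σ n : ℝ) : 𝕜) with hw_def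
  have hw0 : ∀ n, w n ≠ 0 := fun n => by
    have h1 := hσ'pos n
    have h2 := hσpos n
    simp only [hw_def, ne_eq, RCLike.ofReal_eq_zero]
    positivity
  have hwb : ∀ n, ‖w n‖ ≤ 1 / c := by
    intro n
    have h1 := hσ'pos n
    have h2 := hσpos n
    rw [hw_def]
    rw [RCLike.norm_ofReal, abs_of_pos (by positivity)]
    rw [div_le_div_iff₀ (hσpos n) hc]
    nlinarith [(hσσ' n).1]
  have hwib : ∀ n, ‖(w n)⁻¹‖ ≤ C := by
    intro n
    have h1 := hσ'pos n
    have h2 := hσpos n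
    rw [hw_def]
    rw [← RCLike.ofReal_inv, RCLike.norm_ofReal, inv_div,
      abs_of_pos (by positivity), div_le_iff₀ (hσ'pos n)]
    nlinarith [(hσσ' n).2]
  obtain ⟨S, hS⟩ := svd_S_exists hφ hφ' hφbasis hφ'basis w (by positivity) hC.le hwb hwib hw0
  obtain ⟨U, hUψ, hUiso, hUim⟩ := svd_U_exists hψ hψ'
  refine ⟨S, U, ?_, ?_, ?_⟩
  · intro y hy
    exact hUiso y (by rwa [hclosA] at hy)
  · rw [hclosA, hclosA']
    exact hUim
  · have hd : Dense ((Submodule.span 𝕜 (Set.range φ') : Submodule 𝕜 X') : Set X') := by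
      rw [dense_iff_closure_eq, ← Submodule.topologicalClosure_coe, hφ'basis, Submodule.top_coe]
    refine ContinuousLinearMap.ext_on hd ?_
    rintro _ ⟨m, rfl⟩
    have hσne : ((σ m : ℝ) : 𝕜) ≠ 0 := by exact_mod_cast (hσpos m).ne'
    have hws : w m * ((σ m : ℝ) : 𝕜) = ((σ' m : ℝ) : 𝕜) := by
      rw [hw_def]
      rw [← RCLike.ofReal_mul]
      congr 1
      exact div_mul_cancel₀ _ (hσpos m).ne'
    calc A' (φ' m) = ((σ' m : ℝ) : 𝕜) • ψ' m := hA'φ m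
      _ = (U ∘L (A ∘L (S : X' →L[𝕜] X))) (φ' m) := by
          rw [ContinuousLinearMap.comp_apply, ContinuousLinearMap.comp_apply]
          show _ = U (A (S (φ' m)))
          rw [hS m, map_smul, hAφ m, smul_smul, hws, map_smul, hUψ m]
end

section
/- Let A : X → Y and A' : X' → Y' be compact operators between Hilbert spaces over ℝ or ℂ, each admitting an infinite-rank singular value decomposition (so both ranges are infinite-dimensional): A x = ∑'_{n∈ℕ} σ(n) ⟪φ(n), x⟫ ψ(n) and A' x = ∑'_{n∈ℕ} σ'(n) ⟪φ'(n), x⟫ ψ'(n). Then the following statements are equivalent: (1) there exist bounded linear operators T : Y → Y' and S : X' → X with A' = T ∘ A ∘ S; (2) there exist a bounded linear operator O : Y → Y' with ‖O y‖ = ‖y‖ for all y in the closure of the range of A, and a bounded linear operator S : X' → X, with A' = O ∘ A ∘ S; (3) there exist a bounded linear operator T : Y → Y' and a bounded linear operator U : X' → X with ‖U x‖ = ‖x‖ for all x in the orthogonal complement of the kernel of A', with A' = T ∘ A ∘ U; (4) there exists a constant C > 0 such that σ'(n) ≤ C σ(n) for all n ∈ ℕ. -/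
open ContinuousLinearMap Filter
noncomputable section
namespace SVDAux
open scoped ENNReal
variable {𝕜 : Type*} [RCLike 𝕜]

lemma hasSum_norm_sq (f : lp (fun _ : ℕ => 𝕜) 2) :
    HasSum (fun n => ‖f n‖ ^ 2) (‖f‖ ^ 2) := by
  have h := lp.hasSum_inner (𝕜 := 𝕜) f f
  have h2 := (RCLike.reCLM (K := 𝕜)).hasSum h
  simpa only [RCLike.reCLM_apply, inner_self_eq_norm_sq] using h2

lemma norm_le_of_forall_le {f g : lp (fun _ : ℕ => 𝕜) 2} {c : ℝ} (hc : 0 ≤ c)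
    (h : ∀ n, ‖g n‖ ≤ c * ‖f n‖) : ‖g‖ ≤ c * ‖f‖ := by
  have hsq : ‖g‖ ^ 2 ≤ (c * ‖f‖) ^ 2 := by
    have h2 := ((hasSum_norm_sq f).mul_left (c ^ 2))
    have hle := hasSum_le (f := fun n => ‖g n‖ ^ 2) (g := fun n => c ^ 2 * ‖f n‖ ^ 2)
      (fun n => by
        have := pow_le_pow_left₀ (norm_nonneg (g n)) (h n) 2
        calc ‖g n‖ ^ 2 ≤ (c * ‖f n‖) ^ 2 := this
          _ = c ^ 2 * ‖f n‖ ^ 2 := by ring) (hasSum_norm_sq g) h2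
    calc ‖g‖ ^ 2 ≤ c ^ 2 * ‖f‖ ^ 2 := hle
      _ = (c * ‖f‖) ^ 2 := by ring
  exact le_of_pow_le_pow_left₀ two_ne_zero (by positivity) hsq

lemma le_norm_of_forall_le {f g : lp (fun _ : ℕ => 𝕜) 2} {c : ℝ} (hc : 0 ≤ c)
    (h : ∀ n, c * ‖f n‖ ≤ ‖g n‖) : c * ‖f‖ ≤ ‖g‖ := by
  have hsq : (c * ‖f‖) ^ 2 ≤ ‖g‖ ^ 2 := by
    have h2 := ((hasSum_norm_sq f).mul_left (c ^ 2))
    have hle := hasSum_le (f := fun n => c ^ 2 * ‖f n‖ ^ 2) (g := fun n => ‖g n‖ ^ 2)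
      (fun n => by
        have := pow_le_pow_left₀ (by positivity : (0:ℝ) ≤ c * ‖f n‖) (h n) 2
        calc c ^ 2 * ‖f n‖ ^ 2 = (c * ‖f n‖) ^ 2 := by ring
          _ ≤ ‖g n‖ ^ 2 := this) h2 (hasSum_norm_sq g)
    calc (c * ‖f‖) ^ 2 = c ^ 2 * ‖f‖ ^ 2 := by ring
      _ ≤ ‖g‖ ^ 2 := hle
  exact le_of_pow_le_pow_left₀ two_ne_zero (norm_nonneg _) hsq

lemma diag_memℓp (c : ℕ → 𝕜) {C : ℝ} (hC : ∀ n, ‖c n‖ ≤ C) (f : lp (fun _ : ℕ => 𝕜) 2) :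
    Memℓp (fun n => c n * f n) 2 := by
  have hC0 : 0 ≤ C := (norm_nonneg _).trans (hC 0)
  apply memℓp_gen
  have hs : Summable (fun n => ‖f n‖ ^ (2 : ℝ≥0∞).toReal) :=
    (lp.memℓp f).summable (by norm_num)
  refine Summable.of_nonneg_of_le (fun n => by positivity) (fun n => ?_)
    (hs.mul_left (C ^ (2 : ℝ≥0∞).toReal))
  have h2 : (2 : ℝ≥0∞).toReal = 2 := by norm_num
  rw [h2]
  calc ‖c n * f n‖ ^ (2:ℝ) = (‖c n‖ * ‖f n‖) ^ (2:ℝ) := by rw [norm_mul]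
    _ ≤ (C * ‖f n‖) ^ (2:ℝ) := by
        apply Real.rpow_le_rpow (by positivity)
          (mul_le_mul_of_nonneg_right (hC n) (norm_nonneg _)) (by norm_num)
    _ = C ^ (2:ℝ) * ‖f n‖ ^ (2:ℝ) := Real.mul_rpow hC0 (norm_nonneg _)

def diag (c : ℕ → 𝕜) {C : ℝ} (hC : ∀ n, ‖c n‖ ≤ C) :
    lp (fun _ : ℕ => 𝕜) 2 →L[𝕜] lp (fun _ : ℕ => 𝕜) 2 :=
  LinearMap.mkContinuous
    { toFun := fun f => ⟨fun n => c n * f n, diag_memℓp c hC f⟩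
      map_add' := fun f g => by
        apply lp.ext
        funext n
        simp [lp.coeFn_add, mul_add]
        rfl
      map_smul' := fun a f => by
        apply lp.ext
        funext n
        simp only [lp.coeFn_smul, Pi.smul_apply, smul_eq_mul, RingHom.id_apply]
        ring }
    C
    (fun f => by
      refine norm_le_of_forall_le ((norm_nonneg _).trans (hC 0)) (fun n => ?_)
      calc ‖c n * f n‖ = ‖c n‖ * ‖f n‖ := norm_mul _ _
        _ ≤ C * ‖f n‖ := mul_le_mul_of_nonneg_right (hC n) (norm_nonneg _))

@[simp] lemma diag_apply (c : ℕ → 𝕜) {C : ℝ} (hC : ∀ n, ‖c n‖ ≤ C)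
    (f : lp (fun _ : ℕ => 𝕜) 2) (n : ℕ) : (diag c hC f) n = c n * f n := rfl

variable {E F : Type*} [NormedAddCommGroup E] [InnerProductSpace 𝕜 E] [CompleteSpace E]
  [NormedAddCommGroup F] [InnerProductSpace 𝕜 F] [CompleteSpace F]

local notation "⟪" x ", " y "⟫" => @inner 𝕜 _ _ x y

/-- Synthesis operator of an orthonormal family. -/
def synth {v : ℕ → E} (hv : Orthonormal 𝕜 v) : lp (fun _ : ℕ => 𝕜) 2 →ₗᵢ[𝕜] E :=
  hv.orthogonalFamily.linearIsometry

lemma synth_apply {v : ℕ → E} (hv : Orthonormal 𝕜 v) (f : lp (fun _ : ℕ => 𝕜) 2) :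
    synth hv f = ∑' n, (f n : 𝕜) • v n := by
  simp [synth, OrthogonalFamily.linearIsometry_apply, LinearIsometry.toSpanSingleton_apply]

lemma synth_single {v : ℕ → E} (hv : Orthonormal 𝕜 v) (n : ℕ) (a : 𝕜) :
    synth hv (lp.single 2 n a) = a • v n := by
  classical
  rw [synth, hv.orthogonalFamily.linearIsometry_apply_single,
    LinearIsometry.toSpanSingleton_apply]

/-- Analysis operator of an orthonormal family. -/
def anal {v : ℕ → E} (hv : Orthonormal 𝕜 v) : E →L[𝕜] lp (fun _ : ℕ => 𝕜) 2 :=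
  ContinuousLinearMap.adjoint (synth hv).toContinuousLinearMap

lemma anal_apply {v : ℕ → E} (hv : Orthonormal 𝕜 v) (x : E) (n : ℕ) :
    (anal hv x) n = ⟪v n, x⟫ := by
  classical
  have h1 : ⟪lp.single 2 n (1 : 𝕜), anal hv x⟫ = (anal hv x) n := by
    rw [lp.inner_single_left]
    simp [RCLike.inner_apply]
  rw [← h1, anal, ContinuousLinearMap.adjoint_inner_right]
  simp only [LinearIsometry.coe_toContinuousLinearMap]
  rw [synth_single, one_smul]

lemma anal_synth {v : ℕ → E} (hv : Orthonormal 𝕜 v) (f : lp (fun _ : ℕ => 𝕜) 2) :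
    anal hv (synth hv f) = f := by
  apply ext_inner_left 𝕜
  intro g
  rw [anal, ContinuousLinearMap.adjoint_inner_right]
  simp only [LinearIsometry.coe_toContinuousLinearMap]
  exact (synth hv).inner_map_map g f

lemma norm_anal_le {v : ℕ → E} (hv : Orthonormal 𝕜 v) (x : E) : ‖anal hv x‖ ≤ ‖x‖ := by
  calc ‖anal hv x‖ ≤ ‖anal hv‖ * ‖x‖ := (anal hv).le_opNorm x
    _ ≤ 1 * ‖x‖ := by
        apply mul_le_mul_of_nonneg_right _ (norm_nonneg x)
        rw [anal]
        rw [show ‖ContinuousLinearMap.adjoint (synth hv).toContinuousLinearMap‖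
            = ‖(synth hv).toContinuousLinearMap‖ from
          (ContinuousLinearMap.adjoint (𝕜 := 𝕜)).norm_map _]
        exact (synth hv).norm_toContinuousLinearMap_le
    _ = ‖x‖ := one_mul _

lemma fact_of_rep {v : ℕ → E} {w : ℕ → F} (hv : Orthonormal 𝕜 v) (hw : Orthonormal 𝕜 w)
    (c : ℕ → 𝕜) {C : ℝ} (hC : ∀ n, ‖c n‖ ≤ C) (A : E →L[𝕜] F)
    (hrep : ∀ x, A x = ∑' n, (c n * ⟪v n, x⟫) • w n) (x : E) :
    A x = synth hw (diag c hC (anal hv x)) := by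
  rw [hrep, synth_apply]
  congr 1
  funext n
  rw [diag_apply, anal_apply]

lemma orthonormal_single : Orthonormal 𝕜 (fun n : ℕ => lp.single (E := fun _ : ℕ => 𝕜) 2 n (1 : 𝕜)) := by
  classical
  rw [orthonormal_iff_ite]
  intro i j
  rw [lp.inner_single_left]
  rcases eq_or_ne i j with rfl | hij
  · simp [lp.single_apply_self, RCLike.inner_apply]
  · rw [RCLike.inner_apply, lp.single_apply_ne (E := fun _ : ℕ => 𝕜) 2 j (1:𝕜) hij]
    simp [hij]

lemma range_synth {v : ℕ → E} (hv : Orthonormal 𝕜 v) :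
    LinearMap.range (synth hv).toLinearMap
      = (Submodule.span 𝕜 (Set.range v)).topologicalClosure := by
  rw [synth, hv.orthogonalFamily.range_linearIsometry]
  congr 1
  simp [← LinearMap.span_singleton_eq_range, ← Submodule.span_iUnion]

lemma isClosed_range_synth {v : ℕ → E} (hv : Orthonormal 𝕜 v) :
    IsClosed (Set.range (synth hv)) :=
  (synth hv).isometry.isUniformInducing.isComplete_range.isClosed
end SVDAux

end

set_option maxHeartbeats 1000000 in
/-- Theorem 5 (compact case): for compact ill-posed operators with infinite-rank singular value
decompositions, the orderings `≤_{B,B}`, `≤_{O,B}`, `≤_{B,O}` and the singular-value ordering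
`⪅_{σ,C}` are all equivalent. -/
theorem orderings_equivalent_compact
    {𝕜 X Y X' Y' : Type*} [RCLike 𝕜]
    [NormedAddCommGroup X] [InnerProductSpace 𝕜 X] [CompleteSpace X]
    [NormedAddCommGroup Y] [InnerProductSpace 𝕜 Y] [CompleteSpace Y]
    [NormedAddCommGroup X'] [InnerProductSpace 𝕜 X'] [CompleteSpace X']
    [NormedAddCommGroup Y'] [InnerProductSpace 𝕜 Y'] [CompleteSpace Y']
    (A : X →L[𝕜] Y) (A' : X' →L[𝕜] Y')
    (hAcompact : IsCompactOperator ⇑A) (hA'compact : IsCompactOperator ⇑A')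
    (σ σ' : ℕ → ℝ) (φ : ℕ → X) (ψ : ℕ → Y) (φ' : ℕ → X') (ψ' : ℕ → Y')
    (hσpos : ∀ n, 0 < σ n) (hσanti : Antitone σ) (hσ0 : Tendsto σ atTop (nhds 0))
    (hσ'pos : ∀ n, 0 < σ' n) (hσ'anti : Antitone σ') (hσ'0 : Tendsto σ' atTop (nhds 0))
    (hφ : Orthonormal 𝕜 φ) (hψ : Orthonormal 𝕜 ψ)
    (hφ' : Orthonormal 𝕜 φ') (hψ' : Orthonormal 𝕜 ψ')
    (hArep : ∀ x : X, A x = ∑' n : ℕ, ((σ n : 𝕜) * (inner 𝕜 (φ n) x : 𝕜)) • ψ n)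
    (hA'rep : ∀ x : X', A' x = ∑' n : ℕ, ((σ' n : 𝕜) * (inner 𝕜 (φ' n) x : 𝕜)) • ψ' n) :
    List.TFAE
      [ (∃ (T : Y →L[𝕜] Y') (S : X' →L[𝕜] X), A' = T ∘L (A ∘L S)),
        (∃ (O : Y →L[𝕜] Y') (S : X' →L[𝕜] X),
          (∀ y ∈ closure (Set.range ⇑A), ‖O y‖ = ‖y‖) ∧ A' = O ∘L (A ∘L S)),
        (∃ (T : Y →L[𝕜] Y') (U : X' →L[𝕜] X),
          (∀ x ∈ (LinearMap.ker (A' : X' →ₗ[𝕜] Y'))ᗮ, ‖U x‖ = ‖x‖) ∧ A' = T ∘L (A ∘L U)),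
        (∃ C : ℝ, 0 < C ∧ ∀ n, σ' n ≤ C * σ n) ] := by
  classical
  have hcσ : ∀ n, ‖((σ n : ℝ) : 𝕜)‖ ≤ σ 0 := fun n => by
    rw [RCLike.norm_ofReal, abs_of_pos (hσpos n)]; exact hσanti (Nat.zero_le n)
  have hcσ' : ∀ n, ‖((σ' n : ℝ) : 𝕜)‖ ≤ σ' 0 := fun n => by
    rw [RCLike.norm_ofReal, abs_of_pos (hσ'pos n)]; exact hσ'anti (Nat.zero_le n)
  let Dσ := SVDAux.diag (fun n => ((σ n : ℝ) : 𝕜)) hcσ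
  let Dσ' := SVDAux.diag (fun n => ((σ' n : ℝ) : 𝕜)) hcσ'
  have hAfact : ∀ x, A x = SVDAux.synth hψ (Dσ (SVDAux.anal hφ x)) :=
    fun x => SVDAux.fact_of_rep hφ hψ _ hcσ A hArep x
  have hA'fact : ∀ x, A' x = SVDAux.synth hψ' (Dσ' (SVDAux.anal hφ' x)) :=
    fun x => SVDAux.fact_of_rep hφ' hψ' _ hcσ' A' hA'rep x
  tfae_have 2 → 1 := by
    rintro ⟨O, S, -, h⟩; exact ⟨O, S, h⟩
  tfae_have 3 → 1 := by
    rintro ⟨T, U, -, h⟩; exact ⟨T, U, h⟩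
  tfae_have 4 → 2 := by
    rintro ⟨C, hCpos, hle⟩
    have hc : ∀ n, ‖(((σ' n / σ n : ℝ)) : 𝕜)‖ ≤ C := fun n => by
      rw [RCLike.norm_ofReal, abs_of_pos (div_pos (hσ'pos n) (hσpos n)), div_le_iff₀ (hσpos n)]
      exact hle n
    let D1 := SVDAux.diag (fun n => (((σ' n / σ n : ℝ)) : 𝕜)) hc
    refine ⟨(SVDAux.synth hψ').toContinuousLinearMap ∘L SVDAux.anal hψ,
      (SVDAux.synth hφ).toContinuousLinearMap ∘L (D1 ∘L SVDAux.anal hφ'), ?_, ?_⟩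
    · intro y hy
      have hsub : closure (Set.range ⇑A) ⊆ Set.range (SVDAux.synth hψ) := by
        apply closure_minimal _ (SVDAux.isClosed_range_synth hψ)
        rintro - ⟨x, rfl⟩
        exact ⟨_, (hAfact x).symm⟩
      obtain ⟨f, rfl⟩ := hsub hy
      simp only [ContinuousLinearMap.comp_apply, LinearIsometry.coe_toContinuousLinearMap]
      rw [SVDAux.anal_synth hψ, (SVDAux.synth hψ').norm_map, (SVDAux.synth hψ).norm_map]
    · ext x
      simp only [ContinuousLinearMap.comp_apply, LinearIsometry.coe_toContinuousLinearMap]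
      rw [hA'fact x, hAfact (SVDAux.synth hφ (D1 (SVDAux.anal hφ' x))),
        SVDAux.anal_synth hφ, SVDAux.anal_synth hψ]
      congr 1
      apply lp.ext
      funext m
      simp only [SVDAux.diag_apply, Dσ, Dσ', D1]
      have hne : ((σ m : ℝ) : 𝕜) ≠ 0 := RCLike.ofReal_ne_zero.mpr (hσpos m).ne'
      rw [RCLike.ofReal_div]
      field_simp
      all_goals ring
  tfae_have 4 → 3 := by
    rintro ⟨C, hCpos, hle⟩
    have hc : ∀ n, ‖(((σ' n / σ n : ℝ)) : 𝕜)‖ ≤ C := fun n => by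
      rw [RCLike.norm_ofReal, abs_of_pos (div_pos (hσ'pos n) (hσpos n)), div_le_iff₀ (hσpos n)]
      exact hle n
    let D1 := SVDAux.diag (fun n => (((σ' n / σ n : ℝ)) : 𝕜)) hc
    refine ⟨(SVDAux.synth hψ').toContinuousLinearMap ∘L (D1 ∘L SVDAux.anal hψ),
      (SVDAux.synth hφ).toContinuousLinearMap ∘L SVDAux.anal hφ', ?_, ?_⟩
    · set M := (Submodule.span 𝕜 (Set.range φ')).topologicalClosure with hM
      haveI : CompleteSpace M := (Submodule.isClosed_topologicalClosure _).completeSpace_coe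
      have hMorth : Mᗮ ≤ LinearMap.ker (A' : X' →ₗ[𝕜] Y') := by
        intro z hz
        rw [LinearMap.mem_ker]
        have hzero : SVDAux.anal hφ' z = 0 := by
          apply lp.ext
          funext m
          rw [SVDAux.anal_apply]
          have hmem : φ' m ∈ M := (Submodule.le_topologicalClosure _)
            (Submodule.subset_span ⟨m, rfl⟩)
          have := hz (φ' m) hmem
          simpa using this
        rw [ContinuousLinearMap.coe_coe, hA'fact z, hzero, map_zero, map_zero]
      have hsub : (LinearMap.ker (A' : X' →ₗ[𝕜] Y'))ᗮ ≤ M := by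
        have h1 := Submodule.orthogonal_le hMorth
        rwa [Submodule.orthogonal_orthogonal M] at h1
      intro x hx
      have hx' : x ∈ LinearMap.range (SVDAux.synth hφ').toLinearMap := by
        rw [SVDAux.range_synth hφ']; exact hsub hx
      obtain ⟨f, rfl⟩ := hx'
      simp only [ContinuousLinearMap.comp_apply, LinearIsometry.coe_toContinuousLinearMap,
        LinearIsometry.coe_toLinearMap]
      rw [SVDAux.anal_synth hφ', (SVDAux.synth hφ).norm_map, (SVDAux.synth hφ').norm_map]
    · ext x
      simp only [ContinuousLinearMap.comp_apply, LinearIsometry.coe_toContinuousLinearMap]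
      rw [hA'fact x, hAfact (SVDAux.synth hφ (SVDAux.anal hφ' x)),
        SVDAux.anal_synth hφ, SVDAux.anal_synth hψ]
      congr 1
      apply lp.ext
      funext m
      simp only [SVDAux.diag_apply, Dσ, Dσ', D1]
      have hne : ((σ m : ℝ) : 𝕜) ≠ 0 := RCLike.ofReal_ne_zero.mpr (hσpos m).ne'
      rw [RCLike.ofReal_div]
      field_simp
      all_goals ring
  tfae_have 1 → 4 := by
    rintro ⟨T, S, hTS⟩
    refine ⟨‖T‖ * ‖S‖ + 1, by positivity, fun n => ?_⟩
    set QL : lp (fun _ : ℕ => 𝕜) 2 →L[𝕜] lp (fun _ : ℕ => 𝕜) 2 :=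
      SVDAux.anal hφ ∘L (S ∘L (SVDAux.synth hφ').toContinuousLinearMap) with hQL
    set PL : lp (fun _ : ℕ => 𝕜) 2 →L[𝕜] lp (fun _ : ℕ => 𝕜) 2 :=
      SVDAux.anal hψ' ∘L (T ∘L (SVDAux.synth hψ).toContinuousLinearMap) with hPL
    have key : ∀ f, Dσ' f = PL (Dσ (QL f)) := by
      intro f
      have h1 : A' (SVDAux.synth hφ' f) = SVDAux.synth hψ' (Dσ' f) := by
        rw [hA'fact, SVDAux.anal_synth hφ']
      have h2 : A' (SVDAux.synth hφ' f) = T (A (S (SVDAux.synth hφ' f))) := by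
        rw [hTS]; rfl
      rw [hAfact (S (SVDAux.synth hφ' f))] at h2
      have h3 : SVDAux.synth hψ' (Dσ' f)
          = T (SVDAux.synth hψ (Dσ (SVDAux.anal hφ (S (SVDAux.synth hφ' f))))) :=
        h1.symm.trans h2
      calc Dσ' f = SVDAux.anal hψ' (SVDAux.synth hψ' (Dσ' f)) :=
            (SVDAux.anal_synth hψ' _).symm
        _ = PL (Dσ (QL f)) := by
            rw [h3]
            simp only [hPL, hQL, ContinuousLinearMap.comp_apply,
              LinearIsometry.coe_toContinuousLinearMap]
    have hPle : ∀ g, ‖PL g‖ ≤ ‖T‖ * ‖g‖ := by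
      intro g
      calc ‖PL g‖ ≤ ‖T ((SVDAux.synth hψ) g)‖ := by
            simpa only [hPL, ContinuousLinearMap.comp_apply,
              LinearIsometry.coe_toContinuousLinearMap] using
              SVDAux.norm_anal_le hψ' (T ((SVDAux.synth hψ) g))
        _ ≤ ‖T‖ * ‖(SVDAux.synth hψ) g‖ := T.le_opNorm _
        _ = ‖T‖ * ‖g‖ := by rw [(SVDAux.synth hψ).norm_map]
    have hQle : ∀ f, ‖QL f‖ ≤ ‖S‖ * ‖f‖ := by
      intro f
      calc ‖QL f‖ ≤ ‖S ((SVDAux.synth hφ') f)‖ := by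
            simpa only [hQL, ContinuousLinearMap.comp_apply,
              LinearIsometry.coe_toContinuousLinearMap] using
              SVDAux.norm_anal_le hφ (S ((SVDAux.synth hφ') f))
        _ ≤ ‖S‖ * ‖(SVDAux.synth hφ') f‖ := S.le_opNorm _
        _ = ‖S‖ * ‖f‖ := by rw [(SVDAux.synth hφ').norm_map]
    -- the (n+1)-dimensional test space
    set e : Fin (n + 1) → lp (fun _ : ℕ => 𝕜) 2 :=
      fun k => lp.single 2 (k : ℕ) (1 : 𝕜) with he_def
    have he : Orthonormal 𝕜 e :=
      SVDAux.orthonormal_single.comp (fun k : Fin (n+1) => (k : ℕ)) Fin.val_injective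
    set E' := Submodule.span 𝕜 (Set.range e) with hE'
    have hdim : Module.finrank 𝕜 E' = n + 1 := by
      rw [finrank_span_eq_card he.linearIndependent, Fintype.card_fin]
    have hE0 : ∀ f ∈ E', ∀ j, n < j → (f : lp (fun _ : ℕ => 𝕜) 2) j = 0 := by
      intro f hf
      induction hf using Submodule.span_induction with
      | mem x hx =>
        obtain ⟨k, rfl⟩ := hx
        intro j hj
        have hjk : j ≠ (k : ℕ) := by
          have := k.isLt
          omega
        exact lp.single_apply_ne (E := fun _ : ℕ => 𝕜) 2 (k : ℕ) (1 : 𝕜) hjk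
      | zero => intro j _; simp
      | add f g _ _ hf hg =>
        intro j hj
        rw [lp.coeFn_add, Pi.add_apply, hf j hj, hg j hj, add_zero]
      | smul a f _ hf =>
        intro j hj
        rw [lp.coeFn_smul, Pi.smul_apply, hf j hj, smul_zero]
    have hlow : ∀ f ∈ E', σ' n * ‖f‖ ≤ ‖Dσ' f‖ := by
      intro f hf
      apply SVDAux.le_norm_of_forall_le (le_of_lt (hσ'pos n))
      intro j
      rcases le_or_gt j n with hj | hj
      · rw [SVDAux.diag_apply, norm_mul, RCLike.norm_ofReal, abs_of_pos (hσ'pos j)]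
        exact mul_le_mul_of_nonneg_right (hσ'anti hj) (norm_nonneg _)
      · have h0 : (f : lp (fun _ : ℕ => 𝕜) 2) j = 0 := hE0 f hf j hj
        simp [Dσ', SVDAux.diag_apply, h0]
    have hQinj : ∀ f ∈ E', QL f = 0 → f = 0 := by
      intro f hf h0
      have hz : Dσ' f = 0 := by
        rw [key f, h0, map_zero, map_zero]
      have h2 := hlow f hf
      rw [hz, norm_zero] at h2
      have hf0 : ‖f‖ ≤ 0 := by nlinarith [hσ'pos n, norm_nonneg f]
      exact norm_le_zero_iff.mp hf0
    let r : E' →ₗ[𝕜] lp (fun _ : ℕ => 𝕜) 2 := (QL : _ →ₗ[𝕜] _).domRestrict E'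
    have hrinj : Function.Injective r := by
      rw [injective_iff_map_eq_zero]
      rintro ⟨f, hf⟩ h0
      exact Subtype.ext (hQinj f hf (by simpa [r] using h0))
    have hrange : Module.finrank 𝕜 (LinearMap.range r) = n + 1 := by
      rw [LinearMap.finrank_range_of_inj hrinj, hdim]
    let π : lp (fun _ : ℕ => 𝕜) 2 →ₗ[𝕜] (Fin n → 𝕜) :=
      { toFun := fun g => fun i => g (i : ℕ)
        map_add' := fun g1 g2 => by funext i; simp [lp.coeFn_add]
        map_smul' := fun a g => by funext i; simp [lp.coeFn_smul] }
    have hπ : ¬ Function.Injective (π.comp (LinearMap.range r).subtype) := by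
      intro hinj
      have hle' := LinearMap.finrank_le_finrank_of_injective hinj
      rw [hrange, Module.finrank_fin_fun] at hle'
      omega
    have hπ' : ∃ a : ↥(LinearMap.range r), (π.comp (LinearMap.range r).subtype) a = 0 ∧ a ≠ 0 := by
      by_contra hcon
      push_neg at hcon
      exact hπ ((injective_iff_map_eq_zero _).mpr hcon)
    obtain ⟨⟨g, hg⟩, hgker, hgne⟩ := hπ'
    obtain ⟨fe, hfg⟩ := hg
    obtain ⟨f, hf⟩ := fe
    have hfg' : QL f = g := hfg
    have hfne : f ≠ 0 := by
      intro h0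
      apply hgne
      have hg0 : g = 0 := by rw [← hfg', h0, map_zero]
      exact Subtype.ext (by simp [hg0])
    have hgzero : ∀ j, j < n → (g : lp (fun _ : ℕ => 𝕜) 2) j = 0 := by
      intro j hj
      have h := congrFun hgker (⟨j, hj⟩ : Fin n)
      simpa [π] using h
    have hup : ‖Dσ g‖ ≤ σ n * ‖g‖ := by
      apply SVDAux.norm_le_of_forall_le (le_of_lt (hσpos n))
      intro j
      rcases lt_or_ge j n with hj | hj
      · have h0 : (g : lp (fun _ : ℕ => 𝕜) 2) j = 0 := hgzero j hj
        simp [Dσ, SVDAux.diag_apply, h0]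
      · rw [SVDAux.diag_apply, norm_mul, RCLike.norm_ofReal, abs_of_pos (hσpos j)]
        exact mul_le_mul_of_nonneg_right (hσanti hj) (norm_nonneg _)
    have hfpos : 0 < ‖f‖ := norm_pos_iff.mpr hfne
    have chain : σ' n * ‖f‖ ≤ (‖T‖ * ‖S‖) * (σ n * ‖f‖) := by
      calc σ' n * ‖f‖ ≤ ‖Dσ' f‖ := hlow f hf
        _ = ‖PL (Dσ (QL f))‖ := by rw [key]
        _ ≤ ‖T‖ * ‖Dσ (QL f)‖ := hPle _
        _ = ‖T‖ * ‖Dσ g‖ := by rw [hfg']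
        _ ≤ ‖T‖ * (σ n * ‖g‖) := mul_le_mul_of_nonneg_left hup (norm_nonneg T)
        _ ≤ ‖T‖ * (σ n * (‖S‖ * ‖f‖)) := by
            apply mul_le_mul_of_nonneg_left _ (norm_nonneg T)
            apply mul_le_mul_of_nonneg_left _ (le_of_lt (hσpos n))
            rw [← hfg']
            exact hQle f
        _ = (‖T‖ * ‖S‖) * (σ n * ‖f‖) := by ring
    have hdiv : σ' n ≤ (‖T‖ * ‖S‖) * σ n := by
      have := (mul_le_mul_iff_of_pos_right hfpos).mp (by linarith [chain] : σ' n * ‖f‖ ≤ ((‖T‖ * ‖S‖) * σ n) * ‖f‖)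
      exact this
    nlinarith [hσpos n]
  tfae_finish
end

section
/- Let X, X', Y be Hilbert spaces over ℝ or ℂ and let A : X → Y and A' : X' → Y be bounded linear operators with common codomain. Then the following are equivalent: (1) range(A') ⊆ range(A); (2) there exists C > 0 such that ‖A'* y‖ ≤ C ‖A* y‖ for all y ∈ Y, where A*, A'* are the Hilbert-space adjoints; (3) there exists a bounded linear operator S : X' → X with A' = A ∘ S. Moreover, there is exactly one bounded linear operator S : X' → X satisfying A' = A ∘ S together with range(S) ⊆ (ker A)^⊥, and this S satisfies ker(S) ⊆ ker(A'). -/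
open ContinuousLinearMap

section DouglasAux

variable {𝕜 X X' Y : Type*} [RCLike 𝕜]
    [NormedAddCommGroup X] [InnerProductSpace 𝕜 X] [CompleteSpace X]
    [NormedAddCommGroup X'] [InnerProductSpace 𝕜 X'] [CompleteSpace X']
    [NormedAddCommGroup Y] [InnerProductSpace 𝕜 Y] [CompleteSpace Y]

private lemma douglas_uniq (A : X →L[𝕜] Y) {x₁ x₂ : X}
    (h₁ : x₁ ∈ (LinearMap.ker (A : X →ₗ[𝕜] Y))ᗮ) (h₂ : x₂ ∈ (LinearMap.ker (A : X →ₗ[𝕜] Y))ᗮ) (h : A x₁ = A x₂) :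
    x₁ = x₂ := by
  have hk : x₁ - x₂ ∈ LinearMap.ker (A : X →ₗ[𝕜] Y) := by
    simp [LinearMap.mem_ker, map_sub, h]
  have ho : x₁ - x₂ ∈ (LinearMap.ker (A : X →ₗ[𝕜] Y))ᗮ := Submodule.sub_mem _ h₁ h₂
  have h0 : x₁ - x₂ = 0 :=
    Submodule.disjoint_def.mp (Submodule.orthogonal_disjoint (LinearMap.ker (A : X →ₗ[𝕜] Y))) _ hk ho
  exact sub_eq_zero.mp h0

private lemma douglas_exists (A : X →L[𝕜] Y) (A' : X' →L[𝕜] Y)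
    (hr : Set.range ⇑A' ⊆ Set.range ⇑A) :
    ∃ S : X' →L[𝕜] X, A' = A ∘L S ∧ LinearMap.range (S : X' →ₗ[𝕜] X) ≤ (LinearMap.ker (A : X →ₗ[𝕜] Y))ᗮ := by
  haveI : CompleteSpace (LinearMap.ker (A : X →ₗ[𝕜] Y)) := (isClosed_ker A).completeSpace_coe
  have hex : ∀ x' : X', ∃ x : X, x ∈ (LinearMap.ker (A : X →ₗ[𝕜] Y))ᗮ ∧ A x = A' x' := by
    intro x'
    obtain ⟨w, hw⟩ := hr ⟨x', rfl⟩
    refine ⟨w - (Submodule.orthogonalProjectionOnto (LinearMap.ker (A : X →ₗ[𝕜] Y)) w : X),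
      Submodule.sub_starProjection_mem_orthogonal _, ?_⟩
    have hm : ((Submodule.orthogonalProjectionOnto (LinearMap.ker (A : X →ₗ[𝕜] Y)) w : X)) ∈ LinearMap.ker (A : X →ₗ[𝕜] Y) :=
      SetLike.coe_mem _
    rw [map_sub, (show A (Submodule.orthogonalProjectionOnto (LinearMap.ker (A : X →ₗ[𝕜] Y)) w : X) = 0 from LinearMap.mem_ker.mp hm), sub_zero, hw]
  choose f hfK hfA using hex
  let S₀ : X' →ₗ[𝕜] X :=
    { toFun := f
      map_add' := fun a b => by
        refine douglas_uniq A (hfK _) (Submodule.add_mem _ (hfK a) (hfK b)) ?_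
        rw [hfA, map_add, map_add, hfA, hfA]
      map_smul' := fun c a => by
        refine douglas_uniq A (hfK _) (Submodule.smul_mem _ c (hfK a)) ?_
        show A (f (c • a)) = A (c • f a)
        rw [hfA, map_smul, map_smul, hfA] }
  have hgraph : (S₀.graph : Set (X' × X)) =
      {p : X' × X | A p.2 = A' p.1} ∩ {p : X' × X | p.2 ∈ (LinearMap.ker (A : X →ₗ[𝕜] Y))ᗮ} := by
    ext p
    constructor
    · intro hp
      have hp' : p.2 = f p.1 := hp
      constructor
      · show A p.2 = A' p.1
        rw [hp', hfA]
      · show p.2 ∈ (LinearMap.ker (A : X →ₗ[𝕜] Y))ᗮ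
        rw [hp']
        exact hfK _
    · rintro ⟨h1, h2⟩
      show p.2 = f p.1
      exact douglas_uniq A h2 (hfK _) (by rw [h1, hfA])
  have hcl : IsClosed (S₀.graph : Set (X' × X)) := by
    rw [hgraph]
    exact (isClosed_eq (A.continuous.comp continuous_snd)
      (A'.continuous.comp continuous_fst)).inter
      ((LinearMap.ker (A : X →ₗ[𝕜] Y)).isClosed_orthogonal.preimage continuous_snd)
  have hc : Continuous S₀ := S₀.continuous_of_isClosed_graph hcl
  refine ⟨⟨S₀, hc⟩, ?_, ?_⟩
  · ext x'
    exact (hfA x').symm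
  · rintro x ⟨x', rfl⟩
    exact hfK x'

private lemma douglas_of_adjoint_bound (A : X →L[𝕜] Y) (A' : X' →L[𝕜] Y)
    {C : ℝ} (hC0 : 0 ≤ C)
    (hC : ∀ y : Y, ‖ContinuousLinearMap.adjoint A' y‖ ≤ C * ‖ContinuousLinearMap.adjoint A y‖) :
    Set.range ⇑A' ⊆ Set.range ⇑A := by
  rintro _ ⟨x', rfl⟩
  set T : Y →ₗ[𝕜] X := (ContinuousLinearMap.adjoint A : Y →L[𝕜] X).toLinearMap with hT
  set h : Y →ₗ[𝕜] 𝕜 :=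
    ((innerSL 𝕜 x').comp (ContinuousLinearMap.adjoint A')).toLinearMap with hh
  have hker : LinearMap.ker T ≤ LinearMap.ker h := by
    intro y hy
    have h0 : ContinuousLinearMap.adjoint A y = 0 := hy
    have h1 : ‖ContinuousLinearMap.adjoint A' y‖ ≤ 0 := by simpa [h0] using hC y
    have h2 : ContinuousLinearMap.adjoint A' y = 0 := norm_le_zero_iff.mp h1
    show h y = 0
    simp [hh, h2]
  let g₀ : LinearMap.range T →ₗ[𝕜] 𝕜 :=
    ((LinearMap.ker T).liftQ h hker).comp T.quotKerEquivRange.symm.toLinearMap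
  have hg₀ : ∀ (y : Y) (hz : T y ∈ LinearMap.range T), g₀ ⟨T y, hz⟩ = h y := by
    intro y hz
    have e1 : T.quotKerEquivRange.symm ⟨T y, hz⟩ = (LinearMap.ker T).mkQ y :=
      T.quotKerEquivRange_symm_apply_image y hz
    show ((LinearMap.ker T).liftQ h hker) (T.quotKerEquivRange.symm ⟨T y, hz⟩) = h y
    rw [e1]
    exact Submodule.liftQ_apply _ h y
  have hbound : ∀ z : LinearMap.range T, ‖g₀ z‖ ≤ (C * ‖x'‖) * ‖z‖ := by
    intro z
    obtain ⟨y, hy⟩ := z.2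
    have hz : z = ⟨T y, ⟨y, rfl⟩⟩ := Subtype.ext hy.symm
    rw [hz, hg₀ y ⟨y, rfl⟩]
    have hn : ‖(⟨T y, ⟨y, rfl⟩⟩ : LinearMap.range T)‖ = ‖T y‖ := rfl
    rw [hn]
    have e2 : h y = (inner 𝕜 x' (ContinuousLinearMap.adjoint A' y) : 𝕜) := rfl
    rw [e2]
    calc ‖(inner 𝕜 x' (ContinuousLinearMap.adjoint A' y) : 𝕜)‖
        ≤ ‖x'‖ * ‖ContinuousLinearMap.adjoint A' y‖ := norm_inner_le_norm _ _
      _ ≤ ‖x'‖ * (C * ‖ContinuousLinearMap.adjoint A y‖) := by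
          exact mul_le_mul_of_nonneg_left (hC y) (norm_nonneg _)
      _ = (C * ‖x'‖) * ‖T y‖ := by ring_nf; rfl
  let g₁ : LinearMap.range T →L[𝕜] 𝕜 := g₀.mkContinuous (C * ‖x'‖) hbound
  obtain ⟨g, hg, -⟩ := exists_extension_norm_eq (LinearMap.range T) g₁
  refine ⟨(InnerProductSpace.toDual 𝕜 X).symm g, ?_⟩
  apply ext_inner_right 𝕜
  intro v
  rw [← ContinuousLinearMap.adjoint_inner_right A, ← ContinuousLinearMap.adjoint_inner_right A']
  have hz : (ContinuousLinearMap.adjoint A) v ∈ LinearMap.range T := ⟨v, rfl⟩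
  calc (inner 𝕜 ((InnerProductSpace.toDual 𝕜 X).symm g) (ContinuousLinearMap.adjoint A v) : 𝕜)
      = g (ContinuousLinearMap.adjoint A v) := InnerProductSpace.toDual_symm_apply
    _ = g₁ ⟨ContinuousLinearMap.adjoint A v, hz⟩ := hg ⟨ContinuousLinearMap.adjoint A v, hz⟩
    _ = g₀ ⟨ContinuousLinearMap.adjoint A v, hz⟩ := rfl
    _ = h v := hg₀ v hz
    _ = inner 𝕜 x' (ContinuousLinearMap.adjoint A' v) := rfl

end DouglasAux

/-- Douglas range inclusion theorem, together with uniqueness of the connecting operator `S`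
whose range lies in `(ker A)ᗮ`, which moreover satisfies `ker S ⊆ ker A'`. -/
theorem douglas_range_inclusion
    {𝕜 X X' Y : Type*} [RCLike 𝕜]
    [NormedAddCommGroup X] [InnerProductSpace 𝕜 X] [CompleteSpace X]
    [NormedAddCommGroup X'] [InnerProductSpace 𝕜 X'] [CompleteSpace X']
    [NormedAddCommGroup Y] [InnerProductSpace 𝕜 Y] [CompleteSpace Y]
    (A : X →L[𝕜] Y) (A' : X' →L[𝕜] Y) :
    ((Set.range ⇑A' ⊆ Set.range ⇑A) ↔
      (∃ C : ℝ, 0 < C ∧ ∀ y : Y,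
        ‖ContinuousLinearMap.adjoint A' y‖ ≤ C * ‖ContinuousLinearMap.adjoint A y‖)) ∧
    ((Set.range ⇑A' ⊆ Set.range ⇑A) ↔ (∃ S : X' →L[𝕜] X, A' = A ∘L S)) ∧
    (Set.range ⇑A' ⊆ Set.range ⇑A →
      (∃! S : X' →L[𝕜] X,
          A' = A ∘L S ∧ LinearMap.range (S : X' →ₗ[𝕜] X) ≤ (LinearMap.ker (A : X →ₗ[𝕜] Y))ᗮ) ∧
      (∀ S : X' →L[𝕜] X, A' = A ∘L S → LinearMap.range (S : X' →ₗ[𝕜] X) ≤ (LinearMap.ker (A : X →ₗ[𝕜] Y))ᗮ →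
          LinearMap.ker (S : X' →ₗ[𝕜] X) ≤ LinearMap.ker (A' : X' →ₗ[𝕜] Y))) := by
  have e31 : (∃ S : X' →L[𝕜] X, A' = A ∘L S) → Set.range ⇑A' ⊆ Set.range ⇑A := by
    rintro ⟨S, hS⟩ _ ⟨x', rfl⟩
    exact ⟨S x', by rw [hS]; rfl⟩
  have e32 : (∃ S : X' →L[𝕜] X, A' = A ∘L S) →
      (∃ C : ℝ, 0 < C ∧ ∀ y : Y,
        ‖ContinuousLinearMap.adjoint A' y‖ ≤ C * ‖ContinuousLinearMap.adjoint A y‖) := by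
    rintro ⟨S, hS⟩
    refine ⟨‖ContinuousLinearMap.adjoint S‖ + 1, by positivity, fun y => ?_⟩
    have h1 : ContinuousLinearMap.adjoint A' =
        ContinuousLinearMap.adjoint S ∘L ContinuousLinearMap.adjoint A := by
      rw [hS, ContinuousLinearMap.adjoint_comp]
    calc ‖ContinuousLinearMap.adjoint A' y‖
        = ‖ContinuousLinearMap.adjoint S (ContinuousLinearMap.adjoint A y)‖ := by rw [h1]; rfl
      _ ≤ ‖ContinuousLinearMap.adjoint S‖ * ‖ContinuousLinearMap.adjoint A y‖ :=
          (ContinuousLinearMap.adjoint S).le_opNorm _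
      _ ≤ (‖ContinuousLinearMap.adjoint S‖ + 1) * ‖ContinuousLinearMap.adjoint A y‖ := by
          have := norm_nonneg (ContinuousLinearMap.adjoint A y)
          nlinarith
  refine ⟨⟨fun hr => ?_, ?_⟩, ⟨fun hr => ?_, e31⟩, fun hr => ⟨?_, ?_⟩⟩
  · obtain ⟨S, hS, -⟩ := douglas_exists A A' hr
    exact e32 ⟨S, hS⟩
  · rintro ⟨C, hC0, hC⟩
    exact douglas_of_adjoint_bound A A' hC0.le hC
  · obtain ⟨S, hS, -⟩ := douglas_exists A A' hr
    exact ⟨S, hS⟩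
  · obtain ⟨S, hS, hrS⟩ := douglas_exists A A' hr
    refine ⟨S, ⟨hS, hrS⟩, ?_⟩
    rintro S' ⟨hS', hrS'⟩
    ext x'
    refine douglas_uniq A (hrS' ⟨x', rfl⟩) (hrS ⟨x', rfl⟩) ?_
    have h1 : A (S x') = A' x' := by rw [hS]; rfl
    have h2 : A (S' x') = A' x' := by rw [hS']; rfl
    rw [h1, h2]
  · intro S hS _ x hx
    have hx0 : S x = 0 := hx
    show A' x = 0
    rw [hS]
    simp [hx0]
end

section
/- Let X, Y, X', Y' be Hilbert spaces over ℝ or ℂ and let A : X → Y and A' : X' → Y' be bounded linear operators (not necessarily compact). Then the following are equivalent: (1) there exist bounded linear operators T : Y → Y' and S : X' → X with A' = T ∘ A ∘ S; (2) there exist a partial isometry Q : Y → Y' (i.e., ‖Q y‖ = ‖y‖ for all y in the orthogonal complement of ker Q) and a bounded linear operator S : X' → X with A' = Q ∘ A ∘ S; (3) there exist a bounded linear operator T : Y → Y' and a partial isometry P : X' → X (i.e., ‖P x‖ = ‖x‖ for all x in the orthogonal complement of ker P) with A' = T ∘ A ∘ P. -/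
set_option maxHeartbeats 1000000

open ContinuousLinearMap RCLike

section Coefficients


noncomputable def bcoef : ℕ → ℝ
  | 0 => 0
  | n + 1 => 2 * catalan n / 4 ^ (n + 1)

lemma bcoef_nonneg (n : ℕ) : 0 ≤ bcoef n := by
  cases n with
  | zero => simp [bcoef]
  | succ n => unfold bcoef; positivity

lemma two_catalan_add_cb (n : ℕ) :
    2 * (catalan n : ℝ) + (Nat.centralBinom (n+1) : ℝ) = 4 * Nat.centralBinom n := by
  have h1 : ((n:ℝ) + 1) * catalan n = Nat.centralBinom n := by
    exact_mod_cast congrArg (Nat.cast (R := ℝ)) (succ_mul_catalan_eq_centralBinom n)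
  have h2 : ((n:ℝ) + 1) * Nat.centralBinom (n+1) = 2 * (2*n+1) * Nat.centralBinom n := by
    exact_mod_cast congrArg (Nat.cast (R := ℝ)) (Nat.succ_mul_centralBinom_succ n)
  have hn : ((n:ℝ) + 1) ≠ 0 := by positivity
  have key : ((n:ℝ)+1) * (2 * catalan n + Nat.centralBinom (n+1)) =
      ((n:ℝ)+1) * (4 * Nat.centralBinom n) := by ring_nf; ring_nf at h1 h2; nlinarith [h1, h2]
  exact mul_left_cancel₀ hn key

lemma bcoef_partial_sum (n : ℕ) :
    ∑ k ∈ Finset.range (n + 1), bcoef k = 1 - (Nat.centralBinom n : ℝ) / 4 ^ n := by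
  induction n with
  | zero => simp [bcoef, Nat.centralBinom_zero]
  | succ n ih =>
      rw [Finset.sum_range_succ, ih]
      have h := two_catalan_add_cb n
      have h4 : (0:ℝ) < 4 ^ (n+1) := by positivity
      show (1 : ℝ) - _ + 2 * catalan n / 4 ^ (n + 1) = _
      have h4' : (0:ℝ) < 4 ^ n := by positivity
      field_simp
      ring_nf
      ring_nf at h
      have h5 := congrArg (fun x : ℝ => x * 4 ^ n) h
      ring_nf at h5
      linarith [h5]

lemma bcoef_sum_range_le (n : ℕ) : ∑ k ∈ Finset.range n, bcoef k ≤ 1 := by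
  cases n with
  | zero => simp
  | succ n => rw [bcoef_partial_sum]; have : (0:ℝ) ≤ (Nat.centralBinom n : ℝ) / 4 ^ n := by positivity
              linarith

lemma bcoef_summable : Summable bcoef :=
  summable_of_sum_range_le bcoef_nonneg bcoef_sum_range_le

lemma bcoef_tsum_le_one : ∑' n, bcoef n ≤ 1 :=
  Real.tsum_le_of_sum_range_le bcoef_nonneg bcoef_sum_range_le

lemma bcoef_conv (n : ℕ) :
    ∑ kl ∈ Finset.HasAntidiagonal.antidiagonal n, bcoef kl.1 * bcoef kl.2
      = 2 * bcoef n - (if n = 1 then 1 else 0) := by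
  rw [Finset.Nat.sum_antidiagonal_eq_sum_range_succ_mk]
  match n with
  | 0 => simp [bcoef]
  | 1 => norm_num [Finset.sum_range_succ, bcoef]
  | (m+2) =>
    rw [Finset.sum_range_succ', Finset.sum_range_succ]
    have h0 : bcoef 0 = 0 := rfl
    simp only [h0, mul_zero, zero_mul, add_zero, Nat.sub_self]
    have key : ∀ k ∈ Finset.range (m+1),
        bcoef (k+1) * bcoef (m + 2 - (k+1)) = 4 / 4^(m+2) * (catalan k * catalan (m-k)) := by
      intro k hk
      have hk' : k ≤ m := Nat.lt_succ_iff.mp (Finset.mem_range.mp hk)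
      have h1 : m + 2 - (k+1) = (m - k) + 1 := by omega
      rw [h1]
      show 2 * (catalan k : ℝ) / 4 ^ (k + 1) * (2 * catalan (m-k) / 4 ^ (m - k + 1)) = _
      have h2 : (4:ℝ) ^ (k+1) * 4 ^ (m - k + 1) = 4 ^ (m+2) := by
        rw [← pow_add]; congr 1; omega
      rw [div_mul_div_comm, h2]
      ring
    rw [Finset.sum_congr rfl key, ← Finset.mul_sum]
    have h3 : ∑ k ∈ Finset.range (m+1), (catalan k : ℝ) * catalan (m-k)
        = (catalan (m+1) : ℝ) := by
      rw [catalan_succ m]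
      rw [← Fin.sum_univ_eq_sum_range fun k => (catalan k : ℝ) * catalan (m-k)]
      push_cast
      rfl
    rw [h3]
    show _ = 2 * (2 * (catalan (m+1) : ℝ) / 4 ^ (m + 2)) - 0
    ring

end Coefficients

section Hilbert

variable {𝕜 W Z Y₁ Y₂ : Type*} [RCLike 𝕜]
  [NormedAddCommGroup W] [InnerProductSpace 𝕜 W] [CompleteSpace W]
  [NormedAddCommGroup Z] [InnerProductSpace 𝕜 Z] [CompleteSpace Z]
  [NormedAddCommGroup Y₁] [InnerProductSpace 𝕜 Y₁] [CompleteSpace Y₁]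
  [NormedAddCommGroup Y₂] [InnerProductSpace 𝕜 Y₂] [CompleteSpace Y₂]

local notation "⟪" x ", " y "⟫" => @inner 𝕜 _ _ x y

theorem exists_selfadjoint_norm_eq (K : W →L[𝕜] Z) :
    ∃ H : W →L[𝕜] W, IsSelfAdjoint H ∧ ∀ x, ‖H x‖ = ‖K x‖ := by
  classical
  set F : W →L[𝕜] W := (ContinuousLinearMap.adjoint K) ∘L K with hF
  have hFsa : IsSelfAdjoint F := by
    rw [IsSelfAdjoint, star_eq_adjoint, hF, adjoint_comp, adjoint_adjoint]
  have hFinner : ∀ x : W, ⟪x, F x⟫ = ⟪K x, K x⟫ := fun x => by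
    simp only [hF, comp_apply, adjoint_inner_right]
  set r : ℝ := ‖K‖ ^ 2 + 1 with hr
  have hrpos : 0 < r := by positivity
  set B : W →L[𝕜] W := 1 - ((r⁻¹ : ℝ) : 𝕜) • F with hB
  have hBsa : IsSelfAdjoint B := by
    rw [IsSelfAdjoint, hB, star_sub, star_one, star_smul, RCLike.star_def, conj_ofReal, hFsa]
  have hBapp : ∀ x : W, B x = x - ((r⁻¹ : ℝ) : 𝕜) • F x := fun x => by
    simp [hB]
  -- ‖B‖ ≤ 1
  have hBle : ∀ x : W, ‖B x‖ ≤ ‖x‖ := by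
    intro x
    have h1 : ‖B x‖ ^ 2 = ‖x‖ ^ 2 - 2 * (r⁻¹ * ‖K x‖ ^ 2) + ‖((r⁻¹ : ℝ) : 𝕜) • F x‖ ^ 2 := by
      rw [hBapp, @norm_sub_sq 𝕜, inner_smul_right, re_ofReal_mul, hFinner,
        inner_self_eq_norm_sq]
    have h2 : ‖((r⁻¹ : ℝ) : 𝕜) • F x‖ ≤ r⁻¹ * (‖K‖ * ‖K x‖) := by
      rw [norm_smul, norm_ofReal, abs_of_nonneg (by positivity)]
      gcongr
      calc ‖F x‖ ≤ ‖ContinuousLinearMap.adjoint K‖ * ‖K x‖ :=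
            (ContinuousLinearMap.adjoint K).le_opNorm (K x)
        _ = ‖K‖ * ‖K x‖ := by
            congr 1
            exact LinearIsometryEquiv.norm_map (ContinuousLinearMap.adjoint (E := W) (F := Z)) K
    have h3 : r⁻¹ * ‖K‖ ^ 2 ≤ 1 := by
      rw [inv_mul_le_iff₀ hrpos]; simp [hr]
    have h4 : ‖B x‖ ^ 2 ≤ ‖x‖ ^ 2 := by
      have h5 : (0:ℝ) ≤ r⁻¹ := by positivity
      have h6 : ‖((r⁻¹ : ℝ) : 𝕜) • F x‖ ^ 2 ≤ (r⁻¹ * ‖K‖ ^2) * (r⁻¹ * ‖K x‖^2) := by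
        have := sq_nonneg (‖((r⁻¹ : ℝ) : 𝕜) • F x‖)
        nlinarith [norm_nonneg (((r⁻¹ : ℝ) : 𝕜) • F x), norm_nonneg (K x), norm_nonneg K]
      nlinarith [mul_nonneg h5 (sq_nonneg ‖K x‖)]
    nlinarith [norm_nonneg (B x), norm_nonneg x]
  have hB1 : ‖B‖ ≤ 1 := opNorm_le_bound _ zero_le_one (by simpa using hBle)
  have hBpow : ∀ n : ℕ, ‖B ^ n‖ ≤ 1 := by
    intro n
    cases n with
    | zero => rw [pow_zero]; exact norm_id_le (E := W) -- ‖B^0‖ = ‖1‖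
    | succ n =>
        calc ‖B ^ (n+1)‖ ≤ ‖B‖ ^ (n+1) := norm_pow_le' B n.succ_pos
          _ ≤ 1 := pow_le_one₀ (norm_nonneg _) hB1
  -- the power series
  set a : ℕ → (W →L[𝕜] W) := fun n => ((bcoef n : ℝ) : 𝕜) • B ^ n with ha
  have ha_norm : ∀ n, ‖a n‖ ≤ bcoef n := by
    intro n
    show ‖((bcoef n : ℝ) : 𝕜) • B ^ n‖ ≤ bcoef n
    rw [norm_smul ((bcoef n : ℝ) : 𝕜) (B ^ n), norm_ofReal, abs_of_nonneg (bcoef_nonneg n)]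
    calc bcoef n * ‖B ^ n‖ ≤ bcoef n * 1 :=
          mul_le_mul_of_nonneg_left (hBpow n) (bcoef_nonneg n)
      _ = bcoef n := mul_one _
  have ha_normsum : Summable (fun n => ‖a n‖) :=
    Summable.of_nonneg_of_le (fun n => norm_nonneg _) ha_norm bcoef_summable
  have hsum : Summable a := ha_normsum.of_norm
  set g : W →L[𝕜] W := ∑' n, a n with hg
  have hg_star : star g = g := by
    rw [hg, tsum_star]
    congr 1
    funext n
    rw [ha]
    simp only [star_smul, star_pow, RCLike.star_def, conj_ofReal, hBsa.star_eq]
  -- Cauchy product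
  have hprod : g * g = ∑' n, ∑ kl ∈ Finset.HasAntidiagonal.antidiagonal n, a kl.1 * a kl.2 :=
    tsum_mul_tsum_eq_tsum_sum_antidiagonal_of_summable_norm ha_normsum ha_normsum
  have hinner : ∀ n, ∑ kl ∈ Finset.HasAntidiagonal.antidiagonal n, a kl.1 * a kl.2
      = (2:𝕜) • a n - (if n = 1 then B else 0) := by
    intro n
    have e1 : ∀ kl ∈ Finset.HasAntidiagonal.antidiagonal n,
        a kl.1 * a kl.2 = ((bcoef kl.1 * bcoef kl.2 : ℝ) : 𝕜) • B ^ n := by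
      intro kl hkl
      have : kl.1 + kl.2 = n := Finset.HasAntidiagonal.mem_antidiagonal.mp hkl
      show (((bcoef kl.1 : ℝ) : 𝕜) • B ^ kl.1) * (((bcoef kl.2 : ℝ) : 𝕜) • B ^ kl.2) = _
      rw [smul_mul_smul_comm, ← pow_add, this, ← ofReal_mul]
    rw [Finset.sum_congr rfl e1, ← Finset.sum_smul, ← ofReal_sum, bcoef_conv n,
      ofReal_sub, ofReal_mul, sub_smul, mul_smul]
    congr 1
    · show (((2:ℝ) : 𝕜)) • (((bcoef n : ℝ) : 𝕜) • B ^ n) = (2:𝕜) • (((bcoef n : ℝ) : 𝕜) • B ^ n)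
      rw [RCLike.ofReal_ofNat]
    · split_ifs with h
      · subst h; simp
      · simp
  have hite : Summable (fun n : ℕ => if n = 1 then B else 0) :=
    summable_of_ne_finset_zero (s := {1}) (by intro b hb; simp at hb; simp [hb])
  have hg2 : g * g = (2:𝕜) • g - B := by
    have hiteval : ∑' n : ℕ, (if n = 1 then B else 0) = B :=
      tsum_eq_single (f := fun n : ℕ => if n = 1 then B else 0) 1
        (fun n hn => by simp [hn])
    rw [hprod, tsum_congr hinner, Summable.tsum_sub (hsum.const_smul (2:𝕜)) hite,
      Summable.tsum_const_smul (2:𝕜) hsum, hiteval]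
  set G : W →L[𝕜] W := 1 - g with hG
  have hG2 : G * G = ((r⁻¹ : ℝ) : 𝕜) • F := by
    have e : G * G = 1 - g - g + g * g := by rw [hG]; noncomm_ring
    rw [e, hg2, two_smul, hB]
    abel
  set H : W →L[𝕜] W := ((Real.sqrt r : ℝ) : 𝕜) • G with hH
  have hH2 : H * H = F := by
    rw [hH, smul_mul_smul_comm, ← ofReal_mul, Real.mul_self_sqrt hrpos.le, hG2, smul_smul,
      ← ofReal_mul, mul_inv_cancel₀ (ne_of_gt hrpos), ofReal_one, one_smul]
  have hHsa : IsSelfAdjoint H := by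
    rw [IsSelfAdjoint, hH, star_smul, RCLike.star_def, conj_ofReal, star_sub, star_one, hg_star]
  refine ⟨H, hHsa, fun x => ?_⟩
  have e := adjoint_inner_right H x (H x)
  rw [hHsa.adjoint_eq] at e
  have e2 : H (H x) = F x := by rw [← ContinuousLinearMap.mul_apply, hH2]
  rw [e2, hFinner] at e
  have e3 : ‖H x‖ ^ 2 = ‖K x‖ ^ 2 := by
    rw [← inner_self_eq_norm_sq (𝕜 := 𝕜), ← inner_self_eq_norm_sq (𝕜 := 𝕜), e]
  have := norm_nonneg (H x); have := norm_nonneg (K x)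
  nlinarith [e3]

theorem exists_factor_of_norm_le (U : W →L[𝕜] Y₁) (V : W →L[𝕜] Y₂) (c : ℝ)
    (h : ∀ x, ‖V x‖ ≤ c * ‖U x‖) :
    ∃ R : Y₁ →L[𝕜] Y₂, R ∘L U = V ∧
      ((∀ x, ‖V x‖ = ‖U x‖) → ∀ y ∈ (LinearMap.ker (R : Y₁ →ₗ[𝕜] Y₂))ᗮ, ‖R y‖ = ‖y‖) := by
  classical
  set p : Submodule 𝕜 Y₁ := LinearMap.range (U : W →ₗ[𝕜] Y₁) with hp
  obtain ⟨σ, hσ⟩ := (U : W →ₗ[𝕜] Y₁).rangeRestrict.exists_rightInverse_of_surjective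
    (LinearMap.range_rangeRestrict _)
  have hUσ : ∀ m : p, U (σ m) = (m : Y₁) := fun m =>
    congrArg Subtype.val (LinearMap.congr_fun hσ m)
  have hVσ : ∀ x : W, V (σ ⟨U x, LinearMap.mem_range_self _ x⟩) = V x := by
    intro x
    set m : p := ⟨U x, LinearMap.mem_range_self _ x⟩ with hm
    have h0 : U (σ m - x) = 0 := by
      rw [map_sub, hUσ]
      simp [hm]
    have h1 : ‖V (σ m - x)‖ ≤ c * ‖U (σ m - x)‖ := h _
    rw [h0, norm_zero, mul_zero] at h1
    have h2 : V (σ m - x) = 0 := norm_le_zero_iff.mp h1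
    rw [map_sub, sub_eq_zero] at h2
    exact h2
  -- the bounded map on the range
  set f₀ : p →ₗ[𝕜] Y₂ := (V : W →ₗ[𝕜] Y₂) ∘ₗ σ with hf₀
  have hf₀b : ∀ m : p, ‖f₀ m‖ ≤ c * ‖m‖ := by
    intro m
    have := h (σ m)
    rwa [hUσ m] at this
  set f₁ : p →L[𝕜] Y₂ := f₀.mkContinuous c hf₀b with hf₁
  have hf₁app : ∀ m : p, f₁ m = V (σ m) := fun m => rfl
  set M : Submodule 𝕜 Y₁ := p.topologicalClosure with hM
  haveI : CompleteSpace M := IsClosed.completeSpace_coe (hs := p.isClosed_topologicalClosure)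
  -- inclusion of p into M
  set einc : p →ₗ[𝕜] M := Submodule.inclusion p.le_topologicalClosure with heinc
  set e : p →L[𝕜] M := einc.mkContinuous 1 (fun m => by
    rw [one_mul]; rfl) with he
  have he_iso : Isometry e := AddMonoidHomClass.isometry_of_norm e (fun m => rfl)
  have h_e : IsUniformInducing e := he_iso.isUniformInducing
  have h_dense : DenseRange e := by
    intro m
    rw [mem_closure_iff_seq_limit]
    have hm : (m : Y₁) ∈ closure (p : Set Y₁) := by
      have := m.2
      rwa [hM, ← Submodule.topologicalClosure_coe] at *
    obtain ⟨u, hu, hlim⟩ := mem_closure_iff_seq_limit.mp hm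
    refine ⟨fun n => e ⟨u n, hu n⟩, fun n => ⟨⟨u n, hu n⟩, rfl⟩, ?_⟩
    rw [tendsto_subtype_rng]
    exact hlim
  set g : M →L[𝕜] Y₂ := f₁.extend e with hg
  have hge : ∀ m : p, g (e m) = f₁ m := fun m => ContinuousLinearMap.extend_eq (f := f₁) (e := e) h_dense h_e m
  set R : Y₁ →L[𝕜] Y₂ := g ∘L (Submodule.orthogonalProjectionOnto M) with hR
  have hproj_mem : ∀ m : M, Submodule.orthogonalProjectionOnto M (m : Y₁) = m :=
    fun m => Submodule.orthogonalProjectionOnto_mem_subspace_eq_self m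
  have hRU : R ∘L U = V := by
    ext x
    have hmemp : U x ∈ p := LinearMap.mem_range_self _ x
    have hmem : U x ∈ M := p.le_topologicalClosure hmemp
    have e1 : Submodule.orthogonalProjectionOnto M (U x) = (⟨U x, hmem⟩ : M) := hproj_mem ⟨U x, hmem⟩
    have e2 : e ⟨U x, hmemp⟩ = (⟨U x, hmem⟩ : M) := rfl
    calc R (U x) = g (Submodule.orthogonalProjectionOnto M (U x)) := rfl
      _ = g (e ⟨U x, hmemp⟩) := by rw [e1, e2]
      _ = f₁ ⟨U x, hmemp⟩ := hge _
      _ = V x := hVσ x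
  refine ⟨R, hRU, ?_⟩
  intro heq
  -- isometric on M
  have hgiso : ∀ m : M, ‖g m‖ = ‖m‖ := by
    have hcl : IsClosed {m : M | ‖g m‖ = ‖m‖} :=
      isClosed_eq g.continuous.norm continuous_subtype_val.norm
    intro m
    refine h_dense.induction_on m hcl ?_
    intro q
    show ‖g (e q)‖ = ‖e q‖
    rw [hge, he_iso.norm_map_of_map_zero (map_zero e)]
    rw [hf₁app]
    calc ‖V (σ q)‖ = ‖U (σ q)‖ := heq _
      _ = ‖(q : Y₁)‖ := by rw [hUσ]
      _ = ‖q‖ := rfl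
  have hker : LinearMap.ker (R : Y₁ →ₗ[𝕜] Y₂) = Mᗮ := by
    ext y
    constructor
    · intro hy
      have h0 : g (Submodule.orthogonalProjectionOnto M y) = 0 := hy
      have h1 : ‖(Submodule.orthogonalProjectionOnto M y : M)‖ = 0 := by
        rw [← hgiso, h0, norm_zero]
      have h2 : Submodule.orthogonalProjectionOnto M y = 0 := by
        rwa [norm_eq_zero] at h1
      exact Submodule.orthogonalProjectionOnto_eq_zero_iff.mp h2
    · intro hy
      have h2 : Submodule.orthogonalProjectionOnto M y = 0 := Submodule.orthogonalProjectionOnto_eq_zero_iff.mpr hy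
      show g (Submodule.orthogonalProjectionOnto M y) = 0
      rw [h2, map_zero]
  intro y hy
  rw [hker, Submodule.orthogonal_orthogonal] at hy
  calc ‖R y‖ = ‖g (Submodule.orthogonalProjectionOnto M y)‖ := rfl
    _ = ‖(Submodule.orthogonalProjectionOnto M y : M)‖ := hgiso _
    _ = ‖(⟨y, hy⟩ : M)‖ := by rw [hproj_mem ⟨y, hy⟩]
    _ = ‖y‖ := rfl

theorem adjoint_partial_isometry (Q : Y₁ →L[𝕜] Y₂)
    (hQ : ∀ y ∈ (LinearMap.ker (Q : Y₁ →ₗ[𝕜] Y₂))ᗮ, ‖Q y‖ = ‖y‖) :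
    ∀ z ∈ (LinearMap.ker (ContinuousLinearMap.adjoint Q : Y₂ →ₗ[𝕜] Y₁))ᗮ,
      ‖ContinuousLinearMap.adjoint Q z‖ = ‖z‖ := by
  classical
  set N : Submodule 𝕜 Y₁ := (LinearMap.ker (Q : Y₁ →ₗ[𝕜] Y₂))ᗮ with hN
  haveI : CompleteSpace N := IsClosed.completeSpace_coe (hs := (LinearMap.ker (Q : Y₁ →ₗ[𝕜] Y₂)).isClosed_orthogonal)
  haveI : CompleteSpace (LinearMap.ker (Q : Y₁ →ₗ[𝕜] Y₂)) :=
    IsClosed.completeSpace_coe (hs := ContinuousLinearMap.isClosed_ker Q)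
  set J : N →ₗᵢ[𝕜] Y₂ :=
    ⟨(Q ∘L N.subtypeL).toLinearMap, fun v => hQ (v : Y₁) v.2⟩ with hJ
  have hJapp : ∀ v : N, J v = Q (v : Y₁) := fun v => rfl
  have hinner : ∀ u v : N, ⟪Q (u : Y₁), Q (v : Y₁)⟫ = ⟪(u : Y₁), (v : Y₁)⟫ := by
    intro u v
    have := J.inner_map_map u v
    rwa [hJapp, hJapp] at this
  have hNorth : Nᗮ = LinearMap.ker (Q : Y₁ →ₗ[𝕜] Y₂) := Submodule.orthogonal_orthogonal _
  have hQproj : ∀ y : Y₁, Q y = Q (Submodule.orthogonalProjectionOnto N y) := by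
    intro y
    have h1 : y - Submodule.orthogonalProjectionOnto N y ∈ Nᗮ := Submodule.sub_starProjection_mem_orthogonal (K := N) y
    rw [hNorth, LinearMap.mem_ker] at h1
    have := map_sub Q y (Submodule.orthogonalProjectionOnto N y)
    rw [show Q (y - Submodule.orthogonalProjectionOnto N y) = 0 from h1] at this
    exact (sub_eq_zero.mp this.symm)
  have hQQ : ∀ v : N, ContinuousLinearMap.adjoint Q (Q (v : Y₁)) = (v : Y₁) := by
    intro v
    refine ext_inner_right 𝕜 ?_
    intro z
    rw [adjoint_inner_left]
    rw [hQproj z, hinner]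
    have h2 : z - Submodule.orthogonalProjectionOnto N z ∈ Nᗮ := Submodule.sub_starProjection_mem_orthogonal (K := N) z
    have h3 : ⟪(v : Y₁), z - Submodule.orthogonalProjectionOnto N z⟫ = 0 :=
      Submodule.inner_right_of_mem_orthogonal v.2 h2
    rw [inner_sub_right, sub_eq_zero] at h3
    exact h3.symm
  set Ran : Submodule 𝕜 Y₂ := N.map (Q : Y₁ →ₗ[𝕜] Y₂) with hRan
  have hRanJ : (Ran : Set Y₂) = Set.range J := by
    ext z
    constructor
    · rintro ⟨v, hv, rfl⟩; exact ⟨⟨v, hv⟩, rfl⟩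
    · rintro ⟨v, rfl⟩; exact ⟨(v : Y₁), v.2, rfl⟩
  have hRanClosed : IsClosed (Ran : Set Y₂) := by
    rw [hRanJ]
    exact J.isometry.isClosedEmbedding.isClosed_range
  haveI : CompleteSpace Ran := IsClosed.completeSpace_coe (hs := hRanClosed)
  have hker : LinearMap.ker (ContinuousLinearMap.adjoint Q : Y₂ →ₗ[𝕜] Y₁) = Ranᗮ := by
    ext z
    rw [LinearMap.mem_ker, Submodule.mem_orthogonal]
    constructor
    · rintro hz u ⟨v, hv, rfl⟩
      have : ⟪(v : Y₁), ContinuousLinearMap.adjoint Q z⟫ = ⟪Q v, z⟫ := by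
        rw [adjoint_inner_right]
      rw [show ContinuousLinearMap.adjoint Q z = 0 from hz, inner_zero_right] at this
      exact this.symm
    · intro hz
      refine ext_inner_right 𝕜 ?_
      intro y
      show ⟪ContinuousLinearMap.adjoint Q z, y⟫ = ⟪(0 : Y₁), y⟫
      rw [adjoint_inner_left, inner_zero_left, hQproj y]
      have hmem : Q ((Submodule.orthogonalProjectionOnto N y : N) : Y₁) ∈ Ran :=
        ⟨_, (Submodule.orthogonalProjectionOnto N y).2, rfl⟩
      have := hz _ hmem
      rwa [← inner_eq_zero_symm] at this
  intro z hz
  rw [hker, Submodule.orthogonal_orthogonal] at hz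
  obtain ⟨v, hv, rfl⟩ := hz
  have hcoe : (Q : Y₁ →ₗ[𝕜] Y₂) v = Q ((⟨v, hv⟩ : N) : Y₁) := rfl
  rw [hcoe, hQQ]
  exact (hQ v hv).symm

end Hilbert

section Assembly

variable {𝕜 X Y X' Y' : Type*} [RCLike 𝕜]
  [NormedAddCommGroup X] [InnerProductSpace 𝕜 X] [CompleteSpace X]
  [NormedAddCommGroup Y] [InnerProductSpace 𝕜 Y] [CompleteSpace Y]
  [NormedAddCommGroup X'] [InnerProductSpace 𝕜 X'] [CompleteSpace X']
  [NormedAddCommGroup Y'] [InnerProductSpace 𝕜 Y'] [CompleteSpace Y']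

/-- Main step: `≤_{B,B}` implies `≤_{PO,B}`. -/
theorem le_BB_imp_le_POB (A : X →L[𝕜] Y) (A' : X' →L[𝕜] Y') (T : Y →L[𝕜] Y')
    (S : X' →L[𝕜] X) (hA : A' = T ∘L (A ∘L S)) :
    ∃ (Q : Y →L[𝕜] Y') (S' : X' →L[𝕜] X),
      (∀ y ∈ (LinearMap.ker (Q : Y →ₗ[𝕜] Y'))ᗮ, ‖Q y‖ = ‖y‖) ∧ A' = Q ∘L (A ∘L S') := by
  classical
  set K : X' →L[𝕜] Y := A ∘L S with hK
  obtain ⟨H, hHsa, hH⟩ := exists_selfadjoint_norm_eq (𝕜 := 𝕜) K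
  obtain ⟨L, hLsa, hL⟩ := exists_selfadjoint_norm_eq (𝕜 := 𝕜) A'
  have hbound : ∀ x, ‖L x‖ ≤ ‖T‖ * ‖H x‖ := by
    intro x
    rw [hL, hH]
    have : A' x = T (K x) := by rw [hA]; rfl
    rw [this]
    exact T.le_opNorm (K x)
  obtain ⟨E, hE, -⟩ := exists_factor_of_norm_le H L ‖T‖ hbound
  set D : X' →L[𝕜] X' := ContinuousLinearMap.adjoint E with hD
  have hHD : H ∘L D = L := by
    have h1 := congrArg ContinuousLinearMap.adjoint hE
    rwa [adjoint_comp, hHsa.adjoint_eq, hLsa.adjoint_eq, ← hD] at h1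
  have hKD : ∀ x, ‖(K ∘L D) x‖ = ‖A' x‖ := by
    intro x
    calc ‖(K ∘L D) x‖ = ‖K (D x)‖ := rfl
      _ = ‖H (D x)‖ := (hH (D x)).symm
      _ = ‖(H ∘L D) x‖ := rfl
      _ = ‖L x‖ := by rw [hHD]
      _ = ‖A' x‖ := hL x
  obtain ⟨Q, hQU, hQiso⟩ := exists_factor_of_norm_le (K ∘L D) A' 1
    (fun x => by rw [hKD x, one_mul])
  refine ⟨Q, S ∘L D, hQiso (fun x => (hKD x).symm), ?_⟩
  rw [← hQU, hK, ContinuousLinearMap.comp_assoc]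

end Assembly

open ContinuousLinearMap

/-- Theorem 17 (non-compact case): for bounded operators between Hilbert spaces the orderings
`≤_{B,B}`, `≤_{PO,B}` and `≤_{B,PO}` are equivalent. -/
theorem orderings_equivalent_noncompact
    {𝕜 X Y X' Y' : Type*} [RCLike 𝕜]
    [NormedAddCommGroup X] [InnerProductSpace 𝕜 X] [CompleteSpace X]
    [NormedAddCommGroup Y] [InnerProductSpace 𝕜 Y] [CompleteSpace Y]
    [NormedAddCommGroup X'] [InnerProductSpace 𝕜 X'] [CompleteSpace X']
    [NormedAddCommGroup Y'] [InnerProductSpace 𝕜 Y'] [CompleteSpace Y']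
    (A : X →L[𝕜] Y) (A' : X' →L[𝕜] Y') :
    List.TFAE
      [ (∃ (T : Y →L[𝕜] Y') (S : X' →L[𝕜] X), A' = T ∘L (A ∘L S)),
        (∃ (Q : Y →L[𝕜] Y') (S : X' →L[𝕜] X),
          (∀ y ∈ (LinearMap.ker (Q : Y →ₗ[𝕜] Y'))ᗮ, ‖Q y‖ = ‖y‖) ∧ A' = Q ∘L (A ∘L S)),
        (∃ (T : Y →L[𝕜] Y') (P : X' →L[𝕜] X),
          (∀ x ∈ (LinearMap.ker (P : X' →ₗ[𝕜] X))ᗮ, ‖P x‖ = ‖x‖) ∧ A' = T ∘L (A ∘L P)) ] := by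
  tfae_have 1 → 2 := by
    rintro ⟨T, S, hA⟩
    exact le_BB_imp_le_POB A A' T S hA
  tfae_have 2 → 1 := by
    rintro ⟨Q, S, -, hA⟩
    exact ⟨Q, S, hA⟩
  tfae_have 1 → 3 := by
    rintro ⟨T, S, hA⟩
    have hadj : ContinuousLinearMap.adjoint A'
        = (ContinuousLinearMap.adjoint S) ∘L
          ((ContinuousLinearMap.adjoint A) ∘L (ContinuousLinearMap.adjoint T)) := by
      rw [hA, adjoint_comp, adjoint_comp, ContinuousLinearMap.comp_assoc]
    obtain ⟨Q, S₂, hQ, h2⟩ := le_BB_imp_le_POB (ContinuousLinearMap.adjoint A)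
      (ContinuousLinearMap.adjoint A') (ContinuousLinearMap.adjoint S)
      (ContinuousLinearMap.adjoint T) hadj
    refine ⟨ContinuousLinearMap.adjoint S₂, ContinuousLinearMap.adjoint Q,
      adjoint_partial_isometry Q hQ, ?_⟩
    have h3 := congrArg ContinuousLinearMap.adjoint h2
    rwa [adjoint_adjoint, adjoint_comp, adjoint_comp, adjoint_adjoint,
      ContinuousLinearMap.comp_assoc] at h3
  tfae_have 3 → 1 := by
    rintro ⟨T, P, -, hA⟩
    exact ⟨T, P, hA⟩
  tfae_finish
end

section
/- Let X, Y, X', Y' be Hilbert spaces over ℝ or ℂ and let A : X → Y and A' : X' → Y' be bounded linear operators, and suppose A' = T ∘ A ∘ S for bounded linear operators T : Y → Y' and S : X' → X. (a) If T is injective on the closure of the range of A (i.e., y in the closure of range(A) and T y = 0 imply y = 0), then there exist a bounded linear operator O : Y → Y' with ‖O y‖ = ‖y‖ for every y in the closure of the range of A, and a bounded linear operator S' : X' → X, such that A' = O ∘ A ∘ S'. (b) If the range of S is dense in the orthogonal complement of the kernel of A, then there exist a bounded linear operator T' : Y → Y' and a bounded linear operator U : X' → X with ‖U x‖ = ‖x‖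 for every x in the orthogonal complement of the kernel of A', such that A' = T' ∘ A ∘ U. -/
open ContinuousLinearMap Filter Topology Polynomial

set_option linter.unusedSectionVars false
set_option linter.unusedVariables false

section Sqrt

variable {𝕜 Y : Type*} [RCLike 𝕜]
    [NormedAddCommGroup Y] [InnerProductSpace 𝕜 Y] [CompleteSpace Y]

local notation "⟪" x ", " y "⟫" => @inner 𝕜 _ _ x y

/-- Cauchy–Schwarz type estimate for positive operators. -/
lemma norm_sq_le_of_isPositive {D : Y →L[𝕜] Y} (hD : D.IsPositive) (x : Y) :
    ‖D x‖ ^ 2 ≤ ‖D‖ * RCLike.re ⟪D x, x⟫ := by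
  rcases eq_or_ne D 0 with rfl | hD0
  · simp
  have hDn : (0:ℝ) < ‖D‖ := norm_pos_iff.mpr hD0
  set t : ℝ := ‖D‖⁻¹ with ht
  set y : Y := D x with hy
  have hsa : ContinuousLinearMap.adjoint D = D := hD.isSelfAdjoint.adjoint_eq
  have hxy : RCLike.re ⟪D x, y⟫ = ‖D x‖ ^ 2 := by
    rw [hy, inner_self_eq_norm_sq]
  have hyx : RCLike.re ⟪D y, x⟫ = ‖D x‖ ^ 2 := by
    have : ⟪D y, x⟫ = ⟪y, D x⟫ := by
      conv_lhs => rw [← hsa]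
      rw [adjoint_inner_left]
    rw [this, hy, inner_self_eq_norm_sq]
  have hq : RCLike.re ⟪D y, y⟫ ≤ ‖D‖ * ‖D x‖ ^ 2 := by
    calc RCLike.re ⟪D y, y⟫ ≤ ‖⟪D y, y⟫‖ := RCLike.re_le_norm _
    _ ≤ ‖D y‖ * ‖y‖ := norm_inner_le_norm _ _
    _ ≤ (‖D‖ * ‖y‖) * ‖y‖ := by
        have := D.le_opNorm y
        have h0 : (0:ℝ) ≤ ‖y‖ := norm_nonneg _
        nlinarith
    _ = ‖D‖ * ‖D x‖ ^ 2 := by rw [hy]; ring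
  have h0 : 0 ≤ RCLike.re ⟪D (x - (t:𝕜) • y), x - (t:𝕜) • y⟫ := hD.re_inner_nonneg_left _
  have hexp : RCLike.re ⟪D (x - (t:𝕜) • y), x - (t:𝕜) • y⟫ =
      RCLike.re ⟪D x, x⟫ - 2 * t * ‖D x‖ ^ 2 + t ^ 2 * RCLike.re ⟪D y, y⟫ := by
    rw [map_sub, map_smul]
    rw [inner_sub_left, inner_sub_right, inner_sub_right]
    rw [inner_smul_left, inner_smul_right, inner_smul_left, inner_smul_right]
    simp only [RCLike.conj_ofReal, map_sub, map_add, RCLike.re_ofReal_mul]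
    rw [hxy, hyx]
    ring
  rw [hexp] at h0
  have htN : t * ‖D‖ = 1 := inv_mul_cancel₀ hDn.ne'
  -- abbreviations
  have e1 : t ^ 2 * RCLike.re ⟪D y, y⟫ ≤ t * ‖D x‖ ^ 2 := by
    have h4 : t ^ 2 * (‖D‖ * ‖D x‖ ^ 2) = t * ‖D x‖ ^ 2 := by
      have : t * (t * ‖D‖) = t := by rw [htN, mul_one]
      nlinarith [this]
    nlinarith [mul_le_mul_of_nonneg_left hq (sq_nonneg t)]
  have e2 : t * ‖D x‖ ^ 2 ≤ RCLike.re ⟪D x, x⟫ := by linarith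
  have e3 : ‖D‖ * (t * ‖D x‖ ^ 2) = ‖D x‖ ^ 2 := by
    rw [← mul_assoc, mul_comm ‖D‖ t, htN, one_mul]
  calc ‖D x‖ ^ 2 = ‖D‖ * (t * ‖D x‖ ^ 2) := e3.symm
  _ ≤ ‖D‖ * RCLike.re ⟪D x, x⟫ := mul_le_mul_of_nonneg_left e2 (norm_nonneg D)

lemma opNorm_le_one_of_isPositive {E : Y →L[𝕜] Y} (hE : E.IsPositive)
    (h1 : ∀ x, RCLike.re ⟪E x, x⟫ ≤ ‖x‖ ^ 2) : ‖E‖ ≤ 1 := by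
  have h2 : ∀ x, ‖E x‖ ^ 2 ≤ ‖E‖ * ‖x‖ ^ 2 := fun x =>
    (norm_sq_le_of_isPositive hE x).trans
      (mul_le_mul_of_nonneg_left (h1 x) (norm_nonneg E))
  have h3 : ‖E‖ ≤ Real.sqrt ‖E‖ := by
    apply opNorm_le_bound _ (Real.sqrt_nonneg _)
    intro x
    have : ‖E x‖ = Real.sqrt (‖E x‖ ^ 2) := (Real.sqrt_sq (norm_nonneg _)).symm
    rw [this]
    calc Real.sqrt (‖E x‖ ^ 2) ≤ Real.sqrt (‖E‖ * ‖x‖ ^ 2) := Real.sqrt_le_sqrt (h2 x)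
    _ = Real.sqrt ‖E‖ * ‖x‖ := by
        rw [Real.sqrt_mul (norm_nonneg _), Real.sqrt_sq (norm_nonneg _)]
  nlinarith [Real.sq_sqrt (norm_nonneg E), Real.sqrt_nonneg ‖E‖, norm_nonneg E]

lemma isPositive_pow_clm {E : Y →L[𝕜] Y} (hE : E.IsPositive) (n : ℕ) :
    (E ^ n).IsPositive := by
  have hsa : ∀ k : ℕ, IsSelfAdjoint (E ^ k) := fun k => hE.isSelfAdjoint.pow k
  rcases Nat.even_or_odd n with ⟨k, hk⟩ | ⟨k, hk⟩
  · subst hk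
    have h1 := isPositive_one.conj_adjoint (E ^ k)
    have h2 : (E ^ k) ∘L ((1 : Y →L[𝕜] Y) ∘L ContinuousLinearMap.adjoint (E ^ k)) = E ^ (k + k) := by
      ext x
      simp [(hsa k).adjoint_eq, pow_add, ContinuousLinearMap.mul_apply]
    rwa [show (E ^ k) ∘L ((1 : Y →L[𝕜] Y) ∘L ContinuousLinearMap.adjoint (E ^ k)) =
        (E ^ k) ∘L (1 : Y →L[𝕜] Y) ∘L ContinuousLinearMap.adjoint (E ^ k) from rfl, h2] at h1
  · subst hk
    have h1 := hE.conj_adjoint (E ^ k)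
    have h2 : (E ^ k) ∘L (E ∘L ContinuousLinearMap.adjoint (E ^ k)) = E ^ (2 * k + 1) := by
      have hexp2 : 2 * k + 1 = k + 1 + k := by omega
      ext x
      rw [hexp2]
      simp [(hsa k).adjoint_eq, pow_add, pow_succ, ContinuousLinearMap.mul_apply]
    rwa [show (E ^ k) ∘L (E ∘L ContinuousLinearMap.adjoint (E ^ k)) =
        (E ^ k) ∘L E ∘L ContinuousLinearMap.adjoint (E ^ k) from rfl, h2] at h1

lemma isPositive_sum {ι : Type*} (s : Finset ι) (f : ι → (Y →L[𝕜] Y))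
    (h : ∀ i ∈ s, (f i).IsPositive) : (∑ i ∈ s, f i).IsPositive := by
  classical
  induction s using Finset.cons_induction with
  | empty => simpa using isPositive_zero
  | cons a s ha ih =>
    rw [Finset.sum_cons]
    exact (h a (Finset.mem_cons_self a s)).add (ih fun i hi => h i (Finset.mem_cons.mpr (Or.inr hi)))

lemma isPositive_real_smul_clm {B : Y →L[𝕜] Y} (hB : B.IsPositive) {c : ℝ} (hc : 0 ≤ c) :
    (((c : 𝕜)) • B).IsPositive := by
  constructor
  · have := hB.isSelfAdjoint
    rw [← isSelfAdjoint_iff_isSymmetric]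
    rw [isSelfAdjoint_iff] at this ⊢
    rw [star_smul, RCLike.star_def, RCLike.conj_ofReal, this]
  · intro x
    have : ((c:𝕜) • B).reApplyInnerSelf x = c * RCLike.re ⟪B x, x⟫ := by
      rw [reApplyInnerSelf]
      rw [smul_apply, inner_smul_left, RCLike.conj_ofReal, RCLike.re_ofReal_mul]
    rw [this]
    exact mul_nonneg hc (hB.re_inner_nonneg_left x)

end Sqrt


section Ext

variable {𝕜 Y G H : Type*} [RCLike 𝕜]
    [NormedAddCommGroup Y] [InnerProductSpace 𝕜 Y] [CompleteSpace Y]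
    [NormedAddCommGroup G] [InnerProductSpace 𝕜 G] [CompleteSpace G]
    [NormedAddCommGroup H] [InnerProductSpace 𝕜 H] [CompleteSpace H]

/-- Factor `F` through `C` when `‖F y‖ ≤ c ‖C y‖`, with control on the factor. -/
lemma ext_factor (F : Y →L[𝕜] G) (C : Y →L[𝕜] H) (c : ℝ) (hc : 0 ≤ c)
    (hb : ∀ y, ‖F y‖ ≤ c * ‖C y‖) :
    ∃ D : H →L[𝕜] G, D ∘L C = F ∧
      (∀ z ∈ ((LinearMap.range (C : Y →ₗ[𝕜] H)).topologicalClosure)ᗮ, D z = 0) ∧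
      ((∀ y, ‖F y‖ = ‖C y‖) → ∀ z ∈ closure (Set.range ⇑C), ‖D z‖ = ‖z‖) := by
  classical
  have key : ∀ {y y' : Y}, C y = C y' → F y = F y' := by
    intro y y' h
    have h0 : ‖F y - F y'‖ ≤ c * ‖C y - C y'‖ := by
      simpa [map_sub] using hb (y - y')
    rw [sub_eq_zero.mpr h] at h0
    simp only [norm_zero, mul_zero] at h0
    have := le_antisymm h0 (norm_nonneg _)
    rwa [norm_eq_zero, sub_eq_zero] at this
  set Rng := LinearMap.range (C : Y →ₗ[𝕜] H) with hRng
  have hpickex : ∀ z : Rng, ∃ y, C y = (z : H) := fun z => LinearMap.mem_range.mp z.2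
  set pick : Rng → Y := fun z => (hpickex z).choose with hpickdef
  have hpick : ∀ z : Rng, C (pick z) = (z : H) := fun z => (hpickex z).choose_spec
  let g : Rng →ₗ[𝕜] G :=
    { toFun := fun z => F (pick z)
      map_add' := by
        intro a b
        have h1 : C (pick (a + b)) = C (pick a + pick b) := by
          simp [map_add, hpick]
        simpa [map_add] using key h1
      map_smul' := by
        intro k a
        have h1 : C (pick (k • a)) = C (k • pick a) := by
          simp [map_smul, hpick]
        simpa [map_smul] using key h1 }
  have hg : ∀ z : Rng, ‖g z‖ ≤ c * ‖z‖ := by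
    intro z
    have : ‖F (pick z)‖ ≤ c * ‖C (pick z)‖ := hb _
    rwa [hpick z] at this
  let gC : Rng →L[𝕜] G := g.mkContinuous c hg
  have hgC : ∀ z : Rng, gC z = F (pick z) := fun z => rfl
  set K := Rng.topologicalClosure with hK
  haveI : CompleteSpace K := Rng.isClosed_topologicalClosure.completeSpace_coe
  let eₗ : Rng →ₗ[𝕜] K := Submodule.inclusion Rng.le_topologicalClosure
  let e : Rng →L[𝕜] K := eₗ.mkContinuous 1 (fun z => by rw [one_mul]; rfl)
  have he : ∀ z : Rng, ((e z : K) : H) = (z : H) := fun z => rfl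
  have henorm : ∀ z : Rng, ‖e z‖ = ‖z‖ := fun z => rfl
  have hdr : DenseRange e := by
    intro k
    have hk : (k : H) ∈ closure (Rng : Set H) := by
      rw [← Submodule.topologicalClosure_coe]; exact k.2
    obtain ⟨u, hu, hulim⟩ := mem_closure_iff_seq_limit.mp hk
    have htend : Tendsto (fun n => e ⟨u n, hu n⟩) atTop (𝓝 k) := by
      rw [tendsto_iff_dist_tendsto_zero]
      have : ∀ n, dist (e ⟨u n, hu n⟩) k = dist (u n) (k : H) := by
        intro n; rw [Subtype.dist_eq]; rfl
      simp only [this]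
      exact tendsto_iff_dist_tendsto_zero.mp hulim
    exact mem_closure_of_tendsto htend (Eventually.of_forall fun n => Set.mem_range_self _)
  have hui : IsUniformInducing e :=
    (AddMonoidHomClass.isometry_of_norm e henorm).isUniformInducing
  let D₁ : K →L[𝕜] G := gC.extend e
  let D : H →L[𝕜] G := D₁ ∘L (K.orthogonalProjectionOnto : H →L[𝕜] K)
  have hDC : ∀ y : Y, D (C y) = F y := by
    intro y
    have hmem : C y ∈ Rng := LinearMap.mem_range_self (C : Y →ₗ[𝕜] H) y
    have hmemK : C y ∈ K := Rng.le_topologicalClosure hmem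
    have hproj : K.orthogonalProjectionOnto (C y) = ⟨C y, hmemK⟩ :=
      Submodule.orthogonalProjectionOnto_mem_subspace_eq_self (⟨C y, hmemK⟩ : K)
    have he2 : e ⟨C y, hmem⟩ = ⟨C y, hmemK⟩ := rfl
    have : D (C y) = D₁ (e ⟨C y, hmem⟩) := by
      simp only [D, comp_apply, hproj, he2]
    rw [this, ContinuousLinearMap.extend_eq (h_dense := hdr) (h_e := hui)]
    rw [hgC]
    exact key (by rw [hpick])
  refine ⟨D, by ext y; exact hDC y, ?_, ?_⟩
  · intro z hz
    have : K.orthogonalProjectionOnto z = 0 :=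
      Submodule.orthogonalProjectionOnto_apply_of_mem_orthogonal hz
    simp only [D, comp_apply, this, map_zero]
  · intro heq z hz
    have hEq : Set.EqOn (fun z => ‖D z‖) (fun z => ‖z‖) (Set.range ⇑C) := by
      rintro _ ⟨y, rfl⟩
      simp only
      rw [hDC y, heq y]
    have hcl := hEq.closure (by fun_prop) (by fun_prop)
    exact hcl hz

end Ext


/-- The Riesz–Nagy iteration polynomials approximating `1 - √(1-s)` at `s = X`. -/
noncomputable def sqrtSeq : ℕ → Polynomial ℝ
  | 0 => 0
  | n + 1 => Polynomial.C (1/2 : ℝ) * (Polynomial.X + sqrtSeq n * sqrtSeq n)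

lemma coeff_mul_nonneg {p q : Polynomial ℝ} (hp : ∀ i, 0 ≤ p.coeff i)
    (hq : ∀ i, 0 ≤ q.coeff i) : ∀ i, 0 ≤ (p * q).coeff i := by
  intro i
  rw [Polynomial.coeff_mul]
  exact Finset.sum_nonneg fun x _ => mul_nonneg (hp _) (hq _)

lemma sqrtSeq_coeff_nonneg : ∀ n i, 0 ≤ (sqrtSeq n).coeff i := by
  intro n
  induction n with
  | zero => intro i; simp [sqrtSeq]
  | succ n ih =>
    intro i
    rw [sqrtSeq, Polynomial.coeff_C_mul]
    have h1 : ∀ j, 0 ≤ (Polynomial.X + sqrtSeq n * sqrtSeq n).coeff j := by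
      intro j
      rw [Polynomial.coeff_add, Polynomial.coeff_X]
      have := coeff_mul_nonneg ih ih j
      split_ifs <;> linarith
    have := h1 i
    linarith

lemma sqrtSeq_eval_one : ∀ n, 0 ≤ (sqrtSeq n).eval 1 ∧ (sqrtSeq n).eval 1 ≤ 1 := by
  intro n
  induction n with
  | zero => simp [sqrtSeq]
  | succ n ih =>
    rw [sqrtSeq]
    simp only [Polynomial.eval_mul, Polynomial.eval_C, Polynomial.eval_add, Polynomial.eval_X]
    constructor
    · nlinarith [ih.1, ih.2]
    · nlinarith [ih.1, ih.2]

lemma sqrtSeq_diff_coeff_nonneg : ∀ n i, 0 ≤ (sqrtSeq (n+1) - sqrtSeq n).coeff i := by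
  intro n
  induction n with
  | zero =>
    intro i
    have h : sqrtSeq 1 - sqrtSeq 0 = Polynomial.C (1/2 : ℝ) * Polynomial.X := by
      show Polynomial.C (1/2 : ℝ) * (Polynomial.X + sqrtSeq 0 * sqrtSeq 0) - sqrtSeq 0 = _
      show Polynomial.C (1/2 : ℝ) * (Polynomial.X + 0 * 0) - 0 = _
      ring
    rw [h, Polynomial.coeff_C_mul, Polynomial.coeff_X]
    split_ifs <;> norm_num
  | succ n ih =>
    intro i
    have h : sqrtSeq (n+2) - sqrtSeq (n+1) =
        Polynomial.C (1/2 : ℝ) * ((sqrtSeq (n+1) + sqrtSeq n) * (sqrtSeq (n+1) - sqrtSeq n)) := by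
      show Polynomial.C (1/2 : ℝ) * (Polynomial.X + sqrtSeq (n+1) * sqrtSeq (n+1)) -
          Polynomial.C (1/2 : ℝ) * (Polynomial.X + sqrtSeq n * sqrtSeq n) = _
      ring
    rw [h, Polynomial.coeff_C_mul]
    have h2 := coeff_mul_nonneg (p := sqrtSeq (n+1) + sqrtSeq n)
      (q := sqrtSeq (n+1) - sqrtSeq n)
      (fun j => by rw [Polynomial.coeff_add]
                   exact add_nonneg (sqrtSeq_coeff_nonneg _ j) (sqrtSeq_coeff_nonneg _ j))
      ih i
    linarith

lemma sqrtSeq_sub_coeff_nonneg {n m : ℕ} (h : n ≤ m) :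
    ∀ i, 0 ≤ (sqrtSeq m - sqrtSeq n).coeff i := by
  induction m, h using Nat.le_induction with
  | base => intro i; simp
  | succ m hm ih =>
    intro i
    have : sqrtSeq (m+1) - sqrtSeq n = (sqrtSeq (m+1) - sqrtSeq m) + (sqrtSeq m - sqrtSeq n) := by
      ring
    rw [this, Polynomial.coeff_add]
    exact add_nonneg (sqrtSeq_diff_coeff_nonneg m i) (ih i)

section SqrtExists

variable {𝕜 Y : Type*} [RCLike 𝕜]
    [NormedAddCommGroup Y] [InnerProductSpace 𝕜 Y] [CompleteSpace Y]

local notation "⟪" x ", " y "⟫" => @inner 𝕜 _ _ x y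

set_option maxHeartbeats 1000000 in
/-- Every positive operator on a Hilbert space over `RCLike 𝕜` has a selfadjoint square root. -/
lemma exists_selfAdjoint_sq {P : Y →L[𝕜] Y} (hP : P.IsPositive) :
    ∃ R : Y →L[𝕜] Y, IsSelfAdjoint R ∧ R ∘L R = P := by
  rcases eq_or_ne P 0 with rfl | hP0
  · exact ⟨0, by simp [IsSelfAdjoint], by ext x; simp⟩
  have hN : (0:ℝ) < ‖P‖ := norm_pos_iff.mpr hP0
  set P₁ : Y →L[𝕜] Y := ((‖P‖⁻¹ : ℝ) : 𝕜) • P with hP₁def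
  have hP₁pos : P₁.IsPositive := isPositive_real_smul_clm hP (inv_nonneg.mpr hN.le)
  have hP₁le : ∀ x, RCLike.re ⟪P₁ x, x⟫ ≤ ‖x‖ ^ 2 := by
    intro x
    have h1 : RCLike.re ⟪P₁ x, x⟫ = ‖P‖⁻¹ * RCLike.re ⟪P x, x⟫ := by
      rw [hP₁def, smul_apply, inner_smul_left, RCLike.conj_ofReal, RCLike.re_ofReal_mul]
    have h2 : RCLike.re ⟪P x, x⟫ ≤ ‖P‖ * ‖x‖ ^ 2 := by
      calc RCLike.re ⟪P x, x⟫ ≤ ‖⟪P x, x⟫‖ := RCLike.re_le_norm _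
      _ ≤ ‖P x‖ * ‖x‖ := norm_inner_le_norm _ _
      _ ≤ ‖P‖ * ‖x‖ ^ 2 := by nlinarith [P.le_opNorm x, norm_nonneg x, norm_nonneg (P x)]
    rw [h1]
    rw [inv_mul_le_iff₀ hN]
    nlinarith [h2, hN]
  set E : Y →L[𝕜] Y := 1 - P₁ with hEdef
  have hEpos : E.IsPositive := by
    constructor
    · exact isSelfAdjoint_iff_isSymmetric.mp ((IsSelfAdjoint.one _).sub hP₁pos.isSelfAdjoint)
    · intro x
      have : E.reApplyInnerSelf x = ‖x‖ ^ 2 - RCLike.re ⟪P₁ x, x⟫ := by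
        rw [reApplyInnerSelf, hEdef, sub_apply, ContinuousLinearMap.one_apply, inner_sub_left, map_sub,
          inner_self_eq_norm_sq]
      rw [this]
      have := hP₁le x
      linarith
  have hE1 : ∀ x, RCLike.re ⟪E x, x⟫ ≤ ‖x‖ ^ 2 := by
    intro x
    have h1 : RCLike.re ⟪E x, x⟫ = ‖x‖ ^ 2 - RCLike.re ⟪P₁ x, x⟫ := by
      rw [hEdef, sub_apply, ContinuousLinearMap.one_apply, inner_sub_left, map_sub, inner_self_eq_norm_sq]
    rw [h1]
    have := hP₁pos.re_inner_nonneg_left x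
    linarith
  have hEnorm : ‖E‖ ≤ 1 := opNorm_le_one_of_isPositive hEpos hE1
  -- polynomial evaluation
  set φ : ℝ →+* (Y →L[𝕜] Y) := (algebraMap 𝕜 (Y →L[𝕜] Y)).comp (algebraMap ℝ 𝕜) with hφdef
  have hφ : ∀ (c : ℝ) (B : Y →L[𝕜] Y), φ c * B = ((c : 𝕜)) • B := by
    intro c B
    show algebraMap 𝕜 (Y →L[𝕜] Y) ((c:ℝ) : 𝕜) * B = ((c:𝕜)) • B
    rw [Algebra.algebraMap_eq_smul_one, smul_mul_assoc, one_mul]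
  have hφcomm : ∀ (c : ℝ) (B : Y →L[𝕜] Y), Commute (φ c) B := by
    intro c B
    show φ c * B = B * φ c
    exact (Algebra.commutes ((c:ℝ) : 𝕜) B)
  set ev : Polynomial ℝ → (Y →L[𝕜] Y) := fun p => p.eval₂ φ E with hevdef
  have hev_pos : ∀ p : Polynomial ℝ, (∀ i, 0 ≤ p.coeff i) → (ev p).IsPositive := by
    intro p hp
    simp only [hevdef]
    rw [Polynomial.eval₂_eq_sum_range]
    apply _root_.isPositive_sum
    intro i _
    rw [hφ]
    exact isPositive_real_smul_clm (isPositive_pow_clm hEpos i) (hp i)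
  have hEn : ∀ i : ℕ, ‖(E:Y →L[𝕜] Y) ^ i‖ ≤ 1 := by
    intro i
    cases i with
    | zero => simpa [ContinuousLinearMap.one_def] using ContinuousLinearMap.norm_id_le (E := Y)
    | succ i =>
      calc ‖E ^ (i+1)‖ ≤ ‖E‖ ^ (i+1) := norm_pow_le' E i.succ_pos
      _ ≤ 1 := pow_le_one₀ (norm_nonneg E) hEnorm
  have hev_norm : ∀ p : Polynomial ℝ, (∀ i, 0 ≤ p.coeff i) → ‖ev p‖ ≤ p.eval 1 := by
    intro p hp
    simp only [hevdef]
    rw [Polynomial.eval₂_eq_sum_range]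
    have h1 : (∑ i ∈ Finset.range (p.natDegree + 1), ‖φ (p.coeff i) * E ^ i‖)
        ≤ ∑ i ∈ Finset.range (p.natDegree + 1), p.coeff i := by
      apply Finset.sum_le_sum
      intro i _
      rw [hφ]
      have hn1 : ‖((p.coeff i : ℝ) : 𝕜)‖ = p.coeff i := by
        rw [RCLike.norm_ofReal, abs_of_nonneg (hp i)]
      calc ‖((p.coeff i : ℝ) : 𝕜) • E ^ i‖ ≤ ‖((p.coeff i : ℝ) : 𝕜)‖ * ‖E ^ i‖ :=
            ContinuousLinearMap.opNorm_smul_le _ _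
      _ = p.coeff i * ‖E ^ i‖ := by rw [hn1]
      _ ≤ p.coeff i * 1 := mul_le_mul_of_nonneg_left (hEn i) (hp i)
      _ = p.coeff i := mul_one _
    have h2 : p.eval 1 = ∑ i ∈ Finset.range (p.natDegree + 1), p.coeff i := by
      rw [Polynomial.eval_eq_sum_range]
      simp
    rw [h2]
    exact (norm_sum_le _ _).trans h1
  set F : ℕ → Y →L[𝕜] Y := fun n => ev (sqrtSeq n) with hFdef
  have hFpos : ∀ n, (F n).IsPositive := fun n => hev_pos _ (sqrtSeq_coeff_nonneg n)
  have hFnorm : ∀ n, ‖F n‖ ≤ 1 := fun n =>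
    (hev_norm _ (sqrtSeq_coeff_nonneg n)).trans (sqrtSeq_eval_one n).2
  have hev_sub : ∀ p q : Polynomial ℝ, ev (p - q) = ev p - ev q := by
    intro p q
    simp only [hevdef]
    rw [Polynomial.eval₂_sub]
  have hdiffpos : ∀ m n, n ≤ m → (F m - F n).IsPositive := by
    intro m n h
    have h1 : F m - F n = ev (sqrtSeq m - sqrtSeq n) := by
      rw [hev_sub]
    rw [h1]
    exact hev_pos _ (sqrtSeq_sub_coeff_nonneg h)
  -- pointwise convergence
  have hmonx : ∀ x, Monotone (fun n => RCLike.re ⟪F n x, x⟫) := by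
    intro x n m h
    have := (hdiffpos m n h).re_inner_nonneg_left x
    have hexp : RCLike.re ⟪(F m - F n) x, x⟫
        = RCLike.re ⟪F m x, x⟫ - RCLike.re ⟪F n x, x⟫ := by
      rw [sub_apply, inner_sub_left, map_sub]
    rw [hexp] at this
    simpa using this
  have hbddx : ∀ x n, RCLike.re ⟪F n x, x⟫ ≤ ‖x‖ ^ 2 := by
    intro x n
    calc RCLike.re ⟪F n x, x⟫ ≤ ‖⟪F n x, x⟫‖ := RCLike.re_le_norm _
    _ ≤ ‖F n x‖ * ‖x‖ := norm_inner_le_norm _ _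
    _ ≤ ‖x‖ ^ 2 := by
        have h1 : ‖F n x‖ ≤ ‖F n‖ * ‖x‖ := (F n).le_opNorm x
        have h2 := hFnorm n
        nlinarith [norm_nonneg x, norm_nonneg (F n x)]
  have hconv : ∀ x : Y, ∃ lx : Y, Tendsto (fun n => F n x) atTop (𝓝 lx) := by
    intro x
    apply cauchySeq_tendsto_of_complete
    have hA : CauchySeq (fun n => RCLike.re ⟪F n x, x⟫) := by
      apply Filter.Tendsto.cauchySeq (x := ⨆ n, RCLike.re ⟪F n x, x⟫)
      exact tendsto_atTop_ciSup (hmonx x)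
        ⟨‖x‖ ^ 2, by rintro _ ⟨n, rfl⟩; exact hbddx x n⟩
    rw [Metric.cauchySeq_iff']
    intro ε hε
    obtain ⟨N, hN⟩ := Metric.cauchySeq_iff'.mp hA (ε ^ 2 / 2) (by positivity)
    refine ⟨N, fun n hn => ?_⟩
    have hpos := hdiffpos n N hn
    have h1 := norm_sq_le_of_isPositive hpos x
    have h2 : ‖F n - F N‖ ≤ 2 := by
      calc ‖F n - F N‖ ≤ ‖F n‖ + ‖F N‖ := norm_sub_le _ _
      _ ≤ 2 := by linarith [hFnorm n, hFnorm N]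
    have h3 : RCLike.re ⟪(F n - F N) x, x⟫
        = RCLike.re ⟪F n x, x⟫ - RCLike.re ⟪F N x, x⟫ := by
      rw [sub_apply, inner_sub_left, map_sub]
    have h4 := hN n hn
    rw [Real.dist_eq] at h4
    have h5 : RCLike.re ⟪F n x, x⟫ - RCLike.re ⟪F N x, x⟫ < ε ^ 2 / 2 :=
      (le_abs_self _).trans_lt h4
    have h6 : 0 ≤ RCLike.re ⟪(F n - F N) x, x⟫ := hpos.re_inner_nonneg_left x
    have h7 : ‖(F n - F N) x‖ ^ 2 < ε ^ 2 := by
      calc ‖(F n - F N) x‖ ^ 2 ≤ ‖F n - F N‖ * RCLike.re ⟪(F n - F N) x, x⟫ := h1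
      _ ≤ 2 * RCLike.re ⟪(F n - F N) x, x⟫ := mul_le_mul_of_nonneg_right h2 h6
      _ < 2 * (ε ^ 2 / 2) := by rw [h3]; linarith
      _ = ε ^ 2 := by ring
    have h8 : ‖(F n - F N) x‖ < ε := by
      by_contra hcon
      push_neg at hcon
      nlinarith [norm_nonneg ((F n - F N) x)]
    rw [dist_eq_norm]
    simpa [sub_apply] using h8
  choose lim hlim using hconv
  have hlimnorm : ∀ x, ‖lim x‖ ≤ 1 * ‖x‖ := by
    intro x
    apply le_of_tendsto (hlim x).norm
    filter_upwards with n
    calc ‖F n x‖ ≤ ‖F n‖ * ‖x‖ := (F n).le_opNorm x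
    _ ≤ 1 * ‖x‖ := mul_le_mul_of_nonneg_right (hFnorm n) (norm_nonneg x)
  set L : Y →L[𝕜] Y := LinearMap.mkContinuous
    { toFun := lim
      map_add' := fun a b => tendsto_nhds_unique (hlim (a + b))
        (by simpa only [map_add] using (hlim a).add (hlim b))
      map_smul' := fun k a => tendsto_nhds_unique (hlim (k • a))
        (by simpa only [map_smul, RingHom.id_apply] using (hlim a).const_smul k) }
    1 hlimnorm with hLdef
  have hL : ∀ x, Tendsto (fun n => F n x) atTop (𝓝 (L x)) := hlim
  have hLsa : IsSelfAdjoint L := by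
    rw [isSelfAdjoint_iff_isSymmetric]
    intro x y
    have h₁ : Tendsto (fun n => ⟪F n x, y⟫) atTop (𝓝 ⟪L x, y⟫) :=
      (hL x).inner tendsto_const_nhds
    have h₂ : Tendsto (fun n => ⟪x, F n y⟫) atTop (𝓝 ⟪x, L y⟫) :=
      tendsto_const_nhds.inner (hL y)
    have he : ∀ n, ⟪F n x, y⟫ = ⟪x, F n y⟫ := fun n =>
      (isSelfAdjoint_iff_isSymmetric.mp (hFpos n).isSelfAdjoint) x y
    simp only [he] at h₁
    exact tendsto_nhds_unique h₁ h₂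
  have hLL : ∀ x, L (L x) = (2:𝕜) • L x - E x := by
    intro x
    have hrecpt : ∀ n, F (n+1) x = (2⁻¹ : 𝕜) • (E x + F n (F n x)) := by
      intro n
      have hop : F (n+1) = φ (1/2 : ℝ) * (E + F n * F n) := by
        simp only [hFdef]
        rw [show sqrtSeq (n+1) = Polynomial.C (1/2:ℝ) * (Polynomial.X + sqrtSeq n * sqrtSeq n)
          from rfl]
        simp only [hevdef]
        rw [Polynomial.eval₂_mul_noncomm _ _ (fun k => hφcomm _ _), Polynomial.eval₂_C,
          Polynomial.eval₂_add, Polynomial.eval₂_X,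
          Polynomial.eval₂_mul_noncomm _ _ (fun k => hφcomm _ _)]
      have hhalf : ((1/2 : ℝ) : 𝕜) = (2⁻¹ : 𝕜) := by
        push_cast
        norm_num
      rw [hop, hφ, hhalf]
      simp only [smul_apply, add_apply, ContinuousLinearMap.mul_apply]
    have t1 : Tendsto (fun n => F (n+1) x) atTop (𝓝 (L x)) :=
      (hL x).comp (tendsto_add_atTop_nat 1)
    have t2 : Tendsto (fun n => F n (F n x)) atTop (𝓝 (L (L x))) := by
      rw [tendsto_iff_norm_sub_tendsto_zero]
      have hb : ∀ n, ‖F n (F n x) - L (L x)‖ ≤ ‖F n x - L x‖ + ‖F n (L x) - L (L x)‖ := by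
        intro n
        calc ‖F n (F n x) - L (L x)‖
            ≤ ‖F n (F n x) - F n (L x)‖ + ‖F n (L x) - L (L x)‖ := by
              have := norm_sub_le_norm_sub_add_norm_sub (F n (F n x)) (F n (L x)) (L (L x))
              linarith
        _ ≤ ‖F n x - L x‖ + ‖F n (L x) - L (L x)‖ := by
              have h1 : ‖F n (F n x) - F n (L x)‖ = ‖F n (F n x - L x)‖ := by rw [map_sub]
              have h2 : ‖F n (F n x - L x)‖ ≤ ‖F n‖ * ‖F n x - L x‖ := (F n).le_opNorm _
              have h3 : ‖F n‖ * ‖F n x - L x‖ ≤ 1 * ‖F n x - L x‖ :=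
                mul_le_mul_of_nonneg_right (hFnorm n) (norm_nonneg _)
              rw [h1]
              linarith
      have hz1 : Tendsto (fun n => ‖F n x - L x‖) atTop (𝓝 0) := by
        rw [← tendsto_iff_norm_sub_tendsto_zero]
        exact hL x
      have hz2 : Tendsto (fun n => ‖F n (L x) - L (L x)‖) atTop (𝓝 0) := by
        rw [← tendsto_iff_norm_sub_tendsto_zero]
        exact hL (L x)
      apply squeeze_zero (fun n => norm_nonneg _) hb
      simpa using hz1.add hz2
    have t3 : Tendsto (fun n => (2⁻¹:𝕜) • (E x + F n (F n x))) atTop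
        (𝓝 ((2⁻¹:𝕜) • (E x + L (L x)))) := ((tendsto_const_nhds.add t2)).const_smul _
    have hid : L x = (2⁻¹:𝕜) • (E x + L (L x)) := by
      apply tendsto_nhds_unique _ t3
      have : (fun n => F (n+1) x) = fun n => (2⁻¹:𝕜) • (E x + F n (F n x)) := funext hrecpt
      rw [← this]
      exact t1
    have h2L : (2:𝕜) • L x = E x + L (L x) := by
      conv_lhs => rw [hid]
      rw [smul_smul]
      norm_num
    rw [h2L]
    abel
  refine ⟨((Real.sqrt ‖P‖ : ℝ) : 𝕜) • (1 - L), ?_, ?_⟩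
  · apply IsSelfAdjoint.smul
    · rw [isSelfAdjoint_iff, RCLike.star_def, RCLike.conj_ofReal]
    · exact (IsSelfAdjoint.one _).sub hLsa
  · have hR₁ : (1 - L) ∘L (1 - L) = P₁ := by
      ext x
      have h1 : ((1 - L) ∘L (1 - L)) x = (x - L x) - (L x - L (L x)) := by
        simp only [comp_apply, sub_apply, ContinuousLinearMap.one_apply, map_sub]
      rw [h1, hLL x]
      have hEx : E x = x - P₁ x := by rw [hEdef]; simp [sub_apply]
      rw [hEx]
      have : (2:𝕜) • L x = L x + L x := two_smul _ _
      rw [this]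
      abel
    rw [ContinuousLinearMap.smul_comp, ContinuousLinearMap.comp_smul, hR₁, smul_smul,
      ← RCLike.ofReal_mul, Real.mul_self_sqrt hN.le, hP₁def, smul_smul, ← RCLike.ofReal_mul,
      mul_inv_cancel₀ hN.ne', RCLike.ofReal_one, one_smul]

end SqrtExists

section Main

variable {𝕜 : Type*} [RCLike 𝕜]

local notation "⟪" x ", " y "⟫" => @inner 𝕜 _ _ x y

/-- Norms agree for a selfadjoint `R` whose square is `B† B`. -/
lemma norm_eq_of_sq {Y H : Type*}
    [NormedAddCommGroup Y] [InnerProductSpace 𝕜 Y] [CompleteSpace Y]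
    [NormedAddCommGroup H] [InnerProductSpace 𝕜 H] [CompleteSpace H]
    {R : Y →L[𝕜] Y} (hRsa : IsSelfAdjoint R) (B : Y →L[𝕜] H)
    (h : R ∘L R = (ContinuousLinearMap.adjoint B) ∘L B) : ∀ y, ‖R y‖ = ‖B y‖ := by
  intro y
  have h1 : ⟪R y, R y⟫ = ⟪B y, B y⟫ := by
    have hswap := ContinuousLinearMap.adjoint_inner_left R (R y) y
    rw [hRsa.adjoint_eq] at hswap
    calc ⟪R y, R y⟫ = ⟪y, R (R y)⟫ := hswap
    _ = ⟪y, (R ∘L R) y⟫ := rfl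
    _ = ⟪y, (ContinuousLinearMap.adjoint B) (B y)⟫ := by rw [h]; rfl
    _ = ⟪B y, B y⟫ := by rw [ContinuousLinearMap.adjoint_inner_right]
  have h2 : ‖R y‖ ^ 2 = ‖B y‖ ^ 2 := by
    rw [← inner_self_eq_norm_sq (𝕜 := 𝕜), ← inner_self_eq_norm_sq (𝕜 := 𝕜), h1]
  calc ‖R y‖ = Real.sqrt (‖R y‖ ^ 2) := (Real.sqrt_sq (norm_nonneg _)).symm
  _ = Real.sqrt (‖B y‖ ^ 2) := by rw [h2]
  _ = ‖B y‖ := Real.sqrt_sq (norm_nonneg _)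

/-- The key construction: refine the left factor to a partial isometry with initial
space the closure of the range of `A`. -/
lemma key_construction {X Y X' Y' : Type*}
    [NormedAddCommGroup X] [InnerProductSpace 𝕜 X] [CompleteSpace X]
    [NormedAddCommGroup Y] [InnerProductSpace 𝕜 Y] [CompleteSpace Y]
    [NormedAddCommGroup X'] [InnerProductSpace 𝕜 X'] [CompleteSpace X']
    [NormedAddCommGroup Y'] [InnerProductSpace 𝕜 Y'] [CompleteSpace Y']
    (A : X →L[𝕜] Y) (A' : X' →L[𝕜] Y')
    (T : Y →L[𝕜] Y') (S : X' →L[𝕜] X) (hfac : A' = T ∘L (A ∘L S))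
    (hinj : ∀ y ∈ closure (Set.range ⇑A), T y = 0 → y = 0) :
    ∃ (O : Y →L[𝕜] Y') (S' : X' →L[𝕜] X),
      (∀ y ∈ closure (Set.range ⇑A), ‖O y‖ = ‖y‖) ∧
      (∀ z ∈ ((LinearMap.range (A : X →ₗ[𝕜] Y)).topologicalClosure)ᗮ, O z = 0) ∧
      A' = O ∘L (A ∘L S') := by
  have hMset : (((LinearMap.range (A : X →ₗ[𝕜] Y)).topologicalClosure : Submodule 𝕜 Y) : Set Y)
      = closure (Set.range ⇑A) := by
    rw [Submodule.topologicalClosure_coe, LinearMap.coe_range, ContinuousLinearMap.coe_coe]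
  -- square root R of A A†
  have hPpos : (A ∘L ContinuousLinearMap.adjoint A).IsPositive := by
    have h := (isPositive_one (E := X)).conj_adjoint A
    have h2 : A ∘L (1 : X →L[𝕜] X) ∘L ContinuousLinearMap.adjoint A
        = A ∘L ContinuousLinearMap.adjoint A := by
      ext x; simp
    rwa [h2] at h
  obtain ⟨R, hRsa, hRR⟩ := exists_selfAdjoint_sq hPpos
  have hRnorm : ∀ y, ‖R y‖ = ‖ContinuousLinearMap.adjoint A y‖ := by
    apply norm_eq_of_sq hRsa
    rw [hRR, ContinuousLinearMap.adjoint_adjoint]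
  -- Z = T R and its square root Q
  set Z : Y →L[𝕜] Y' := T ∘L R with hZdef
  have hZpos : ((ContinuousLinearMap.adjoint Z) ∘L Z).IsPositive := by
    have h := (isPositive_one (E := Y')).adjoint_conj Z
    have h2 : ContinuousLinearMap.adjoint Z ∘L (1 : Y' →L[𝕜] Y') ∘L Z
        = ContinuousLinearMap.adjoint Z ∘L Z := by
      ext x; simp
    rwa [h2] at h
  obtain ⟨Q, hQsa, hQQ⟩ := exists_selfAdjoint_sq hZpos
  have hQnorm : ∀ y, ‖Q y‖ = ‖Z y‖ := norm_eq_of_sq hQsa Z hQQ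
  -- kernel facts
  have hAdj0 : ∀ z : Y, (∀ u, ⟪z, A u⟫ = 0) → ContinuousLinearMap.adjoint A z = 0 := by
    intro z hz
    apply ext_inner_right 𝕜
    intro u
    rw [ContinuousLinearMap.adjoint_inner_left, inner_zero_left]
    exact hz u
  have hR0 : ∀ z : Y, ContinuousLinearMap.adjoint A z = 0 → R z = 0 := by
    intro z hz
    have := hRnorm z
    rw [hz, norm_zero, norm_eq_zero] at this
    exact this
  have hQ0 : ∀ z : Y, ContinuousLinearMap.adjoint A z = 0 → Q z = 0 := by
    intro z hz
    have h1 : Z z = 0 := by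
      rw [hZdef]
      simp only [ContinuousLinearMap.comp_apply]
      rw [hR0 z hz, map_zero]
    have := hQnorm z
    rw [h1, norm_zero, norm_eq_zero] at this
    exact this
  -- range orthogonality comparison
  have hoQA : ((LinearMap.range (A : X →ₗ[𝕜] Y))ᗮ : Submodule 𝕜 Y) ≤ (LinearMap.range (Q : Y →ₗ[𝕜] Y))ᗮ := by
    intro z hz
    have hz' : ∀ u, ⟪z, A u⟫ = 0 := fun u =>
      (Submodule.mem_orthogonal' _ _).mp hz (A u) (LinearMap.mem_range_self _ u)
    have hQz : Q z = 0 := hQ0 z (hAdj0 z hz')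
    rw [Submodule.mem_orthogonal]
    rintro _ ⟨v, rfl⟩
    have hswap := ContinuousLinearMap.adjoint_inner_left Q z v
    rw [hQsa.adjoint_eq] at hswap
    calc ⟪Q v, z⟫ = ⟪v, Q z⟫ := hswap
    _ = 0 := by rw [hQz, inner_zero_right]
  have hRmem : ∀ w, R w ∈ (LinearMap.range (A : X →ₗ[𝕜] Y)).topologicalClosure := by
    intro w
    rw [← Submodule.orthogonal_orthogonal_eq_closure]
    rw [Submodule.mem_orthogonal]
    intro v hv
    have hv' : ∀ u, ⟪v, A u⟫ = 0 := fun u =>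
      (Submodule.mem_orthogonal' _ _).mp hv (A u) (LinearMap.mem_range_self _ u)
    have hRv : R v = 0 := hR0 v (hAdj0 v hv')
    have hswap := ContinuousLinearMap.adjoint_inner_right R v w
    rw [hRsa.adjoint_eq] at hswap
    calc ⟪v, R w⟫ = ⟪R v, w⟫ := hswap
    _ = 0 := by rw [hRv, inner_zero_left]
  have hoAQ : ((LinearMap.range (Q : Y →ₗ[𝕜] Y))ᗮ : Submodule 𝕜 Y) ≤ (LinearMap.range (A : X →ₗ[𝕜] Y))ᗮ := by
    intro z hz
    have hQz : Q z = 0 := by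
      have h1 : ⟪Q (Q z), z⟫ = 0 :=
        (Submodule.mem_orthogonal _ _).mp hz (Q (Q z)) (LinearMap.mem_range_self _ _)
      have hswap := ContinuousLinearMap.adjoint_inner_left Q z (Q z)
      rw [hQsa.adjoint_eq] at hswap
      rw [hswap] at h1
      exact inner_self_eq_zero.mp h1
    have hZz : Z z = 0 := by
      have := hQnorm z
      rw [hQz, norm_zero] at this
      exact norm_eq_zero.mp this.symm
    have hRz : R z = 0 := by
      apply hinj (R z)
      · rw [← hMset]
        exact hRmem z
      · have : T (R z) = Z z := rfl
        rw [this, hZz]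
    have hAz : ContinuousLinearMap.adjoint A z = 0 := by
      have := hRnorm z
      rw [hRz, norm_zero] at this
      exact norm_eq_zero.mp this.symm
    rw [Submodule.mem_orthogonal]
    rintro _ ⟨v, rfl⟩
    calc ⟪A v, z⟫ = ⟪v, ContinuousLinearMap.adjoint A z⟫ :=
          (ContinuousLinearMap.adjoint_inner_right A v z).symm
    _ = 0 := by rw [hAz, inner_zero_right]
  have hMeq : (LinearMap.range (A : X →ₗ[𝕜] Y)).topologicalClosure = (LinearMap.range (Q : Y →ₗ[𝕜] Y)).topologicalClosure := by
    rw [← Submodule.orthogonal_orthogonal_eq_closure, ← Submodule.orthogonal_orthogonal_eq_closure]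
    rw [le_antisymm hoQA hoAQ]
  have hMsetQ : closure (Set.range ⇑A) = closure (Set.range ⇑Q) := by
    rw [← hMset, hMeq, Submodule.topologicalClosure_coe, LinearMap.coe_range, ContinuousLinearMap.coe_coe]
  -- factorizations
  obtain ⟨D₁, hD₁, -, -⟩ := ext_factor (ContinuousLinearMap.adjoint A) R 1 zero_le_one
    (fun y => by rw [one_mul, hRnorm y])
  set W : X →L[𝕜] Y := ContinuousLinearMap.adjoint D₁ with hWdef
  have hW : R ∘L W = A := by
    have := congrArg ContinuousLinearMap.adjoint hD₁
    rwa [ContinuousLinearMap.adjoint_comp, hRsa.adjoint_eq,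
      ContinuousLinearMap.adjoint_adjoint] at this
  obtain ⟨D₂, hD₂, -, -⟩ := ext_factor Q (ContinuousLinearMap.adjoint A) ‖T‖ (norm_nonneg T)
    (fun y => by
      rw [hQnorm y, ← hRnorm y]
      calc ‖Z y‖ = ‖T (R y)‖ := rfl
      _ ≤ ‖T‖ * ‖R y‖ := T.le_opNorm _)
  set CC : Y →L[𝕜] X := ContinuousLinearMap.adjoint D₂ with hCCdef
  have hCC : A ∘L CC = Q := by
    have := congrArg ContinuousLinearMap.adjoint hD₂
    rwa [ContinuousLinearMap.adjoint_comp, ContinuousLinearMap.adjoint_adjoint,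
      hQsa.adjoint_eq] at this
  obtain ⟨V, hV, hVperp, hViso⟩ := ext_factor Z Q 1 zero_le_one
    (fun y => by rw [one_mul, hQnorm y])
  have hVisometry : ∀ y ∈ closure (Set.range ⇑A), ‖V y‖ = ‖y‖ := by
    rw [hMsetQ]
    exact hViso (fun y => (hQnorm y).symm)
  refine ⟨V, CC ∘L (W ∘L S), hVisometry, ?_, ?_⟩
  · intro z hz
    apply hVperp
    rwa [← hMeq]
  · have e1 : ∀ w, A (CC w) = Q w := fun w => DFunLike.congr_fun hCC w
    have e2 : ∀ w, V (Q w) = Z w := fun w => DFunLike.congr_fun hV w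
    have e3 : ∀ v, R (W v) = A v := fun v => DFunLike.congr_fun hW v
    ext x
    rw [hfac]
    simp only [ContinuousLinearMap.comp_apply]
    rw [e1, e2]
    show T (A (S x)) = T (R (W (S x)))
    rw [e3]

/-- The adjoint of a partial isometry is isometric on (the closure of the image of)
the initial space. -/
lemma adjoint_isometry_on {X X' : Type*}
    [NormedAddCommGroup X] [InnerProductSpace 𝕜 X] [CompleteSpace X]
    [NormedAddCommGroup X'] [InnerProductSpace 𝕜 X'] [CompleteSpace X']
    (V : X →L[𝕜] X') (K : Submodule 𝕜 X) (hKc : IsClosed (K : Set X))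
    (hiso : ∀ k ∈ K, ‖V k‖ = ‖k‖) (hperp : ∀ z ∈ Kᗮ, V z = 0) :
    ∀ u ∈ closure (⇑V '' (K : Set X)), ‖ContinuousLinearMap.adjoint V u‖ = ‖u‖ := by
  haveI : CompleteSpace K := hKc.completeSpace_coe
  let J : K →ₗᵢ[𝕜] X' :=
    { toLinearMap := (V : X →ₗ[𝕜] X').domRestrict K
      norm_map' := fun k => hiso k k.2 }
  have hJ : ∀ k : K, J k = V (k : X) := fun k => rfl
  have hVV : ∀ k ∈ K, ContinuousLinearMap.adjoint V (V k) = k := by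
    intro k hk
    apply ext_inner_right 𝕜
    intro w
    rw [ContinuousLinearMap.adjoint_inner_left]
    have hw : w - (K.orthogonalProjectionOnto w : X) ∈ Kᗮ :=
      Submodule.sub_starProjection_mem_orthogonal (K := K) w
    have hVw : V w = V (K.orthogonalProjectionOnto w : X) := by
      conv_lhs => rw [show w = (K.orthogonalProjectionOnto w : X)
        + (w - (K.orthogonalProjectionOnto w : X)) by abel]
      rw [map_add, hperp _ hw, add_zero]
    rw [hVw]
    have hpol : ⟪V k, V (K.orthogonalProjectionOnto w : X)⟫
        = ⟪(⟨k, hk⟩ : K), K.orthogonalProjectionOnto w⟫ := by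
      rw [← hJ ⟨k, hk⟩, ← hJ (K.orthogonalProjectionOnto w)]
      exact J.inner_map_map _ _
    rw [hpol, Submodule.coe_inner]
    have hk0 : ⟪k, w - (K.orthogonalProjectionOnto w : X)⟫ = 0 :=
      (Submodule.mem_orthogonal _ _).mp hw k hk
    rw [inner_sub_right] at hk0
    exact (sub_eq_zero.mp hk0).symm
  have hEqOn : Set.EqOn (fun u => ‖ContinuousLinearMap.adjoint V u‖) (fun u => ‖u‖)
      (⇑V '' (K : Set X)) := by
    rintro _ ⟨k, hk, rfl⟩
    simp only
    rw [hVV k hk, hiso k hk]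
  intro u hu
  exact hEqOn.closure (by fun_prop) (by fun_prop) hu

lemma orthogonal_ker {X Y : Type*}
    [NormedAddCommGroup X] [InnerProductSpace 𝕜 X] [CompleteSpace X]
    [NormedAddCommGroup Y] [InnerProductSpace 𝕜 Y] [CompleteSpace Y]
    (B : X →L[𝕜] Y) :
    (LinearMap.ker (B : X →ₗ[𝕜] Y))ᗮ
      = (LinearMap.range (ContinuousLinearMap.adjoint B : Y →ₗ[𝕜] X)).topologicalClosure := by
  have h1 : (LinearMap.range (ContinuousLinearMap.adjoint B : Y →ₗ[𝕜] X))ᗮ = LinearMap.ker (B : X →ₗ[𝕜] Y) := by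
    ext z
    rw [Submodule.mem_orthogonal, LinearMap.mem_ker]
    constructor
    · intro h
      have : ⟪B z, B z⟫ = 0 := by
        have := h (ContinuousLinearMap.adjoint B (B z)) (LinearMap.mem_range_self _ _)
        rwa [ContinuousLinearMap.adjoint_inner_left] at this
      exact inner_self_eq_zero.mp this
    · rintro h _ ⟨y, rfl⟩
      simp only [ContinuousLinearMap.coe_coe] at h ⊢
      rw [ContinuousLinearMap.adjoint_inner_left, h, inner_zero_right]
  rw [← h1, Submodule.orthogonal_orthogonal_eq_closure]

end Main

/-- Refinement of the factorization `A' = T ∘ A ∘ S`: (a) if `T` is injective on the closure of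
the range of `A`, the connecting operator on the left can be chosen isometric there; (b) if the
range of `S` is dense in `(ker A)ᗮ`, the connecting operator on the right can be chosen
isometric on `(ker A')ᗮ`. -/
theorem factorization_refinement
    {𝕜 X Y X' Y' : Type*} [RCLike 𝕜]
    [NormedAddCommGroup X] [InnerProductSpace 𝕜 X] [CompleteSpace X]
    [NormedAddCommGroup Y] [InnerProductSpace 𝕜 Y] [CompleteSpace Y]
    [NormedAddCommGroup X'] [InnerProductSpace 𝕜 X'] [CompleteSpace X']
    [NormedAddCommGroup Y'] [InnerProductSpace 𝕜 Y'] [CompleteSpace Y']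
    (A : X →L[𝕜] Y) (A' : X' →L[𝕜] Y')
    (T : Y →L[𝕜] Y') (S : X' →L[𝕜] X) (hfac : A' = T ∘L (A ∘L S)) :
    ((∀ y ∈ closure (Set.range ⇑A), T y = 0 → y = 0) →
      ∃ (O : Y →L[𝕜] Y') (S' : X' →L[𝕜] X),
        (∀ y ∈ closure (Set.range ⇑A), ‖O y‖ = ‖y‖) ∧ A' = O ∘L (A ∘L S')) ∧
    ((LinearMap.ker (A : X →ₗ[𝕜] Y))ᗮ ≤ (LinearMap.range (S : X' →ₗ[𝕜] X)).topologicalClosure →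
      ∃ (T' : Y →L[𝕜] Y') (U : X' →L[𝕜] X),
        (∀ x ∈ (LinearMap.ker (A' : X' →ₗ[𝕜] Y'))ᗮ, ‖U x‖ = ‖x‖) ∧ A' = T' ∘L (A ∘L U)) := by
  constructor
  · -- part (a)
    intro hinj
    obtain ⟨O, S', hiso, -, hfac'⟩ := key_construction A A' T S hfac hinj
    exact ⟨O, S', hiso, hfac'⟩
  · -- part (b)
    intro hdense
    -- the adjoint factorization
    have hadjfac : ContinuousLinearMap.adjoint A'
        = (ContinuousLinearMap.adjoint S) ∘L
          ((ContinuousLinearMap.adjoint A) ∘L (ContinuousLinearMap.adjoint T)) := by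
      rw [hfac, ContinuousLinearMap.adjoint_comp, ContinuousLinearMap.adjoint_comp]
      rfl
    -- injectivity of `S†` on the closure of the range of `A†`
    have hMa : (LinearMap.range (ContinuousLinearMap.adjoint A : Y →ₗ[𝕜] X)).topologicalClosure
        = (LinearMap.ker (A : X →ₗ[𝕜] Y))ᗮ := (_root_.orthogonal_ker A).symm
    have hMaset : closure (Set.range ⇑(ContinuousLinearMap.adjoint A))
        = (((LinearMap.ker (A : X →ₗ[𝕜] Y))ᗮ : Submodule 𝕜 X) : Set X) := by
      rw [← hMa, Submodule.topologicalClosure_coe, LinearMap.coe_range, ContinuousLinearMap.coe_coe]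
    have hinja : ∀ x ∈ closure (Set.range ⇑(ContinuousLinearMap.adjoint A)),
        ContinuousLinearMap.adjoint S x = 0 → x = 0 := by
      intro x hx hSx
      rw [hMaset] at hx
      have hx2 : x ∈ (LinearMap.range (S : X' →ₗ[𝕜] X)).topologicalClosure := hdense hx
      have hperp : ∀ u ∈ (LinearMap.range (S : X' →ₗ[𝕜] X) : Submodule 𝕜 X), inner 𝕜 u x = 0 := by
        rintro _ ⟨v, rfl⟩
        rw [ContinuousLinearMap.coe_coe, ← ContinuousLinearMap.adjoint_inner_right S v x, hSx, inner_zero_right]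
      have hxx : inner 𝕜 x x = 0 := by
        have hEqOn : Set.EqOn (fun w => inner 𝕜 w x) (fun _ => (0:𝕜))
            ((LinearMap.range (S : X' →ₗ[𝕜] X) : Submodule 𝕜 X) : Set X) := fun w hw => hperp w hw
        have hx3 : x ∈ closure ((LinearMap.range (S : X' →ₗ[𝕜] X) : Submodule 𝕜 X) : Set X) := by
          rw [← Submodule.topologicalClosure_coe]
          exact hx2
        exact hEqOn.closure (continuous_id.inner continuous_const) continuous_const hx3
      exact inner_self_eq_zero.mp hxx
    obtain ⟨O₁, S₁', hiso₁, hperp₁, hfac₁⟩ :=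
      key_construction (ContinuousLinearMap.adjoint A) (ContinuousLinearMap.adjoint A')
        (ContinuousLinearMap.adjoint S) (ContinuousLinearMap.adjoint T) hadjfac hinja
    refine ⟨ContinuousLinearMap.adjoint S₁', ContinuousLinearMap.adjoint O₁, ?_, ?_⟩
    · -- isometry of `O₁†` on `(ker A')ᗮ`
      set K := (LinearMap.range (ContinuousLinearMap.adjoint A : Y →ₗ[𝕜] X)).topologicalClosure with hKdef
      have hisoK : ∀ k ∈ K, ‖O₁ k‖ = ‖k‖ := by
        intro k hk
        apply hiso₁
        have hKset : (K : Set X) = closure (Set.range ⇑(ContinuousLinearMap.adjoint A)) := by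
          rw [hKdef, Submodule.topologicalClosure_coe, LinearMap.coe_range, ContinuousLinearMap.coe_coe]
        rw [← hKset]
        exact hk
      have hmain := adjoint_isometry_on O₁ K
        (Submodule.isClosed_topologicalClosure _) hisoK hperp₁
      intro x hx
      apply hmain
      -- `(ker A')ᗮ ⊆ closure (O₁ '' K)`
      have h1 : x ∈ (LinearMap.range (ContinuousLinearMap.adjoint A' : Y' →ₗ[𝕜] X')).topologicalClosure := by
        rw [← _root_.orthogonal_ker]
        exact hx
      have h2 : (Set.range ⇑(ContinuousLinearMap.adjoint A')) ⊆ ⇑O₁ '' (K : Set X) := by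
        rintro _ ⟨y, rfl⟩
        have hmem : (ContinuousLinearMap.adjoint A) (S₁' y) ∈ K :=
          (LinearMap.range (ContinuousLinearMap.adjoint A : Y →ₗ[𝕜] X)).le_topologicalClosure
            (LinearMap.mem_range_self _ _)
        refine ⟨_, hmem, ?_⟩
        have := DFunLike.congr_fun hfac₁ y
        simp only [ContinuousLinearMap.comp_apply] at this
        exact this.symm
      have h3 : ((LinearMap.range (ContinuousLinearMap.adjoint A' : Y' →ₗ[𝕜] X')).topologicalClosure
          : Set X') ⊆ closure (⇑O₁ '' (K : Set X)) := by
        rw [Submodule.topologicalClosure_coe, LinearMap.coe_range, ContinuousLinearMap.coe_coe]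
        exact closure_mono h2
      exact h3 h1
    · -- the factorization
      have := congrArg ContinuousLinearMap.adjoint hfac₁
      rw [ContinuousLinearMap.adjoint_adjoint, ContinuousLinearMap.adjoint_comp,
        ContinuousLinearMap.adjoint_comp, ContinuousLinearMap.adjoint_adjoint] at this
      rw [this]
      rfl
end

section
/- Let X be an infinite-dimensional Hilbert space over ℝ or ℂ, Y a normed space, D ⊆ X a set, and F : X → Y a map that is completely continuous on D, meaning: for every sequence (x_n) in D converging weakly to some x ∈ D, F(x_n) converges to F(x) in norm. Then for every point x† in the topological interior of D there exist ρ > 0 and a sequence (x_n) in D with ‖x_n − x†‖ = ρ for all n and ‖F(x_n) − F(x†)‖ → 0 as n → ∞; in particular, F is locally ill-posed at every interior point of D. -/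
open Filter Topology

/-- A completely continuous map on a subset of an infinite-dimensional Hilbert space is locally
ill-posed at every interior point of its domain: there are points at a fixed positive distance
`ρ` from `x†` whose images converge to `F(x†)`. -/
theorem completely_continuous_locally_illposed
    {𝕜 X Y : Type*} [RCLike 𝕜]
    [NormedAddCommGroup X] [InnerProductSpace 𝕜 X] [CompleteSpace X]
    [NormedAddCommGroup Y]
    (hXinf : ¬ FiniteDimensional 𝕜 X)
    (D : Set X) (F : X → Y)
    (hF : ∀ (xseq : ℕ → X) (x : X), (∀ n, xseq n ∈ D) → x ∈ D →
      (∀ y : X, Tendsto (fun n => (inner 𝕜 y (xseq n) : 𝕜)) atTop (𝓝 (inner 𝕜 y x))) →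
      Tendsto (fun n => F (xseq n)) atTop (𝓝 (F x))) :
    ∀ xdag ∈ interior D, ∃ ρ : ℝ, 0 < ρ ∧ ∃ xseq : ℕ → X,
      (∀ n, xseq n ∈ D) ∧ (∀ n, ‖xseq n - xdag‖ = ρ) ∧
      Tendsto (fun n => ‖F (xseq n) - F xdag‖) atTop (𝓝 0) := by
  intro xdag hxdag
  -- get a ball inside D
  obtain ⟨ρ, hρ, hball⟩ := Metric.isOpen_iff.1 isOpen_interior xdag hxdag
  refine ⟨ρ / 2, by positivity, ?_⟩
  -- orthonormal sequence
  obtain ⟨w, b, hb⟩ := exists_hilbertBasis 𝕜 X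
  have hwinf : w.Infinite := by
    intro hfin
    apply hXinf
    haveI := hfin.to_subtype
    have hsp : (Submodule.span 𝕜 (Set.range ((↑) : w → X))).topologicalClosure = ⊤ := by
      simpa [hb] using b.dense_span
    have hclosed : (Submodule.span 𝕜 (Set.range ((↑) : w → X))).topologicalClosure
        = Submodule.span 𝕜 (Set.range ((↑) : w → X)) := by
      haveI : FiniteDimensional 𝕜 (Submodule.span 𝕜 (Set.range ((↑) : w → X))) :=
        FiniteDimensional.span_of_finite 𝕜 (Set.finite_range _)
      exact IsClosed.submodule_topologicalClosure_eq
        (Submodule.closed_of_finiteDimensional _)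
    rw [hclosed] at hsp
    exact Module.finite_def.2 ⟨(Set.finite_range ((↑) : w → X)).toFinset, by
      rw [Set.Finite.coe_toFinset, hsp]⟩
  -- orthonormal sequence indexed by ℕ
  set e : ℕ → X := fun n => ((hwinf.natEmbedding w) n : X) with he
  have hon : Orthonormal 𝕜 e := by
    have := b.orthonormal
    rw [hb] at this
    exact this.comp _ (hwinf.natEmbedding w).injective
  -- the sequence
  refine ⟨fun n => xdag + ((ρ / 2 : ℝ) : 𝕜) • e n, ?_, ?_, ?_⟩
  · intro n
    apply interior_subset
    apply hball
    simp [Metric.mem_ball, dist_eq_norm, norm_smul, hon.1 n,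
      abs_of_pos (by positivity : (0:ℝ) < ρ / 2), abs_of_pos hρ]
    linarith
  · intro n
    simp [norm_smul, hon.1 n, RCLike.norm_ofReal, abs_of_pos (by positivity : (0:ℝ) < ρ / 2), abs_of_pos hρ]
  · have hweak : ∀ y : X, Tendsto (fun n => (inner 𝕜 y (xdag + ((ρ / 2 : ℝ) : 𝕜) • e n) : 𝕜))
        atTop (𝓝 (inner 𝕜 y xdag)) := by
      intro y
      have hsum : Summable fun n => ‖(inner 𝕜 (e n) y : 𝕜)‖ ^ 2 :=
        hon.inner_products_summable y
      have h0 : Tendsto (fun n => ‖(inner 𝕜 (e n) y : 𝕜)‖ ^ 2) atTop (𝓝 0) :=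
        hsum.tendsto_atTop_zero
      have h1 : Tendsto (fun n => ‖(inner 𝕜 (e n) y : 𝕜)‖) atTop (𝓝 0) := by
        have := h0.sqrt
        simpa [Real.sqrt_sq (norm_nonneg _)] using this
      have h2 : Tendsto (fun n => (inner 𝕜 (e n) y : 𝕜)) atTop (𝓝 0) :=
        tendsto_zero_iff_norm_tendsto_zero.2 h1
      have h3 : Tendsto (fun n => (inner 𝕜 y (e n) : 𝕜)) atTop (𝓝 0) := by
        have := (RCLike.continuous_conj (K := 𝕜)).continuousAt.tendsto.comp h2
        simpa only [Function.comp_def, inner_conj_symm, map_zero] using this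
      have h4 : Tendsto (fun n => (inner 𝕜 y (((ρ / 2 : ℝ) : 𝕜) • e n) : 𝕜)) atTop (𝓝 0) := by
        simp only [inner_smul_right]
        simpa using (tendsto_const_nhds (x := ((ρ / 2 : ℝ) : 𝕜))).mul h3
      have := (tendsto_const_nhds (x := (inner 𝕜 y xdag : 𝕜))).add h4
      simpa [inner_add_right] using this
    have hmem : ∀ n, xdag + ((ρ / 2 : ℝ) : 𝕜) • e n ∈ D := fun n => by
      apply interior_subset; apply hball
      simp [Metric.mem_ball, dist_eq_norm, norm_smul, hon.1 n, RCLike.norm_ofReal,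
        abs_of_pos (by positivity : (0:ℝ) < ρ / 2), abs_of_pos hρ]
      linarith
    have := hF _ xdag hmem (interior_subset hxdag) hweak
    have := (continuous_norm.tendsto _).comp (this.sub_const (F xdag))
    simpa [Function.comp_def] using this
end

section
/- Let X and Y be normed spaces, x† ∈ X, ρ > 0, B = {x : ‖x − x†‖ ≤ ρ}, F : X → Y a map, and A : X → Y a bounded linear operator (playing the role of F'(x†)). For σ ∈ [0,1] and q_σ > 0, say condition TCC(σ, q_σ) holds if ‖F(x) − F(x†) − A(x − x†)‖ ≤ q_σ ‖A(x − x†)‖^{1−σ} ‖F(x) − F(x†)‖^{σ} for all x ∈ B. Then: (1) if TCC(σ, q_σ) holds for some σ ∈ [0,1], where in case σ = 1 additionally q_1 < 1, then there exists K̄ > 0 with ‖F(x) − F(x†)‖ ≤ K̄ ‖A(x − x†)‖ for all x ∈ B; (2) if TCC(σ, q_σ) holds for some σ ∈ [0,1], where in case σ = 0 additionally q_0 < 1, then there exists K > 0 with K ‖A(x − x†)‖ ≤ ‖F(x) − F(x†)‖ for all x ∈ B; (3) conversely, if there exist constants 0 < K ≤ K̄ with K ‖A(x − x†)‖ ≤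 ‖F(x) − F(x†)‖ ≤ K̄ ‖A(x − x†)‖ for all x ∈ B, then for every σ ∈ [0,1] there exists q_σ > 0 such that TCC(σ, q_σ) holds. -/
/-- Scalar lemma for the upper bound, case `σ < 1`. -/
lemma tcc_upper_aux (sig q a f r : ℝ) (hσ1 : sig < 1) (hq : 0 < q)
    (ha : 0 ≤ a) (hf : 0 ≤ f) (hfa : f ≤ a + r)
    (hr : r ≤ q * a ^ ((1:ℝ) - sig) * f ^ sig) :
    f ≤ max 3 ((2*q) ^ ((1:ℝ) - sig)⁻¹) * a := by
  set K : ℝ := max 3 ((2*q) ^ ((1:ℝ) - sig)⁻¹) with hK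
  have hK3 : (3:ℝ) ≤ K := le_max_left _ _
  have hKpos : 0 < K := by linarith
  by_contra hcon
  push_neg at hcon
  have hfpos : 0 < f := lt_of_le_of_lt (by positivity) hcon
  have haK : a ≤ f / K := by
    rw [le_div_iff₀ hKpos]; nlinarith
  have hs : (0:ℝ) ≤ 1 - sig := by linarith
  have h1 : a ^ ((1:ℝ) - sig) ≤ (f / K) ^ ((1:ℝ) - sig) :=
    Real.rpow_le_rpow ha haK hs
  have h2 : (f / K) ^ ((1:ℝ) - sig) = f ^ ((1:ℝ) - sig) / K ^ ((1:ℝ) - sig) :=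
    Real.div_rpow hf hKpos.le _
  have h3 : f ^ ((1:ℝ) - sig) * f ^ sig = f := by
    rw [← Real.rpow_add hfpos]; simp
  have hfσpos : 0 < f ^ sig := Real.rpow_pos_of_pos hfpos _
  have hKspos : 0 < K ^ ((1:ℝ) - sig) := Real.rpow_pos_of_pos hKpos _
  have hmain : f ≤ f / K + q * f / K ^ ((1:ℝ) - sig) := by
    have hmono : q * a ^ ((1:ℝ) - sig) * f ^ sig ≤
        q * (f ^ ((1:ℝ) - sig) / K ^ ((1:ℝ) - sig)) * f ^ sig :=
      mul_le_mul_of_nonneg_right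
        (mul_le_mul_of_nonneg_left (h1.trans_eq h2) hq.le) hfσpos.le
    have heq : q * (f ^ ((1:ℝ) - sig) / K ^ ((1:ℝ) - sig)) * f ^ sig
        = q * f / K ^ ((1:ℝ) - sig) := by
      calc q * (f ^ ((1:ℝ) - sig) / K ^ ((1:ℝ) - sig)) * f ^ sig
          = q * (f ^ ((1:ℝ) - sig) * f ^ sig) / K ^ ((1:ℝ) - sig) := by ring
        _ = q * f / K ^ ((1:ℝ) - sig) := by rw [h3]
    calc f ≤ a + r := hfa
      _ ≤ f / K + (q * a ^ ((1:ℝ) - sig) * f ^ sig) := by linarith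
      _ ≤ f / K + q * f / K ^ ((1:ℝ) - sig) := by
          rw [← heq]; linarith
  -- divide through by f
  have hone : 1 ≤ 1 / K + q / K ^ ((1:ℝ) - sig) := by
    have := hmain
    rw [div_add_div _ _ (ne_of_gt hKpos) (ne_of_gt hKspos)] at this ⊢
    rw [le_div_iff₀ (by positivity)] at this ⊢
    nlinarith
  have hb1 : 1 / K ≤ 1 / 3 := by
    rw [div_le_div_iff₀ hKpos (by norm_num)]; linarith
  have hb2 : q / K ^ ((1:ℝ) - sig) ≤ 1 / 2 := by
    have hKs : 2 * q ≤ K ^ ((1:ℝ) - sig) := by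
      have h4 : ((2*q) ^ ((1:ℝ) - sig)⁻¹) ^ ((1:ℝ) - sig) = 2 * q :=
        Real.rpow_inv_rpow (by positivity) (by linarith)
      calc 2 * q = ((2*q) ^ ((1:ℝ) - sig)⁻¹) ^ ((1:ℝ) - sig) := h4.symm
        _ ≤ K ^ ((1:ℝ) - sig) :=
          Real.rpow_le_rpow (by positivity) (le_max_right _ _) hs
    rw [div_le_iff₀ hKspos]; nlinarith
  linarith

/-- Scalar lemma for the lower bound, case `σ > 0`. -/
lemma tcc_lower_aux (sig q a f r : ℝ) (hσ0 : 0 < sig) (hσ1 : sig ≤ 1) (hq : 0 < q)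
    (ha : 0 ≤ a) (hf : 0 ≤ f) (haf : a ≤ f + r)
    (hr : r ≤ q * a ^ ((1:ℝ) - sig) * f ^ sig) :
    min 3⁻¹ ((2*q)⁻¹ ^ sig⁻¹) * a ≤ f := by
  set K : ℝ := min 3⁻¹ ((2*q)⁻¹ ^ sig⁻¹) with hK
  have hKpos : 0 < K := lt_min (by norm_num) (Real.rpow_pos_of_pos (by positivity) _)
  have hK3 : K ≤ 3⁻¹ := min_le_left _ _
  by_contra hcon
  push_neg at hcon
  have hapos : 0 < a := by
    by_contra h
    push_neg at h
    have : a = 0 := le_antisymm h ha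
    rw [this] at hcon; simp at hcon; linarith
  have h1 : f ^ sig ≤ (K * a) ^ sig :=
    Real.rpow_le_rpow hf hcon.le hσ0.le
  have h2 : (K * a) ^ sig = K ^ sig * a ^ sig := Real.mul_rpow hKpos.le ha
  have h3 : a ^ ((1:ℝ) - sig) * a ^ sig = a := by
    rw [← Real.rpow_add hapos]; simp
  have hKσpos : 0 < K ^ sig := Real.rpow_pos_of_pos hKpos _
  have haσpos : 0 < a ^ sig := Real.rpow_pos_of_pos hapos _
  have haspos : 0 < a ^ ((1:ℝ) - sig) := Real.rpow_pos_of_pos hapos _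
  have hmain : a ≤ K * a + q * K ^ sig * a := by
    have hstep : q * a ^ ((1:ℝ) - sig) * f ^ sig ≤ q * K ^ sig * a := by
      calc q * a ^ ((1:ℝ) - sig) * f ^ sig
          ≤ q * a ^ ((1:ℝ) - sig) * (K ^ sig * a ^ sig) := by
            rw [h2] at h1
            exact mul_le_mul_of_nonneg_left h1 (by positivity)
        _ = q * K ^ sig * (a ^ ((1:ℝ) - sig) * a ^ sig) := by ring
        _ = q * K ^ sig * a := by rw [h3]
    calc a ≤ f + r := haf
      _ ≤ K * a + q * a ^ ((1:ℝ) - sig) * f ^ sig := by linarith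
      _ ≤ K * a + q * K ^ sig * a := by linarith
  have hone : 1 ≤ K + q * K ^ sig := by nlinarith
  have hb2 : q * K ^ sig ≤ 1 / 2 := by
    have hKs : K ^ sig ≤ (2*q)⁻¹ := by
      have h4 : ((2*q)⁻¹ ^ sig⁻¹) ^ sig = (2*q)⁻¹ :=
        Real.rpow_inv_rpow (by positivity) (ne_of_gt hσ0)
      calc K ^ sig ≤ ((2*q)⁻¹ ^ sig⁻¹) ^ sig :=
            Real.rpow_le_rpow hKpos.le (min_le_right _ _) hσ0.le
        _ = (2*q)⁻¹ := h4
    calc q * K ^ sig ≤ q * (2*q)⁻¹ := by nlinarith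
      _ = 1/2 := by field_simp
  have : (1:ℝ) ≤ 3⁻¹ + 1/2 := by linarith
  norm_num at this

/-- Lemma on tangential cone conditions `TCC(σ, q)`:
`‖F(x) − F(x†) − A(x − x†)‖ ≤ q ‖A(x − x†)‖^(1−σ) ‖F(x) − F(x†)‖^σ` on the closed ball `B`.
(1) `TCC(σ, q)` (with `q < 1` if `σ = 1`) implies an upper bound
`‖F(x) − F(x†)‖ ≤ K̄ ‖A(x − x†)‖`; (2) `TCC(σ, q)` (with `q < 1` if `σ = 0`) implies a lower
bound `K ‖A(x − x†)‖ ≤ ‖F(x) − F(x†)‖`; (3) conversely, the two-sided estimate implies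
`TCC(σ, q_σ)` for every `σ ∈ [0,1]` and suitable `q_σ > 0`. -/
theorem tangential_cone_conditions
    {𝕜 X Y : Type*} [NontriviallyNormedField 𝕜]
    [NormedAddCommGroup X] [NormedSpace 𝕜 X]
    [NormedAddCommGroup Y] [NormedSpace 𝕜 Y]
    (xdag : X) (ρ : ℝ) (hρ : 0 < ρ) (F : X → Y) (A : X →L[𝕜] Y) :
    (∀ sig q : ℝ, sig ∈ Set.Icc (0:ℝ) 1 → 0 < q → (sig = 1 → q < 1) →
      (∀ x ∈ Metric.closedBall xdag ρ,
        ‖F x - F xdag - A (x - xdag)‖ ≤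
          q * ‖A (x - xdag)‖ ^ ((1:ℝ) - sig) * ‖F x - F xdag‖ ^ sig) →
      ∃ Kbar : ℝ, 0 < Kbar ∧ ∀ x ∈ Metric.closedBall xdag ρ,
        ‖F x - F xdag‖ ≤ Kbar * ‖A (x - xdag)‖) ∧
    (∀ sig q : ℝ, sig ∈ Set.Icc (0:ℝ) 1 → 0 < q → (sig = 0 → q < 1) →
      (∀ x ∈ Metric.closedBall xdag ρ,
        ‖F x - F xdag - A (x - xdag)‖ ≤
          q * ‖A (x - xdag)‖ ^ ((1:ℝ) - sig) * ‖F x - F xdag‖ ^ sig) →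
      ∃ Kund : ℝ, 0 < Kund ∧ ∀ x ∈ Metric.closedBall xdag ρ,
        Kund * ‖A (x - xdag)‖ ≤ ‖F x - F xdag‖) ∧
    (∀ Kund Kbar : ℝ, 0 < Kund → Kund ≤ Kbar →
      (∀ x ∈ Metric.closedBall xdag ρ,
        Kund * ‖A (x - xdag)‖ ≤ ‖F x - F xdag‖ ∧
        ‖F x - F xdag‖ ≤ Kbar * ‖A (x - xdag)‖) →
      ∀ sig ∈ Set.Icc (0:ℝ) 1, ∃ q : ℝ, 0 < q ∧
        ∀ x ∈ Metric.closedBall xdag ρ,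
          ‖F x - F xdag - A (x - xdag)‖ ≤
            q * ‖A (x - xdag)‖ ^ ((1:ℝ) - sig) * ‖F x - F xdag‖ ^ sig) := by
  refine ⟨?_, ?_, ?_⟩
  · -- (1) upper bound
    rintro sig q ⟨hσ0, hσ1⟩ hq hq1 htcc
    by_cases hs1 : sig = 1
    · -- σ = 1 : f ≤ a + q f
      have hq' := hq1 hs1
      have hq'' : 0 < 1 - q := by linarith
      refine ⟨(1 - q)⁻¹, by positivity, fun x hx => ?_⟩
      have h := htcc x hx
      rw [hs1] at h
      simp only [sub_self, Real.rpow_zero, Real.rpow_one, mul_one] at h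
      have hfa : ‖F x - F xdag‖ ≤ ‖A (x - xdag)‖ + ‖F x - F xdag - A (x - xdag)‖ := by
        simpa [norm_sub_rev] using norm_le_insert' (F x - F xdag) (A (x - xdag))
      rw [inv_mul_eq_div, le_div_iff₀ hq'']
      nlinarith
    · have hσlt : sig < 1 := lt_of_le_of_ne hσ1 hs1
      refine ⟨max 3 ((2*q) ^ ((1:ℝ) - sig)⁻¹), lt_of_lt_of_le (by norm_num) (le_max_left _ _),
        fun x hx => ?_⟩
      have hfa : ‖F x - F xdag‖ ≤ ‖A (x - xdag)‖ + ‖F x - F xdag - A (x - xdag)‖ := by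
        simpa [norm_sub_rev] using norm_le_insert' (F x - F xdag) (A (x - xdag))
      exact tcc_upper_aux sig q _ _ _ hσlt hq (norm_nonneg _) (norm_nonneg _) hfa (htcc x hx)
  · -- (2) lower bound
    rintro sig q ⟨hσ0, hσ1⟩ hq hq0 htcc
    by_cases hs0 : sig = 0
    · have hq' := hq0 hs0
      refine ⟨1 - q, by linarith, fun x hx => ?_⟩
      have h := htcc x hx
      rw [hs0] at h
      simp only [sub_zero, Real.rpow_zero, Real.rpow_one, mul_one] at h
      have haf : ‖A (x - xdag)‖ ≤ ‖F x - F xdag‖ + ‖F x - F xdag - A (x - xdag)‖ := by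
        simpa [norm_sub_rev] using norm_le_insert (F x - F xdag) (A (x - xdag))
      nlinarith
    · have hσgt : 0 < sig := lt_of_le_of_ne hσ0 (Ne.symm hs0)
      have h2q : (0:ℝ) < (2*q)⁻¹ := by positivity
      refine ⟨min 3⁻¹ ((2*q)⁻¹ ^ sig⁻¹),
        lt_min (by norm_num) (Real.rpow_pos_of_pos h2q _), fun x hx => ?_⟩
      have haf : ‖A (x - xdag)‖ ≤ ‖F x - F xdag‖ + ‖F x - F xdag - A (x - xdag)‖ := by
        simpa [norm_sub_rev] using norm_le_insert (F x - F xdag) (A (x - xdag))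
      exact tcc_lower_aux sig q _ _ _ hσgt hσ1 hq (norm_nonneg _) (norm_nonneg _) haf (htcc x hx)
  · -- (3) converse
    rintro Kund Kbar hKund hKK hest sig ⟨hσ0, hσ1⟩
    have hKσpos : 0 < Kund ^ sig := Real.rpow_pos_of_pos hKund _
    have hKb : (0:ℝ) < Kbar + 1 := by linarith
    refine ⟨(Kbar + 1) / Kund ^ sig, div_pos hKb hKσpos, fun x hx => ?_⟩
    obtain ⟨hlow, hup⟩ := hest x hx
    set a := ‖A (x - xdag)‖ with ha
    set f := ‖F x - F xdag‖ with hf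
    have ha0 : 0 ≤ a := norm_nonneg _
    have hf0 : 0 ≤ f := norm_nonneg _
    by_cases hapos : 0 < a
    · have hr : ‖F x - F xdag - A (x - xdag)‖ ≤ f + a :=
        (norm_sub_le _ _)
      have h1 : (Kund * a) ^ sig ≤ f ^ sig := Real.rpow_le_rpow (by positivity) hlow hσ0
      have h2 : (Kund * a) ^ sig = Kund ^ sig * a ^ sig := Real.mul_rpow hKund.le ha0
      have h3 : a ^ ((1:ℝ) - sig) * a ^ sig = a := by
        rw [← Real.rpow_add hapos]; simp
      have haσ : 0 < a ^ sig := Real.rpow_pos_of_pos hapos _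
      have has : 0 < a ^ ((1:ℝ) - sig) := Real.rpow_pos_of_pos hapos _
      calc ‖F x - F xdag - A (x - xdag)‖ ≤ f + a := hr
        _ ≤ (Kbar + 1) * a := by nlinarith
        _ = (Kbar + 1) / Kund ^ sig * (Kund ^ sig * (a ^ ((1:ℝ) - sig) * a ^ sig)) := by
            rw [h3]; field_simp
        _ = (Kbar + 1) / Kund ^ sig * a ^ ((1:ℝ) - sig) * ((Kund * a) ^ sig) := by
            rw [h2]; ring
        _ ≤ (Kbar + 1) / Kund ^ sig * a ^ ((1:ℝ) - sig) * f ^ sig := by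
            have hKb : (0:ℝ) < Kbar + 1 := by linarith
            have hcoef : 0 ≤ (Kbar + 1) / Kund ^ sig * a ^ ((1:ℝ) - sig) := by positivity
            exact mul_le_mul_of_nonneg_left h1 hcoef
    · have ha0' : a = 0 := le_antisymm (not_lt.mp hapos) ha0
      have hfz : f = 0 := le_antisymm (by rw [ha0'] at hup; simpa using hup) hf0
      have hFz : F x - F xdag = 0 := by rwa [hf, norm_eq_zero] at hfz
      have hAz : A (x - xdag) = 0 := by rwa [ha, norm_eq_zero] at ha0'
      rw [hFz, hAz, ha0', hfz]
      have hnn : 0 ≤ (Kbar + 1) / Kund ^ sig * (0:ℝ) ^ ((1:ℝ) - sig) * (0:ℝ) ^ sig :=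
        mul_nonneg (mul_nonneg (div_nonneg (by linarith) hKσpos.le)
          (Real.rpow_nonneg le_rfl _)) (Real.rpow_nonneg le_rfl _)
      simpa using hnn
end

section
/- Let X and Y be Banach spaces, x† ∈ X, ρ > 0, B = {x : ‖x − x†‖ ≤ ρ}, and let F : X → Y be Fréchet differentiable at every point of B. Suppose there exist a constant C_R > 0 and an exponent κ ∈ (0,1] such that for all x, x̃ ∈ B there is a bounded linear operator R(x,x̃) : Y → Y with F'(x) = R(x,x̃) ∘ F'(x̃) and ‖R(x,x̃) − I‖ ≤ C_R ‖x − x̃‖^κ. Then for all x ∈ B: ‖F(x) − F(x†) − F'(x†)(x − x†)‖ ≤ (C_R / (1 + κ)) ‖F'(x†)(x − x†)‖ ‖x − x†‖^κ. -/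
open ContinuousLinearMap

/-- The derivative factorization condition `F'(x) = R(x,x̃) ∘ F'(x̃)` with
`‖R(x,x̃) − I‖ ≤ C_R ‖x − x̃‖^κ` implies the tangential cone type estimate
`‖F(x) − F(x†) − F'(x†)(x − x†)‖ ≤ (C_R/(1+κ)) ‖F'(x†)(x − x†)‖ ‖x − x†‖^κ`. -/
theorem factorization_implies_cone_condition
    {𝕜 X Y : Type*} [RCLike 𝕜]
    [NormedAddCommGroup X] [NormedSpace 𝕜 X] [CompleteSpace X]
    [NormedAddCommGroup Y] [NormedSpace 𝕜 Y] [CompleteSpace Y]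
    (xdag : X) (ρ : ℝ) (hρ : 0 < ρ) (F : X → Y) (F' : X → (X →L[𝕜] Y))
    (hdiff : ∀ x ∈ Metric.closedBall xdag ρ, HasFDerivAt F (F' x) x)
    (CR κ : ℝ) (hCR : 0 < CR) (hκ : κ ∈ Set.Ioc (0:ℝ) 1)
    (hfac : ∀ x ∈ Metric.closedBall xdag ρ, ∀ xt ∈ Metric.closedBall xdag ρ,
      ∃ R : Y →L[𝕜] Y, F' x = R ∘L F' xt ∧
        ‖R - ContinuousLinearMap.id 𝕜 Y‖ ≤ CR * ‖x - xt‖ ^ κ) :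
    ∀ x ∈ Metric.closedBall xdag ρ,
      ‖F x - F xdag - F' xdag (x - xdag)‖ ≤
        (CR / (1 + κ)) * ‖F' xdag (x - xdag)‖ * ‖x - xdag‖ ^ κ := by
  letI : NormedSpace ℝ X := NormedSpace.restrictScalars ℝ 𝕜 X
  letI : NormedSpace ℝ Y := NormedSpace.restrictScalars ℝ 𝕜 Y
  haveI : IsScalarTower ℝ 𝕜 X := ⟨fun r k x => by rw [Algebra.smul_def, mul_smul]; rfl⟩
  haveI : IsScalarTower ℝ 𝕜 Y := ⟨fun r k x => by rw [Algebra.smul_def, mul_smul]; rfl⟩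
  intro x hx
  obtain ⟨hκ0, hκ1⟩ := hκ
  set v : X := x - xdag with hv
  have hxdag : xdag ∈ Metric.closedBall xdag ρ := Metric.mem_closedBall_self hρ.le
  have hvρ : ‖v‖ ≤ ρ := by simpa [hv, dist_eq_norm] using hx
  set M : ℝ := ‖F' xdag v‖ with hM
  -- the path and membership in the ball
  have hmem : ∀ t ∈ Set.Icc (0:ℝ) 1, xdag + t • v ∈ Metric.closedBall xdag ρ := by
    intro t ht
    have : ‖t • v‖ ≤ ρ := by
      rw [norm_smul, Real.norm_eq_abs, abs_of_nonneg ht.1]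
      calc t * ‖v‖ ≤ 1 * ‖v‖ := by
            exact mul_le_mul_of_nonneg_right ht.2 (norm_nonneg v)
        _ ≤ ρ := by simpa using hvρ
    simpa [dist_eq_norm, add_sub_cancel_left] using this
  -- the function f
  set f : ℝ → Y := fun t => F (xdag + t • v) - F xdag - t • (F' xdag v) with hf
  set f' : ℝ → Y := fun t => F' (xdag + t • v) v - F' xdag v with hf'
  have hline : ∀ t : ℝ, HasDerivAt (fun s : ℝ => xdag + s • v) v t := by
    intro t
    simpa using ((hasDerivAt_id t).smul_const v).const_add xdag
  have hder : ∀ t ∈ Set.Icc (0:ℝ) 1, HasDerivAt f (f' t) t := by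
    intro t ht
    have h1 : HasDerivAt (fun s : ℝ => F (xdag + s • v)) (F' (xdag + t • v) v) t := by
      have := ((hdiff _ (hmem t ht)).restrictScalars ℝ).comp_hasDerivAt t (hline t)
      simpa [Function.comp_def] using this
    have h2 : HasDerivAt (fun s : ℝ => F (xdag + s • v) - F xdag) (F' (xdag + t • v) v) t :=
      h1.sub_const _
    simpa [hf, hf', Pi.sub_def] using h2.sub ((hasDerivAt_id t).smul_const (F' xdag v))
  -- the bound on ‖f' t‖
  have hbound : ∀ t ∈ Set.Icc (0:ℝ) 1, ‖f' t‖ ≤ (CR * M * ‖v‖ ^ κ) * t ^ κ := by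
    intro t ht
    obtain ⟨R, hR1, hR2⟩ := hfac _ (hmem t ht) _ hxdag
    have happ : F' (xdag + t • v) v = R (F' xdag v) := by
      rw [hR1]; rfl
    have : f' t = (R - ContinuousLinearMap.id 𝕜 Y) (F' xdag v) := by
      simp [hf', happ, sub_apply]
    rw [this]
    calc ‖(R - ContinuousLinearMap.id 𝕜 Y) (F' xdag v)‖
        ≤ ‖R - ContinuousLinearMap.id 𝕜 Y‖ * M := le_opNorm _ _
      _ ≤ (CR * ‖(xdag + t • v) - xdag‖ ^ κ) * M := by
          exact mul_le_mul_of_nonneg_right hR2 (norm_nonneg _)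
      _ = (CR * M * ‖v‖ ^ κ) * t ^ κ := by
          rw [add_sub_cancel_left, norm_smul, Real.norm_eq_abs, abs_of_nonneg ht.1,
            Real.mul_rpow ht.1 (norm_nonneg v)]
          ring
  -- the barrier function
  set c : ℝ := CR * M * ‖v‖ ^ κ with hc
  have hκ1pos : (0:ℝ) < 1 + κ := by linarith
  set B : ℝ → ℝ := fun t => c / (1 + κ) * t ^ (κ + 1) with hB
  have hBder : ∀ t : ℝ, HasDerivAt B (c * t ^ κ) t := by
    intro t
    have h1 : HasDerivAt (fun s : ℝ => s ^ (κ + 1)) ((κ + 1) * t ^ (κ + 1 - 1)) t :=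
      Real.hasDerivAt_rpow_const (Or.inr (by linarith))
    have := h1.const_mul (c / (1 + κ))
    refine this.congr_deriv ?_
    symm
    have : κ + 1 - 1 = κ := by ring
    rw [this]
    field_simp
    ring
  have key := image_norm_le_of_norm_deriv_right_le_deriv_boundary
    (f := f) (a := 0) (b := 1) (f' := f')
    (fun t ht => (hder t ht).continuousAt.continuousWithinAt)
    (fun t ht => (hder t (Set.mem_Icc_of_Ico ht)).hasDerivWithinAt)
    (B := B) (B' := fun t => c * t ^ κ)
    (by simp [hf, hB, Real.zero_rpow (by positivity : κ + 1 ≠ 0)])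
    hBder
    (fun t ht => hbound t (Set.mem_Icc_of_Ico ht))
    (Set.right_mem_Icc.2 zero_le_one)
  have hfin : ‖f 1‖ = ‖F x - F xdag - F' xdag (x - xdag)‖ := by
    simp [hf, hv]
  have hBfin : B 1 = (CR / (1 + κ)) * M * ‖v‖ ^ κ := by
    simp [hB, hc]
    field_simp
  rw [← hfin, hM] at *
  calc ‖f 1‖ ≤ B 1 := key
    _ = (CR / (1 + κ)) * ‖F' xdag (x - xdag)‖ * ‖x - xdag‖ ^ κ := by rw [hBfin]
end
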